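/- arXiv:2503.19141 — 7 statements merged into one kernel-verified Lean document; each statement's English description precedes it below -/
import Mathlib

section
/- For every integer j with 0 ≤ j ≤ N−1, the trace of ξ^j is given by: Tr(ξ^j) = (ℓ−1)ℓ^{m−1} (as an element of F_p) if j = 0; Tr(ξ^j) = −(ℓ−1)ℓ^{m−1} if j = ℓ^m; Tr(ξ^j) = −ℓ^{m−1} if j ∈ J_1^{(3)} ∪ J_3^{(3)}; Tr(ξ^j) = ℓ^{m−1} if j ∈ J_1^{(2)} ∪ J_3^{(2)}; and Tr(ξ^j) = 0 in all other cases. -/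
open Finset

lemma geom_sum_ite {F : Type*} [Field F] [DecidableEq F] (η : F) (M : ℕ) (h : η ^ M = 1) :
    ∑ b ∈ Finset.range M, η ^ b = if η = 1 then (M : F) else 0 := by
  split_ifs with h1
  · subst h1; simp
  · rw [geom_sum_eq h1, h]; simp

lemma trace_formula (p : ℕ) [Fact p.Prime] (F : Type*) [Field F] [Fintype F]
    [DecidableEq F] [Algebra (ZMod p) F] (e : ℕ) (he : 0 < e) (hF : Fintype.card F = p ^ e) (x : F) :
    algebraMap (ZMod p) F (Algebra.trace (ZMod p) F x) = ∑ i ∈ Finset.range e, x ^ p ^ i := by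
  have hp : p.Prime := Fact.out
  haveI : CharP F p := charP_of_injective_algebraMap' (ZMod p) p
  have hrank : Module.finrank (ZMod p) F = e := by
    have := Module.card_eq_pow_finrank (K := ZMod p) (V := F)
    rw [ZMod.card, hF] at this
    exact (Nat.pow_right_injective hp.two_le this.symm)
  -- Frobenius as an AlgEquiv
  let frob : F ≃ₐ[ZMod p] F :=
    AlgEquiv.ofRingEquiv (f := frobeniusEquiv F p) (by
      intro z
      simp only [frobeniusEquiv_apply, frobenius_def]
      rw [← map_pow, ZMod.pow_card])
  have hfrob_apply : ∀ (i : ℕ) (y : F), (frob ^ i) y = y ^ p ^ i := by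
    intro i
    induction i with
    | zero => intro y; simp
    | succ n ih =>
      intro y
      rw [pow_succ, AlgEquiv.mul_apply]
      have hy : frob y = y ^ p := rfl
      rw [hy, ih, ← pow_mul, ← pow_succ']
  -- the automorphism group
  have hcard : Fintype.card (F ≃ₐ[ZMod p] F) = e := by
    rw [← Nat.card_eq_fintype_card, IsGalois.card_aut_eq_finrank, hrank]
  -- injectivity of powers of frobenius below e
  obtain ⟨ζ, hζ⟩ := IsCyclic.exists_generator (α := Fˣ)
  have hζord : orderOf ζ = p ^ e - 1 := by
    rw [orderOf_eq_card_of_forall_mem_zpowers hζ, Nat.card_eq_fintype_card, Fintype.card_units, hF]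
  have hmono : ∀ i j : ℕ, i ≤ j → j < e → frob ^ i = frob ^ j → i = j := by
    intro i j hij hje hfe
    by_contra hne
    have hij' : i < j := lt_of_le_of_ne hij hne
    have h1 : (ζ : F) ^ p ^ i = (ζ : F) ^ p ^ j := by
      have := congrArg (fun σ : F ≃ₐ[ZMod p] F => σ (ζ : F)) hfe
      simpa [hfrob_apply] using this
    have h2 : ζ ^ p ^ i = ζ ^ p ^ j := Units.ext (by push_cast [h1]; rfl)
    have hle : p ^ i ≤ p ^ j := Nat.pow_le_pow_right hp.pos hij
    have h3 : ζ ^ (p ^ j - p ^ i) = 1 := by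
      have h5 : ζ ^ p ^ i * ζ ^ (p ^ j - p ^ i) = ζ ^ p ^ i * 1 := by
        rw [← pow_add, Nat.add_sub_cancel' hle, mul_one, h2]
      exact mul_left_cancel h5
    have h4 : orderOf ζ ∣ p ^ j - p ^ i := orderOf_dvd_of_pow_eq_one h3
    rw [hζord] at h4
    have hpos : 0 < p ^ j - p ^ i := by
      have : p ^ i < p ^ j := Nat.pow_lt_pow_right hp.one_lt hij'
      omega
    have hlt : p ^ j - p ^ i < p ^ e - 1 := by
      have h5 : p ^ j < p ^ e := Nat.pow_lt_pow_right hp.one_lt hje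
      have h6 : 1 ≤ p ^ i := Nat.one_le_pow _ _ hp.pos
      omega
    exact absurd (Nat.le_of_dvd hpos h4) (not_le.mpr hlt)
  have hbij : Function.Bijective (fun i : Fin e => frob ^ (i : ℕ)) := by
    rw [Fintype.bijective_iff_injective_and_card]
    constructor
    · intro i j hijf
      rcases le_total (i : ℕ) (j : ℕ) with h | h
      · exact Fin.ext (hmono _ _ h j.isLt hijf)
      · exact (Fin.ext (hmono _ _ h i.isLt hijf.symm)).symm
    · simp [hcard]
  rw [trace_eq_sum_automorphisms]
  rw [← Fintype.sum_bijective _ hbij _ (fun σ => σ x) (fun i => rfl)]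
  rw [← Fin.sum_univ_eq_sum_range]
  exact Fintype.sum_congr _ _ (fun i => hfrob_apply i x)

lemma sum_units_eq (N : ℕ) [NeZero N] {F : Type*} [AddCommMonoid F] (f : ℕ → F) :
    ∑ v : (ZMod N)ˣ, f ((v : ZMod N).val)
      = ∑ a ∈ (Finset.range N).filter (fun a => Nat.Coprime a N), f a := by
  apply Finset.sum_bij (i := fun (v : (ZMod N)ˣ) _ => ((v : ZMod N).val))
  · intro v _
    simp only [Finset.mem_filter, Finset.mem_range]
    exact ⟨ZMod.val_lt _, ZMod.val_coe_unit_coprime v⟩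
  · intro v _ w _ h
    exact Units.ext (ZMod.val_injective N h)
  · intro a ha
    simp only [Finset.mem_filter, Finset.mem_range] at ha
    refine ⟨ZMod.unitOfCoprime a ha.2, Finset.mem_univ _, ?_⟩
    rw [ZMod.coe_unitOfCoprime, ZMod.val_natCast, Nat.mod_eq_of_lt ha.1]
  · intro v _
    rfl

lemma sum_filter_dvd {F : Type*} [Field F] [DecidableEq F] (N d : ℕ) (hd : d ∣ N) (hN : 0 < N)
    (x : F) (hx : x ^ N = 1) :
    ∑ a ∈ (Finset.range N).filter (fun a => d ∣ a), x ^ a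
      = if x ^ d = 1 then ((N / d : ℕ) : F) else 0 := by
  have hd0 : 0 < d := Nat.pos_of_dvd_of_pos hd hN
  have key : ∑ a ∈ (Finset.range N).filter (fun a => d ∣ a), x ^ a
      = ∑ b ∈ Finset.range (N / d), (x ^ d) ^ b := by
    apply Finset.sum_bij' (i := fun a _ => a / d) (j := fun b _ => d * b)
    · intro a ha
      simp only [Finset.mem_filter, Finset.mem_range] at ha ⊢
      exact Nat.div_lt_div_of_lt_of_dvd hd ha.1
    · intro b hb
      simp only [Finset.mem_filter, Finset.mem_range] at hb ⊢
      exact ⟨(Nat.lt_div_iff_mul_lt' hd _).mp hb |>.trans_le (le_of_eq (by ring_nf)) |>.trans_le le_rfl, Dvd.intro b rfl⟩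
    · intro a ha
      simp only [Finset.mem_filter] at ha
      exact Nat.mul_div_cancel' ha.2
    · intro b _
      exact Nat.mul_div_cancel_left b hd0
    · intro a ha
      simp only [Finset.mem_filter] at ha
      rw [← pow_mul, Nat.mul_div_cancel' ha.2]
  rw [key]
  apply geom_sum_ite
  rw [← pow_mul, Nat.mul_div_cancel' hd, hx]

lemma incl_excl {F : Type*} [Field F] (s : Finset ℕ) (P Q : ℕ → Prop)
    [DecidablePred P] [DecidablePred Q] (f : ℕ → F) :
    ∑ a ∈ s.filter (fun a => ¬ P a ∧ ¬ Q a), f a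
      = ∑ a ∈ s, f a - ∑ a ∈ s.filter P, f a - ∑ a ∈ s.filter Q, f a
        + ∑ a ∈ s.filter (fun a => P a ∧ Q a), f a := by
  classical
  have h1 := Finset.sum_filter_add_sum_filter_not s P f
  have h2 := Finset.sum_filter_add_sum_filter_not (s.filter fun a => ¬ P a) Q f
  have h4 := Finset.sum_filter_add_sum_filter_not (s.filter Q) P f
  rw [Finset.filter_filter, Finset.filter_filter] at h2 h4
  have e1 : s.filter (fun a => Q a ∧ P a) = s.filter (fun a => P a ∧ Q a) := by
    apply Finset.filter_congr; intro a _; simp [and_comm]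
  have e2 : s.filter (fun a => Q a ∧ ¬ P a) = s.filter (fun a => ¬ P a ∧ Q a) := by
    apply Finset.filter_congr; intro a _; simp [and_comm]
  rw [e1, e2] at h4
  linear_combination h1 + h2 - h4

theorem stmt_2
    (p ℓ m : ℕ) [Fact (Nat.Prime p)] (hp2 : p ≠ 2)
    (hℓ : Nat.Prime ℓ) (hℓp : ℓ ≠ p) (hm : 0 < m)
    (N : ℕ) (hN : N = 2 * ℓ ^ m)
    (hprim : orderOf (p : ZMod N) = Nat.totient N)
    (e : ℕ) (he : e = Nat.totient N) (he' : e = (ℓ - 1) * ℓ ^ (m - 1))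
    (q : ℕ) (hq : q = p ^ e)
    (F : Type) [Field F] [Fintype F] [DecidableEq F] [Algebra (ZMod p) F]
    (hF : Fintype.card F = q)
    (g : Fˣ) (hg : ∀ x : Fˣ, ∃ k : ℕ, x = g ^ k)
    (ξ : F) (hξ : ξ = (g : F) ^ ((q - 1) / N))
    :
    ∀ j : ℕ, j ≤ N - 1 →
      (j = 0 → Algebra.trace (ZMod p) F (ξ ^ j) = (((ℓ - 1) * ℓ ^ (m - 1) : ℕ) : ZMod p)) ∧
      (j = ℓ ^ m → Algebra.trace (ZMod p) F (ξ ^ j) = -(((ℓ - 1) * ℓ ^ (m - 1) : ℕ) : ZMod p)) ∧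
      ((1 ≤ j ∧ j ≤ (ℓ - 1) * ℓ ^ (m - 1) ∧ 2 * ℓ ^ (m - 1) ∣ j) ∨ (∃ k, 1 ≤ k ∧ k ≤ ℓ - 1 ∧ ¬ 2 ∣ k ∧ j = ℓ ^ m + k * ℓ ^ (m - 1)) →
        Algebra.trace (ZMod p) F (ξ ^ j) = -((ℓ ^ (m - 1) : ℕ) : ZMod p)) ∧
      ((1 ≤ j ∧ j ≤ (ℓ - 1) * ℓ ^ (m - 1) ∧ ℓ ^ (m - 1) ∣ j ∧ ¬ 2 ∣ j) ∨ (∃ k, 1 ≤ k ∧ k ≤ ℓ - 1 ∧ 2 ∣ k ∧ j = ℓ ^ m + k * ℓ ^ (m - 1)) →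
        Algebra.trace (ZMod p) F (ξ ^ j) = ((ℓ ^ (m - 1) : ℕ) : ZMod p)) ∧
      (¬(j = 0 ∨ j = ℓ ^ m ∨ (1 ≤ j ∧ j ≤ (ℓ - 1) * ℓ ^ (m - 1) ∧ 2 * ℓ ^ (m - 1) ∣ j) ∨ (∃ k, 1 ≤ k ∧ k ≤ ℓ - 1 ∧ ¬ 2 ∣ k ∧ j = ℓ ^ m + k * ℓ ^ (m - 1)) ∨ (1 ≤ j ∧ j ≤ (ℓ - 1) * ℓ ^ (m - 1) ∧ ℓ ^ (m - 1) ∣ j ∧ ¬ 2 ∣ j) ∨ (∃ k, 1 ≤ k ∧ k ≤ ℓ - 1 ∧ 2 ∣ k ∧ j = ℓ ^ m + k * ℓ ^ (m - 1))) →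
        Algebra.trace (ZMod p) F (ξ ^ j) = 0) := by
  have hp : p.Prime := Fact.out
  -- basic positivity and parity facts
  have hℓ2 : ℓ ≠ 2 := by
    intro h2
    subst h2
    rw [hN, show (2 : ℕ) * 2 ^ m = 2 ^ (m + 1) by ring] at he
    rw [Nat.totient_prime_pow Nat.prime_two (by omega)] at he
    simp at he
    rw [he'] at he
    have : (2:ℕ) ^ (m - 1) < 2 ^ m := Nat.pow_lt_pow_right one_lt_two (by omega)
    omega
  have hℓodd : ¬ 2 ∣ ℓ := fun h => hℓ2 ((Nat.prime_dvd_prime_iff_eq Nat.prime_two hℓ).mp h).symm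
  have hℓ1 : 1 < ℓ := hℓ.one_lt
  have hLpos : 0 < ℓ ^ (m - 1) := Nat.pow_pos hℓ.pos
  have hLodd : ¬ 2 ∣ ℓ ^ (m - 1) := fun h => hℓodd (Nat.Prime.dvd_of_dvd_pow Nat.prime_two h)
  have hmm : ℓ ^ m = ℓ * ℓ ^ (m - 1) := by
    conv_lhs => rw [show m = 1 + (m - 1) by omega, pow_add, pow_one]
  have hN0 : 0 < N := by rw [hN]; positivity
  haveI : NeZero N := ⟨hN0.ne'⟩
  have he0 : 0 < e := by rw [he]; exact Nat.totient_pos.mpr hN0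
  have hq2 : 2 ≤ q := by
    rw [hq]
    calc 2 ≤ p := hp.two_le
    _ = p ^ 1 := (pow_one p).symm
    _ ≤ p ^ e := Nat.pow_le_pow_right hp.pos he0
  -- N divides q - 1
  have hNq : N ∣ q - 1 := by
    have h1 : (p : ZMod N) ^ e = 1 := by
      rw [he, ← hprim]; exact pow_orderOf_eq_one _
    have h2 : ((p ^ e : ℕ) : ZMod N) = ((1 : ℕ) : ZMod N) := by push_cast [h1]; ring
    have h3 : 1 ≡ p ^ e [MOD N] := (ZMod.natCast_eq_natCast_iff _ _ _).mp h2.symm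
    rw [hq]
    exact (Nat.modEq_iff_dvd' (Nat.one_le_pow _ _ hp.pos)).mp h3
  have hq1pos : 0 < q - 1 := by omega
  -- order of ξ is N
  have hgord : orderOf (g : F) = q - 1 := by
    rw [orderOf_units, orderOf_eq_card_of_forall_mem_zpowers, Nat.card_eq_fintype_card,
      Fintype.card_units, hF]
    intro x
    obtain ⟨k, hk⟩ := hg x
    exact ⟨(k : ℤ), by show g ^ (k:ℤ) = x; rw [zpow_natCast]; exact hk.symm⟩
  have hξord : orderOf ξ = N := by
    have hdn : (q - 1) / N ≠ 0 := (Nat.div_pos (Nat.le_of_dvd hq1pos hNq) hN0).ne'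
    rw [hξ, orderOf_pow' _ hdn, hgord, Nat.gcd_eq_right (Nat.div_dvd_of_dvd hNq),
      Nat.div_div_self hNq (by omega)]
  have hξN : ξ ^ N = 1 := by rw [← hξord]; exact pow_orderOf_eq_one ξ
  -- the key trace computation
  have key : ∀ j : ℕ, algebraMap (ZMod p) F (Algebra.trace (ZMod p) F (ξ ^ j))
      = (if N ∣ j then ((N : ℕ) : F) else 0)
        - (if ℓ ^ m ∣ j then ((ℓ ^ m : ℕ) : F) else 0)
        - (if 2 * ℓ ^ (m - 1) ∣ j then ((2 * ℓ ^ (m - 1) : ℕ) : F) else 0)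
        + (if ℓ ^ (m - 1) ∣ j then ((ℓ ^ (m - 1) : ℕ) : F) else 0) := by
    intro j
    classical
    set x : F := ξ ^ j with hx
    have hxN : x ^ N = 1 := by rw [hx, ← pow_mul, mul_comm, pow_mul, hξN, one_pow]
    have hco : Nat.Coprime p N := by
      rw [hN]
      refine (Nat.Prime.coprime_iff_not_dvd hp).mpr ?_
      intro hdvd
      rcases (Nat.Prime.dvd_mul hp).mp hdvd with h | h
      · exact hp2 ((Nat.prime_dvd_prime_iff_eq hp Nat.prime_two).mp h)
      · exact hℓp ((Nat.prime_dvd_prime_iff_eq hp hℓ).mp (hp.dvd_of_dvd_pow h)).symm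
    set u : (ZMod N)ˣ := ZMod.unitOfCoprime p hco with hu
    have hucoe : (u : ZMod N) = (p : ZMod N) := ZMod.coe_unitOfCoprime p hco
    have huord : orderOf u = e := by
      rw [← orderOf_units, hucoe, hprim, he]
    have hucard : Fintype.card (ZMod N)ˣ = e := by
      rw [ZMod.card_units_eq_totient, he]
    have hubij : Function.Bijective (fun i : Fin e => u ^ (i : ℕ)) := by
      rw [Fintype.bijective_iff_injective_and_card]
      refine ⟨fun i j hij => Fin.ext (pow_injOn_Iio_orderOf ?_ ?_ hij), by simp [hucard]⟩
      · simpa [huord] using i.isLt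
      · simpa [huord] using j.isLt
    have hcompat : ∀ i : Fin e, x ^ p ^ (i : ℕ) = x ^ ((u ^ (i : ℕ) : ZMod N)).val := by
      intro i
      rw [pow_eq_pow_mod (p ^ (i : ℕ)) hxN, pow_eq_pow_mod ((u ^ (i : ℕ) : ZMod N)).val hxN]
      congr 1
      have h1 : ((u ^ (i : ℕ) : ZMod N)) = ((p ^ (i : ℕ) : ℕ) : ZMod N) := by
        rw [show ((u ^ (i : ℕ) : ZMod N)) = ((u : ZMod N)) ^ (i : ℕ) from rfl, hucoe]; push_cast; ring
      rw [h1, ZMod.val_natCast, Nat.mod_mod_of_dvd _ dvd_rfl]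
    have step1 : algebraMap (ZMod p) F (Algebra.trace (ZMod p) F x)
        = ∑ a ∈ (Finset.range N).filter (fun a => Nat.Coprime a N), x ^ a := by
      calc algebraMap (ZMod p) F (Algebra.trace (ZMod p) F x)
          = ∑ i ∈ Finset.range e, x ^ p ^ i := trace_formula p F e he0 (by rw [hF, hq]) x
        _ = ∑ i : Fin e, x ^ p ^ (i : ℕ) := (Fin.sum_univ_eq_sum_range _ e).symm
        _ = ∑ v : (ZMod N)ˣ, x ^ ((v : ZMod N)).val :=
            Fintype.sum_bijective _ hubij _ _ hcompat
        _ = _ := sum_units_eq N (fun a => x ^ a)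
    have hcopr_iff : ∀ a, Nat.Coprime a N ↔ (¬ 2 ∣ a ∧ ¬ ℓ ∣ a) := by
      intro a
      rw [hN, Nat.coprime_mul_iff_right,
        show Nat.Coprime a 2 ↔ ¬ 2 ∣ a from
          Nat.coprime_comm.trans Nat.prime_two.coprime_iff_not_dvd,
        show Nat.Coprime a (ℓ ^ m) ↔ ¬ ℓ ∣ a from
          Nat.coprime_comm.trans ((Nat.coprime_pow_left_iff hm ℓ a).trans hℓ.coprime_iff_not_dvd)]
    have step2 : (Finset.range N).filter (fun a => Nat.Coprime a N)
        = (Finset.range N).filter (fun a => ¬ 2 ∣ a ∧ ¬ ℓ ∣ a) := by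
      apply Finset.filter_congr
      intro a _
      simp [hcopr_iff a]
    have step3 : (Finset.range N).filter (fun a => (2 ∣ a) ∧ (ℓ ∣ a))
        = (Finset.range N).filter (fun a => 2 * ℓ ∣ a) := by
      apply Finset.filter_congr
      intro a _
      have h2ℓ : Nat.Coprime 2 ℓ := (Nat.prime_two.coprime_iff_not_dvd).mpr hℓodd
      constructor
      · rintro ⟨h1, h2⟩
        simpa using Nat.Coprime.mul_dvd_of_dvd_of_dvd h2ℓ h1 h2
      · intro h
        exact ⟨(dvd_mul_right 2 ℓ).trans h, (dvd_mul_left ℓ 2).trans h⟩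
    have hdiv_iff : ∀ d : ℕ, 0 < d → d ∣ N → (x ^ d = 1 ↔ (N / d) ∣ j) := by
      intro d hd0 hd
      rw [hx, ← pow_mul, ← orderOf_dvd_iff_pow_eq_one, hξord]
      obtain ⟨c, hc⟩ := hd
      rw [hc, Nat.mul_div_cancel_left c hd0, mul_comm j d]
      exact Nat.mul_dvd_mul_iff_left hd0
    -- the four subsums
    have hs1 : ∑ a ∈ Finset.range N, x ^ a = if N ∣ j then ((N : ℕ) : F) else 0 := by
      rw [geom_sum_ite x N hxN]
      congr 1
      · rw [show (x = 1) = (x ^ 1 = 1) by rw [pow_one],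
          hdiv_iff 1 one_pos (one_dvd N), Nat.div_one]
    have hs2 : ∑ a ∈ (Finset.range N).filter (fun a => 2 ∣ a), x ^ a
        = if ℓ ^ m ∣ j then ((ℓ ^ m : ℕ) : F) else 0 := by
      have hd : (2 : ℕ) ∣ N := ⟨ℓ ^ m, hN⟩
      rw [sum_filter_dvd N 2 hd hN0 x hxN]
      have hN2 : N / 2 = ℓ ^ m := by rw [hN, Nat.mul_div_cancel_left _ two_pos]
      simp only [show (x ^ 2 = 1) ↔ ((N / 2) ∣ j) from hdiv_iff 2 two_pos hd, hN2]
    have hs3 : ∑ a ∈ (Finset.range N).filter (fun a => ℓ ∣ a), x ^ a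
        = if 2 * ℓ ^ (m - 1) ∣ j then ((2 * ℓ ^ (m - 1) : ℕ) : F) else 0 := by
      have hd : ℓ ∣ N := by rw [hN, hmm]; exact ⟨2 * ℓ ^ (m-1), by ring⟩
      rw [sum_filter_dvd N ℓ hd hN0 x hxN]
      have hNℓ : N / ℓ = 2 * ℓ ^ (m - 1) := by
        rw [hN, hmm, show 2 * (ℓ * ℓ ^ (m-1)) = ℓ * (2 * ℓ ^ (m-1)) by ring,
          Nat.mul_div_cancel_left _ hℓ.pos]
      simp only [show (x ^ ℓ = 1) ↔ ((N / ℓ) ∣ j) from hdiv_iff ℓ hℓ.pos hd, hNℓ]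
    have hs4 : ∑ a ∈ (Finset.range N).filter (fun a => 2 * ℓ ∣ a), x ^ a
        = if ℓ ^ (m - 1) ∣ j then ((ℓ ^ (m - 1) : ℕ) : F) else 0 := by
      have hd : 2 * ℓ ∣ N := by rw [hN, hmm]; exact ⟨ℓ ^ (m-1), by ring⟩
      rw [sum_filter_dvd N (2 * ℓ) hd hN0 x hxN]
      have hN2ℓ : N / (2 * ℓ) = ℓ ^ (m - 1) := by
        rw [hN, hmm, show 2 * (ℓ * ℓ ^ (m-1)) = (2 * ℓ) * ℓ ^ (m-1) by ring,
          Nat.mul_div_cancel_left _ (by positivity)]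
      simp only [show (x ^ (2 * ℓ) = 1) ↔ ((N / (2 * ℓ)) ∣ j) from
        hdiv_iff (2 * ℓ) (by positivity) hd, hN2ℓ]
    rw [step1, step2, incl_excl (Finset.range N) (fun a => 2 ∣ a) (fun a => ℓ ∣ a)
      (fun a => x ^ a), step3, hs1, hs2, hs3, hs4]
  -- final case analysis
  have hinj : Function.Injective (algebraMap (ZMod p) F) := (algebraMap (ZMod p) F).injective
  have hℓm0 : 0 < ℓ ^ m := by positivity
  have hNL : N = ℓ ^ (m-1) * (2 * ℓ) := by rw [hN, hmm]; ring
  have hLdvdN : ℓ ^ (m-1) ∣ N := ⟨2 * ℓ, hNL⟩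
  have hLdvdℓm : ℓ ^ (m-1) ∣ ℓ ^ m := ⟨ℓ, by rw [hmm]; ring⟩
  have hLdvd2L : ℓ ^ (m-1) ∣ 2 * ℓ ^ (m-1) := ⟨2, by ring⟩
  have hmul_lt : (ℓ - 1) * ℓ ^ (m-1) < ℓ ^ m := by
    rw [hmm]
    exact mul_lt_mul_of_pos_right (by omega) hLpos
  intro j hj
  have hjN : j < N := by omega
  refine ⟨?_, ?_, ?_, ?_, ?_⟩
  · -- j = 0
    intro h0; subst h0
    apply hinj
    rw [key 0, map_natCast]
    simp only [dvd_zero, if_true]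
    push_cast [hN, hmm, Nat.cast_sub hℓ1.le]
    ring
  · -- j = ℓ ^ m
    intro h0; subst h0
    apply hinj
    rw [key, map_neg, map_natCast]
    have c1 : ¬ N ∣ ℓ ^ m := fun hd => by
      have := Nat.le_of_dvd hℓm0 hd; omega
    have c3 : ¬ 2 * ℓ ^ (m-1) ∣ ℓ ^ m := by
      rw [hmm]
      intro hd
      have h2 : (2:ℕ) ∣ ℓ := (Nat.mul_dvd_mul_iff_right hLpos).mp hd
      exact hℓodd h2
    simp only [if_pos dvd_rfl, if_pos hLdvdℓm, if_neg c1, if_neg c3]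
    push_cast [hmm, Nat.cast_sub hℓ1.le]
    ring
  · -- case -L
    intro hcase
    have hfacts : (2 * ℓ ^ (m-1) ∣ j) ∧ ¬ (ℓ ^ m ∣ j) ∧ 1 ≤ j := by
      rcases hcase with ⟨h1, h2, h3⟩ | ⟨k, hk1, hk2, hk3, hk4⟩
      · refine ⟨h3, ?_, h1⟩
        intro hd
        have h5 := Nat.le_of_dvd (by omega) hd
        omega
      · subst hk4
        have hrw : ℓ ^ m + k * ℓ ^ (m-1) = (ℓ + k) * ℓ ^ (m-1) := by rw [hmm]; ring
        refine ⟨?_, ?_, by omega⟩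
        · rw [hrw]
          have h2k : 2 ∣ ℓ + k := by omega
          obtain ⟨s, hs⟩ := h2k
          exact ⟨s, by rw [hs]; ring⟩
        · intro hd
          rw [hrw, hmm] at hd
          have h6 : ℓ ∣ ℓ + k := (Nat.mul_dvd_mul_iff_right hLpos).mp hd
          have h7 : ℓ ∣ k := (Nat.dvd_add_right dvd_rfl).mp h6
          have := Nat.le_of_dvd (by omega) h7
          omega
    obtain ⟨hA, hB, hC⟩ := hfacts
    apply hinj
    rw [key j, map_neg, map_natCast]
    have c1 : ¬ N ∣ j := fun hd => by have := Nat.le_of_dvd (by omega) hd; omega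
    have c4 : ℓ ^ (m-1) ∣ j := dvd_trans hLdvd2L hA
    simp only [if_pos hA, if_pos c4, if_neg c1, if_neg hB]
    push_cast
    ring
  · -- case +L
    intro hcase
    have hfacts : (ℓ ^ (m-1) ∣ j) ∧ ¬ (2 * ℓ ^ (m-1) ∣ j) ∧ ¬ (ℓ ^ m ∣ j) ∧ 1 ≤ j := by
      rcases hcase with ⟨h1, h2, h3, h4⟩ | ⟨k, hk1, hk2, hk3, hk4⟩
      · refine ⟨h3, ?_, ?_, h1⟩
        · intro hd
          exact h4 (dvd_trans ⟨ℓ ^ (m-1), rfl⟩ hd)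
        · intro hd
          have h5 := Nat.le_of_dvd (by omega) hd
          omega
      · subst hk4
        have hrw : ℓ ^ m + k * ℓ ^ (m-1) = (ℓ + k) * ℓ ^ (m-1) := by rw [hmm]; ring
        refine ⟨?_, ?_, ?_, by omega⟩
        · rw [hrw]; exact ⟨ℓ + k, by ring⟩
        · intro hd
          rw [hrw] at hd
          have h2 : 2 ∣ ℓ + k := (Nat.mul_dvd_mul_iff_right hLpos).mp hd
          omega
        · intro hd
          rw [hrw, hmm] at hd
          have h6 : ℓ ∣ ℓ + k := (Nat.mul_dvd_mul_iff_right hLpos).mp hd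
          have h7 : ℓ ∣ k := (Nat.dvd_add_right dvd_rfl).mp h6
          have := Nat.le_of_dvd (by omega) h7
          omega
    obtain ⟨hA, hB, hC, hD⟩ := hfacts
    apply hinj
    rw [key j, map_natCast]
    have c1 : ¬ N ∣ j := fun hd => by have := Nat.le_of_dvd (by omega) hd; omega
    simp only [if_pos hA, if_neg c1, if_neg hB, if_neg hC]
    push_cast
    ring
  · -- zero case
    intro hnot
    have hLj : ¬ ℓ ^ (m-1) ∣ j := by
      rintro ⟨t, ht⟩
      apply hnot
      have htlt : t < 2 * ℓ := by
        by_contra hge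
        push_neg at hge
        have h1 : ℓ ^ (m-1) * (2 * ℓ) ≤ ℓ ^ (m-1) * t := Nat.mul_le_mul_left _ hge
        rw [← hNL] at h1
        omega
      rcases lt_trichotomy t ℓ with hlt | heq | hgt
      · by_cases ht0 : t = 0
        · left; subst ht0; simpa using ht
        · by_cases h2t : 2 ∣ t
          · right; right; left
            obtain ⟨s, hs⟩ := h2t
            refine ⟨?_, ?_, ⟨s, by rw [ht, hs]; ring⟩⟩
            · have : 0 < ℓ ^ (m-1) * t := Nat.mul_pos hLpos (by omega)
              omega
            · calc j = ℓ ^ (m-1) * t := ht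
                _ ≤ ℓ ^ (m-1) * (ℓ - 1) := Nat.mul_le_mul_left _ (by omega)
                _ = (ℓ - 1) * ℓ ^ (m-1) := mul_comm _ _
          · right; right; right; right; left
            refine ⟨?_, ?_, ⟨t, ht⟩, ?_⟩
            · have : 0 < ℓ ^ (m-1) * t := Nat.mul_pos hLpos (by omega)
              omega
            · calc j = ℓ ^ (m-1) * t := ht
                _ ≤ ℓ ^ (m-1) * (ℓ - 1) := Nat.mul_le_mul_left _ (by omega)
                _ = (ℓ - 1) * ℓ ^ (m-1) := mul_comm _ _
            · intro h2j
              rw [ht] at h2j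
              rcases (Nat.Prime.dvd_mul Nat.prime_two).mp h2j with h | h
              · exact hLodd h
              · exact h2t h
      · right; left
        rw [ht, heq, hmm]; ring
      · obtain ⟨k, hk⟩ : ∃ k, t = ℓ + k := ⟨t - ℓ, by omega⟩
        have hk1 : 1 ≤ k := by omega
        have hk2 : k ≤ ℓ - 1 := by omega
        have hjk : j = ℓ ^ m + k * ℓ ^ (m-1) := by rw [ht, hk, hmm]; ring
        by_cases h2k : 2 ∣ k
        · right; right; right; right; right
          exact ⟨k, hk1, hk2, h2k, hjk⟩
        · right; right; right; left
          exact ⟨k, hk1, hk2, h2k, hjk⟩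
    apply hinj
    rw [key j, map_zero]
    have c4 : ¬ ℓ ^ (m-1) ∣ j := hLj
    have c3 : ¬ 2 * ℓ ^ (m-1) ∣ j := fun hd => hLj (dvd_trans hLdvd2L hd)
    have c2 : ¬ ℓ ^ m ∣ j := fun hd => hLj (dvd_trans hLdvdℓm hd)
    have c1 : ¬ N ∣ j := fun hd => hLj (dvd_trans hLdvdN hd)
    simp only [if_neg c1, if_neg c2, if_neg c3, if_neg c4]
    ring
end

section
/- For every a ∈ F_p (embedded in F_q), S(a) = ζ_p^{ℓ^{m−1}(ℓ−1)a} + ζ_p^{−ℓ^{m−1}(ℓ−1)a} + (ℓ−1)·(ζ_p^{ℓ^{m−1}a} + ζ_p^{−ℓ^{m−1}a}) + 2ℓ^m − 2ℓ, where exponents like ℓ^{m−1}(ℓ−1)a are computed in F_p and ζ_p is raised to an integer representative. -/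
open Finset
open scoped Classical

lemma trace_eq_sum_frob {p e : ℕ} [Fact p.Prime] (he : 0 < e)
    {F : Type} [Field F] [Fintype F] [Algebra (ZMod p) F]
    (hF : Fintype.card F = p ^ e)
    (g : Fˣ) (hg : ∀ x : Fˣ, ∃ k : ℕ, x = g ^ k)
    (x : F) :
    algebraMap (ZMod p) F (Algebra.trace (ZMod p) F x) = ∑ j ∈ Finset.range e, x ^ p ^ j := by
  classical
  have hp : p.Prime := Fact.out
  have hp1 : 1 < p := hp.one_lt
  haveI : CharP F p := charP_of_injective_algebraMap (algebraMap (ZMod p) F).injective p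
  let φ : F →ₐ[ZMod p] F :=
    { toRingHom := frobenius F p
      commutes' := fun r => by
        show frobenius F p (algebraMap (ZMod p) F r) = algebraMap (ZMod p) F r
        rw [frobenius_def, ← map_pow, ZMod.pow_card] }
  have hφinj : Function.Injective φ := φ.toRingHom.injective
  let σ : F ≃ₐ[ZMod p] F := AlgEquiv.ofBijective φ
    ((Finite.injective_iff_bijective).mp hφinj)
  have hσ : ∀ (j : ℕ) (y : F), (σ ^ j) y = y ^ p ^ j := by
    intro j
    induction j with
    | zero => intro y; simp
    | succ n ih =>
      intro y
      rw [pow_succ, AlgEquiv.mul_apply, ih (σ y)]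
      show (y ^ p) ^ p ^ n = _
      rw [← pow_mul, ← pow_succ']
  have hσe : σ ^ e = 1 := by
    ext y
    rw [hσ e y, ← hF]
    exact FiniteField.pow_card y
  have hgord : orderOf g = p ^ e - 1 := by
    have h0 : ∀ u : Fˣ, u ∈ Subgroup.zpowers g := by
      intro u
      obtain ⟨k, hk⟩ := hg u
      exact ⟨(k : ℤ), by simp [hk]⟩
    rw [orderOf_eq_card_of_forall_mem_zpowers h0, Nat.card_eq_fintype_card,
      Fintype.card_units, hF]
  have hord : orderOf σ = e := by
    have hdvd : orderOf σ ∣ e := orderOf_dvd_of_pow_eq_one hσe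
    set d := orderOf σ with hd
    have hd0 : 0 < d := orderOf_pos σ
    have hgu : g ^ p ^ d = g ^ 1 := by
      have h1 : (σ ^ d) (g : F) = (g : F) := by rw [pow_orderOf_eq_one σ]; rfl
      rw [hσ d] at h1
      ext
      simpa using h1
    have hmod : p ^ d ≡ 1 [MOD orderOf g] := pow_eq_pow_iff_modEq.mp hgu
    have hdvd2 : (p ^ e - 1) ∣ (p ^ d - 1) := by
      rw [← hgord]
      exact (Nat.modEq_iff_dvd' (Nat.one_le_pow _ _ (by omega))).mp hmod.symm
    have hle : e ≤ d := by
      by_contra hlt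
      push_neg at hlt
      have hpde : p ^ d < p ^ e := Nat.pow_lt_pow_right hp1 hlt
      have h1 : p ^ d - 1 < p ^ e - 1 :=
        Nat.sub_lt_sub_right (Nat.one_le_pow _ _ (by omega)) hpde
      have h2 : 0 < p ^ d - 1 := by
        have h3 : 1 < p ^ d := Nat.one_lt_pow (by omega) hp1
        exact Nat.sub_pos_of_lt h3
      exact absurd (Nat.le_of_dvd h2 hdvd2) (not_le.mpr h1)
    exact le_antisymm (Nat.le_of_dvd he hdvd) hle
  have hcard : Fintype.card (F ≃ₐ[ZMod p] F) = e := by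
    rw [← Nat.card_eq_fintype_card, IsGalois.card_aut_eq_finrank]
    have h1 : Fintype.card F = Fintype.card (ZMod p) ^ Module.finrank (ZMod p) F :=
      Module.card_eq_pow_finrank
    rw [ZMod.card, hF] at h1
    exact (Nat.pow_right_injective hp.two_le h1).symm
  have hinj : ∀ i ∈ Finset.range e, ∀ j ∈ Finset.range e, σ ^ i = σ ^ j → i = j := by
    intro i hi j hj hij
    exact pow_injOn_Iio_orderOf (by simpa [hord] using Finset.mem_range.mp hi)
      (by simpa [hord] using Finset.mem_range.mp hj) hij
  have himg : (Finset.range e).image (fun j => σ ^ j) = Finset.univ := by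
    apply Finset.eq_univ_of_card
    rw [Finset.card_image_of_injOn (fun i hi j hj => hinj i hi j hj), Finset.card_range, hcard]
  rw [trace_eq_sum_automorphisms, ← himg, Finset.sum_image hinj]
  exact Finset.sum_congr rfl fun j _ => hσ j x

lemma sum_frob_pow_eq_sum_coprime {F : Type} [CommRing F] {p N e : ℕ} (hN : 1 < N)
    (hprim : orderOf (p : ZMod N) = Nat.totient N) (he : e = Nat.totient N)
    (hcop : Nat.Coprime p N)
    (η : F) (hη : η ^ N = 1) :
    ∑ j ∈ Finset.range e, η ^ p ^ j
      = ∑ t ∈ (Finset.range N).filter (fun t => Nat.Coprime t N), η ^ t := by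
  classical
  haveI : NeZero N := ⟨by omega⟩
  have hηd : orderOf η ∣ N := orderOf_dvd_of_pow_eq_one hη
  have key : ∀ a b : ℕ, a ≡ b [MOD N] → η ^ a = η ^ b := by
    intro a b hab
    have h2 : a ≡ b [MOD orderOf η] := hab.of_dvd hηd
    rw [← pow_mod_orderOf η a, ← pow_mod_orderOf η b, h2]
  set u : (ZMod N)ˣ := ZMod.unitOfCoprime p hcop with hu
  have huord : orderOf u = e := by
    rw [← orderOf_units, ZMod.coe_unitOfCoprime, hprim, he]
  set ψ : ℕ → ℕ := fun j => ((u ^ j : (ZMod N)ˣ) : ZMod N).val with hψ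
  have hinj : ∀ i ∈ Finset.range e, ∀ j ∈ Finset.range e, ψ i = ψ j → i = j := by
    intro i hi j hj hij
    have h1 : ((u ^ i : (ZMod N)ˣ) : ZMod N) = ((u ^ j : (ZMod N)ˣ) : ZMod N) :=
      ZMod.val_injective N hij
    have h2 : u ^ i = u ^ j := Units.ext h1
    exact pow_injOn_Iio_orderOf (by simpa [huord] using Finset.mem_range.mp hi)
      (by simpa [huord] using Finset.mem_range.mp hj) h2
  have himg : (Finset.range e).image ψ
      = (Finset.range N).filter (fun t => Nat.Coprime t N) := by
    apply Finset.eq_of_subset_of_card_le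
    · intro t ht
      obtain ⟨j, _, rfl⟩ := Finset.mem_image.mp ht
      refine Finset.mem_filter.mpr ⟨Finset.mem_range.mpr (ZMod.val_lt _), ?_⟩
      exact ZMod.val_coe_unit_coprime (u ^ j)
    · rw [Finset.card_image_of_injOn (fun i hi j hj => hinj i hi j hj), Finset.card_range]
      have h0 : ((Finset.range N).filter (fun t => Nat.Coprime t N)).card
          = ((Finset.range N).filter N.Coprime).card := by
        congr 1
        apply Finset.filter_congr
        intro t _
        simp [Nat.coprime_comm]
      rw [h0, ← Nat.totient, he]
  rw [← himg, Finset.sum_image hinj]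
  refine Finset.sum_congr rfl fun j _ => (key _ _ ?_).symm
  have h1 : ((u ^ j : (ZMod N)ˣ) : ZMod N) = ((p ^ j : ℕ) : ZMod N) := by
    push_cast [ZMod.coe_unitOfCoprime]
    rfl
  show ψ j ≡ p ^ j [MOD N]
  rw [hψ]
  simp only [h1, ZMod.val_natCast]
  exact Nat.mod_modEq _ N

lemma geom_sum_of_root {F : Type} [Field F] (y : F) (M : ℕ) (hy : y ^ M = 1) :
    ∑ s ∈ Finset.range M, y ^ s = if y = 1 then ((M : ℕ) : F) else 0 := by
  by_cases h1 : y = 1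
  · simp [h1]
  · rw [if_neg h1]
    have h2 := geom_sum_mul y M
    rw [hy, sub_self] at h2
    exact (mul_eq_zero.mp h2).resolve_right (sub_ne_zero.mpr h1)

lemma filter_dvd_range_eq_image (N c : ℕ) (hc0 : 0 < c) (hc : c ∣ N) :
    (Finset.range N).filter (fun t => c ∣ t)
      = (Finset.range (N / c)).image (fun s => c * s) := by
  ext t
  simp only [Finset.mem_filter, Finset.mem_range, Finset.mem_image]
  constructor
  · rintro ⟨htN, s, rfl⟩
    exact ⟨s, (Nat.lt_div_iff_mul_lt' hc s).mpr htN, rfl⟩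
  · rintro ⟨s, hs, rfl⟩
    refine ⟨?_, ⟨s, rfl⟩⟩
    calc c * s < c * (N / c) := (Nat.mul_lt_mul_left hc0).mpr hs
      _ = N := Nat.mul_div_cancel' hc

lemma sum_dvd_filter {F : Type} [Field F] (η : F) (N c : ℕ) (hc0 : 0 < c) (hc : c ∣ N)
    (hη : η ^ N = 1) :
    ∑ t ∈ (Finset.range N).filter (fun t => c ∣ t), η ^ t
      = if η ^ c = 1 then ((N / c : ℕ) : F) else 0 := by
  rw [filter_dvd_range_eq_image N c hc0 hc,
    Finset.sum_image (fun i _ j _ h => Nat.eq_of_mul_eq_mul_left hc0 h)]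
  have h1 : ∀ s, η ^ (c * s) = (η ^ c) ^ s := fun s => pow_mul η c s
  rw [Finset.sum_congr rfl fun s _ => h1 s]
  apply geom_sum_of_root
  rw [← pow_mul, Nat.mul_div_cancel' hc, hη]

lemma coprime_filter_sum {F : Type} [Field F] {ℓ m N : ℕ} (hl : ℓ.Prime) (hlodd : ℓ ≠ 2)
    (hm : 0 < m) (hN : N = 2 * ℓ ^ m) (η : F) (hη : η ^ N = 1) :
    ∑ t ∈ (Finset.range N).filter (fun t => Nat.Coprime t N), η ^ t
      = (if η = 1 then ((N : ℕ) : F) else 0)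
        - (if η ^ 2 = 1 then ((ℓ ^ m : ℕ) : F) else 0)
        - (if η ^ ℓ = 1 then ((2 * ℓ ^ (m - 1) : ℕ) : F) else 0)
        + (if η ^ (2 * ℓ) = 1 then ((ℓ ^ (m - 1) : ℕ) : F) else 0) := by
  obtain ⟨k, rfl⟩ : ∃ k, m = k + 1 := ⟨m - 1, by omega⟩
  simp only [Nat.add_sub_cancel] at *
  have hl0 : 0 < ℓ := hl.pos
  have hcop2l : Nat.Coprime 2 ℓ := (Nat.coprime_primes Nat.prime_two hl).mpr (Ne.symm hlodd)
  have hcp : ∀ t, Nat.Coprime t N ↔ ¬ (2 ∣ t) ∧ ¬ (ℓ ∣ t) := by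
    intro t
    rw [hN, Nat.coprime_mul_iff_right, Nat.coprime_pow_right_iff (by omega)]
    exact and_congr
      (by rw [Nat.coprime_comm]; exact Nat.Prime.coprime_iff_not_dvd Nat.prime_two)
      (by rw [Nat.coprime_comm]; exact Nat.Prime.coprime_iff_not_dvd hl)
  have hdvd2l : ∀ t : ℕ, 2 * ℓ ∣ t ↔ (2 ∣ t ∧ ℓ ∣ t) := by
    intro t
    constructor
    · intro h
      exact ⟨dvd_trans ⟨ℓ, rfl⟩ h, dvd_trans ⟨2, mul_comm 2 ℓ⟩ h⟩
    · rintro ⟨h2, hl'⟩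
      exact Nat.Coprime.mul_dvd_of_dvd_of_dvd hcop2l h2 hl'
  have hpoint : ∀ t : ℕ,
      (if Nat.Coprime t N then η ^ t else 0)
        = η ^ t - (if 2 ∣ t then η ^ t else 0) - (if ℓ ∣ t then η ^ t else 0)
          + (if 2 * ℓ ∣ t then η ^ t else 0) := by
    intro t
    by_cases h2 : 2 ∣ t <;> by_cases h3 : ℓ ∣ t <;>
      simp [hcp t, hdvd2l t, h2, h3] <;> ring
  have hsplit : ∑ t ∈ (Finset.range N).filter (fun t => Nat.Coprime t N), η ^ t
      = (∑ t ∈ Finset.range N, η ^ t)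
        - (∑ t ∈ (Finset.range N).filter (fun t => 2 ∣ t), η ^ t)
        - (∑ t ∈ (Finset.range N).filter (fun t => ℓ ∣ t), η ^ t)
        + (∑ t ∈ (Finset.range N).filter (fun t => 2 * ℓ ∣ t), η ^ t) := by
    rw [Finset.sum_filter, Finset.sum_filter (p := fun t => 2 ∣ t),
      Finset.sum_filter (p := fun t => ℓ ∣ t), Finset.sum_filter (p := fun t => 2 * ℓ ∣ t),
      ← Finset.sum_sub_distrib, ← Finset.sum_sub_distrib, ← Finset.sum_add_distrib]
    exact Finset.sum_congr rfl fun t _ => hpoint t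
  have hd2 : (2 : ℕ) ∣ N := ⟨ℓ ^ (k + 1), hN⟩
  have hNl : N = ℓ * (2 * ℓ ^ k) := by rw [hN]; ring
  have hN2l : N = (2 * ℓ) * ℓ ^ k := by rw [hN]; ring
  have hdl : ℓ ∣ N := ⟨2 * ℓ ^ k, hNl⟩
  have hd2l : 2 * ℓ ∣ N := ⟨ℓ ^ k, hN2l⟩
  have hq2 : N / 2 = ℓ ^ (k + 1) := by rw [hN, Nat.mul_div_cancel_left _ (by omega)]
  have hql : N / ℓ = 2 * ℓ ^ k := by rw [hNl, Nat.mul_div_cancel_left _ hl0]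
  have hq2l : N / (2 * ℓ) = ℓ ^ k := by rw [hN2l, Nat.mul_div_cancel_left _ (by positivity)]
  rw [hsplit, sum_dvd_filter η N 2 (by omega) hd2 hη, sum_dvd_filter η N ℓ hl0 hdl hη,
    sum_dvd_filter η N (2 * ℓ) (by positivity) hd2l hη,
    geom_sum_of_root η N hη, hq2, hql, hq2l]

lemma sum_range_two_mul {M : Type} [AddCommMonoid M] (n : ℕ) (f : ℕ → M) :
    ∑ j ∈ Finset.range (2 * n), f j = ∑ k ∈ Finset.range n, (f (2 * k) + f (2 * k + 1)) := by
  induction n with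
  | zero => simp
  | succ n ih =>
    rw [Nat.mul_succ, Finset.sum_range_succ, Finset.sum_range_succ, Finset.sum_range_succ, ih]
    abel

lemma sum_ite_single {M : Type} [AddCommMonoid M] (s : Finset ℕ) (k₀ : ℕ) (hk : k₀ ∈ s)
    (E E' : M) :
    ∑ k ∈ s, (if k = k₀ then E else E') = E + (s.card - 1) • E' := by
  classical
  rw [← Finset.add_sum_erase s _ hk, if_pos rfl]
  congr 1
  rw [Finset.sum_congr rfl (fun k hk' => if_neg (Finset.ne_of_mem_erase hk')),
    Finset.sum_const, Finset.card_erase_of_mem hk]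

theorem stmt_3
    (p ℓ m : ℕ) [Fact (Nat.Prime p)] (hp2 : p ≠ 2)
    (hℓ : Nat.Prime ℓ) (hℓp : ℓ ≠ p) (hm : 0 < m)
    (N : ℕ) (hN : N = 2 * ℓ ^ m)
    (hprim : orderOf (p : ZMod N) = Nat.totient N)
    (e : ℕ) (he : e = Nat.totient N) (he' : e = (ℓ - 1) * ℓ ^ (m - 1))
    (q : ℕ) (hq : q = p ^ e)
    (F : Type) [Field F] [Fintype F] [DecidableEq F] [Algebra (ZMod p) F]
    (hF : Fintype.card F = q)
    (ζ : ℂ) (hζ : ζ = Complex.exp (2 * (Real.pi : ℂ) * Complex.I / (p : ℂ)))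
    (χ : F → ℂ) (hχ : ∀ c : F, χ c = ζ ^ (Algebra.trace (ZMod p) F c).val)
    (g : Fˣ) (hg : ∀ x : Fˣ, ∃ k : ℕ, x = g ^ k)
    (ξ : F) (hξ : ξ = (g : F) ^ ((q - 1) / N))
    (S1 : F → ℂ) (hS1 : ∀ a : F, S1 a = ∑ i ∈ Finset.range N, χ (a * ξ ^ i))
    :
    ∀ a : ZMod p,
      S1 (algebraMap (ZMod p) F a) =
        ζ ^ (((ℓ : ZMod p) ^ (m - 1) * ((ℓ : ZMod p) - 1) * a).val) +
        ζ ^ ((-((ℓ : ZMod p) ^ (m - 1) * ((ℓ : ZMod p) - 1)) * a).val) +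
        ((ℓ : ℂ) - 1) * (ζ ^ (((ℓ : ZMod p) ^ (m - 1) * a).val) +
          ζ ^ ((-(ℓ : ZMod p) ^ (m - 1) * a).val)) +
        2 * (ℓ : ℂ) ^ m - 2 * (ℓ : ℂ) := by
  intro a
  obtain ⟨k, rfl⟩ : ∃ k, m = k + 1 := ⟨m - 1, by omega⟩
  simp only [Nat.add_sub_cancel] at he' ⊢
  have hp : p.Prime := Fact.out
  have hl1 : 1 < ℓ := hℓ.one_lt
  have hl0 : 0 < ℓ := by omega
  have hlodd : ℓ ≠ 2 := by
    rintro rfl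
    rw [hN] at he
    have h1 : (2 * 2 ^ (k + 1)).totient = 2 ^ (k + 1) := by
      rw [← pow_succ', Nat.totient_prime_pow Nat.prime_two (by omega)]
      simp
    rw [h1] at he
    rw [he] at he'
    have h2 := Nat.pow_lt_pow_right (a := 2) one_lt_two (Nat.lt_succ_self k)
    omega
  have hlk : 0 < ℓ ^ k := pow_pos hl0 k
  have he0 : 0 < e := by
    rw [he']
    exact Nat.mul_pos (by omega) hlk
  have hN1 : 1 < N := by
    have h2 : 0 < ℓ ^ (k + 1) := pow_pos hl0 _
    omega
  haveI : NeZero N := ⟨by omega⟩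
  have hq1 : 1 < q := by rw [hq]; exact Nat.one_lt_pow (by omega) hp.one_lt
  have hF' : Fintype.card F = p ^ e := by rw [hF, hq]
  have hcop : Nat.Coprime p N := by
    rw [hN, Nat.coprime_mul_iff_right, Nat.coprime_pow_right_iff (by omega)]
    exact ⟨(Nat.coprime_primes hp Nat.prime_two).mpr hp2,
      (Nat.coprime_primes hp hℓ).mpr (Ne.symm hℓp)⟩
  have hNq : N ∣ q - 1 := by
    have h1 : ((p : ZMod N)) ^ e = 1 := by rw [he, ← hprim]; exact pow_orderOf_eq_one _
    have h2 : ((q : ℕ) : ZMod N) = 1 := by rw [hq]; push_cast; exact h1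
    have h3 : (((q - 1 : ℕ)) : ZMod N) = 0 := by
      rw [Nat.cast_sub (by omega), h2]
      simp
    exact (ZMod.natCast_eq_zero_iff _ _).mp h3
  have hgord : orderOf g = q - 1 := by
    have h0 : ∀ u : Fˣ, u ∈ Subgroup.zpowers g := fun u => by
      obtain ⟨k', hk'⟩ := hg u
      exact ⟨(k' : ℤ), by simp [hk']⟩
    rw [orderOf_eq_card_of_forall_mem_zpowers h0, Nat.card_eq_fintype_card,
      Fintype.card_units, hF]
  have hxiord : orderOf ξ = N := by
    have hkdvd : (q - 1) / N ∣ q - 1 := Nat.div_dvd_of_dvd hNq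
    have h1 : orderOf ξ = orderOf (g ^ ((q - 1) / N)) := by
      rw [hξ, ← Units.val_pow_eq_pow_val, orderOf_units]
    rw [h1, orderOf_pow, hgord, Nat.gcd_eq_right hkdvd, Nat.div_div_self hNq (by omega)]
  have hxiN : ξ ^ N = 1 := by rw [← hxiord]; exact pow_orderOf_eq_one ξ
  have hxiNi : ∀ i : ℕ, (ξ ^ i) ^ N = 1 := fun i => by
    rw [← pow_mul, mul_comm, pow_mul, hxiN, one_pow]
  have hc1 : ∀ i : ℕ, (ξ ^ i = 1) ↔ N ∣ i := fun i => by
    rw [← hxiord, orderOf_dvd_iff_pow_eq_one]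
  have hc2 : ∀ i : ℕ, ((ξ ^ i) ^ 2 = 1) ↔ ℓ ^ (k + 1) ∣ i := fun i => by
    rw [← pow_mul, ← orderOf_dvd_iff_pow_eq_one, hxiord, hN, mul_comm i 2]
    exact Nat.mul_dvd_mul_iff_left (by omega : 0 < 2)
  have hc3 : ∀ i : ℕ, ((ξ ^ i) ^ ℓ = 1) ↔ 2 * ℓ ^ k ∣ i := fun i => by
    rw [← pow_mul, ← orderOf_dvd_iff_pow_eq_one, hxiord, hN,
      show 2 * ℓ ^ (k + 1) = 2 * ℓ ^ k * ℓ from by ring]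
    exact Nat.mul_dvd_mul_iff_right hl0
  have hc4 : ∀ i : ℕ, ((ξ ^ i) ^ (2 * ℓ) = 1) ↔ ℓ ^ k ∣ i := fun i => by
    rw [← pow_mul, ← orderOf_dvd_iff_pow_eq_one, hxiord, hN,
      show 2 * ℓ ^ (k + 1) = ℓ ^ k * (2 * ℓ) from by ring]
    exact Nat.mul_dvd_mul_iff_right (by positivity)
  obtain ⟨U, hU⟩ : ∃ U : ℕ → ZMod p, ∀ i, U i =
      (if N ∣ i then ((N : ℕ) : ZMod p) else 0)
      - (if ℓ ^ (k + 1) ∣ i then ((ℓ ^ (k + 1) : ℕ) : ZMod p) else 0)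
      - (if 2 * ℓ ^ k ∣ i then ((2 * ℓ ^ k : ℕ) : ZMod p) else 0)
      + (if ℓ ^ k ∣ i then ((ℓ ^ k : ℕ) : ZMod p) else 0) :=
    ⟨_, fun i => rfl⟩
  have htr : ∀ i : ℕ, Algebra.trace (ZMod p) F (ξ ^ i) = U i := by
    intro i
    apply (algebraMap (ZMod p) F).injective
    rw [trace_eq_sum_frob he0 hF' g hg (ξ ^ i),
      sum_frob_pow_eq_sum_coprime hN1 hprim he hcop (ξ ^ i) (hxiNi i),
      coprime_filter_sum hℓ hlodd hm hN (ξ ^ i) (hxiNi i), hU i]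
    simp only [Nat.add_sub_cancel, map_sub, map_add, apply_ite (algebraMap (ZMod p) F),
      map_natCast, map_zero, hc1 i, hc2 i, hc3 i, hc4 i]
  have hkey : ∀ i : ℕ, χ (algebraMap (ZMod p) F a * ξ ^ i) = ζ ^ (a * U i).val := by
    intro i
    rw [hχ]
    have h1 : Algebra.trace (ZMod p) F (algebraMap (ZMod p) F a * ξ ^ i) = a * U i := by
      rw [← Algebra.smul_def, map_smul, htr i, smul_eq_mul]
    rw [h1]
  rw [hS1, Finset.sum_congr rfl fun i _ => hkey i]
  -- pure computation from here on
  have hA0 : 0 < ℓ ^ k := hlk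
  have hAN : ℓ ^ k ∣ N := ⟨2 * ℓ, by rw [hN]; ring⟩
  have hNA : N / ℓ ^ k = 2 * ℓ := by
    rw [hN, show 2 * ℓ ^ (k + 1) = ℓ ^ k * (2 * ℓ) from by ring,
      Nat.mul_div_cancel_left _ hA0]
  have hU0 : ∀ i, ¬ ℓ ^ k ∣ i → U i = 0 := by
    intro i hi
    have n1 : ¬ N ∣ i := fun hdd => hi (hAN.trans hdd)
    have n2 : ¬ ℓ ^ (k + 1) ∣ i := fun hdd => hi ((pow_dvd_pow ℓ (by omega)).trans hdd)
    have n3 : ¬ 2 * ℓ ^ k ∣ i := fun hdd => hi (dvd_trans ⟨2, by ring⟩ hdd)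
    rw [hU i, if_neg n1, if_neg n2, if_neg n3, if_neg hi]
    simp
  rw [← Finset.sum_filter_add_sum_filter_not (Finset.range N) (fun i => ℓ ^ k ∣ i)]
  have hinjA : ∀ x ∈ Finset.range (2 * ℓ), ∀ y ∈ Finset.range (2 * ℓ),
      ℓ ^ k * x = ℓ ^ k * y → x = y :=
    fun x _ y _ hxy => Nat.eq_of_mul_eq_mul_left hA0 hxy
  have hpart2 : ∑ i ∈ (Finset.range N).filter (fun i => ¬ ℓ ^ k ∣ i), ζ ^ (a * U i).val
      = ((N - 2 * ℓ : ℕ) : ℂ) := by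
    have hterm : ∀ i ∈ (Finset.range N).filter (fun i => ¬ ℓ ^ k ∣ i),
        ζ ^ (a * U i).val = 1 := by
      intro i hi
      rw [hU0 i (Finset.mem_filter.mp hi).2, mul_zero, ZMod.val_zero, pow_zero]
    rw [Finset.sum_congr rfl hterm, Finset.sum_const, nsmul_eq_mul, mul_one]
    congr 1
    rw [Finset.filter_not, Finset.card_sdiff_of_subset (Finset.filter_subset _ _),
      Finset.card_range, filter_dvd_range_eq_image N (ℓ ^ k) hA0 hAN, hNA,
      Finset.card_image_of_injOn (fun x hx y hy hxy => hinjA x hx y hy hxy),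
      Finset.card_range]
  have hpart1 : ∑ i ∈ (Finset.range N).filter (fun i => ℓ ^ k ∣ i), ζ ^ (a * U i).val
      = ∑ j ∈ Finset.range (2 * ℓ), ζ ^ (a * U (ℓ ^ k * j)).val := by
    rw [filter_dvd_range_eq_image N (ℓ ^ k) hA0 hAN, hNA, Finset.sum_image hinjA]
  have hUj : ∀ j : ℕ, U (ℓ ^ k * j)
      = (if 2 * ℓ ∣ j then ((N : ℕ) : ZMod p) else 0)
        - (if ℓ ∣ j then ((ℓ ^ (k + 1) : ℕ) : ZMod p) else 0)
        - (if 2 ∣ j then ((2 * ℓ ^ k : ℕ) : ZMod p) else 0)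
        + ((ℓ ^ k : ℕ) : ZMod p) := by
    intro j
    have d1 : (N ∣ ℓ ^ k * j) ↔ 2 * ℓ ∣ j := by
      rw [hN, show 2 * ℓ ^ (k + 1) = ℓ ^ k * (2 * ℓ) from by ring]
      exact Nat.mul_dvd_mul_iff_left hA0
    have d2 : (ℓ ^ (k + 1) ∣ ℓ ^ k * j) ↔ ℓ ∣ j := by
      rw [show ℓ ^ (k + 1) = ℓ ^ k * ℓ from by ring]
      exact Nat.mul_dvd_mul_iff_left hA0
    have d3 : (2 * ℓ ^ k ∣ ℓ ^ k * j) ↔ 2 ∣ j := by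
      rw [show 2 * ℓ ^ k = ℓ ^ k * 2 from by ring]
      exact Nat.mul_dvd_mul_iff_left hA0
    have d4 : ℓ ^ k ∣ ℓ ^ k * j := ⟨j, rfl⟩
    rw [hU, if_pos d4]
    simp only [d1, d2, d3]
  rw [hpart1, hpart2, sum_range_two_mul ℓ (fun j => ζ ^ (a * U (ℓ ^ k * j)).val),
    Finset.sum_add_distrib]
  obtain ⟨h, hh⟩ : ∃ h, ℓ = 2 * h + 1 := by
    obtain ⟨h, hh⟩ := hℓ.odd_of_ne_two hlodd
    exact ⟨h, by omega⟩
  have hhl : h < ℓ := by omega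
  have heven : ∀ kk ∈ Finset.range ℓ, ζ ^ (a * U (ℓ ^ k * (2 * kk))).val
      = if kk = 0 then ζ ^ (((ℓ : ZMod p) ^ k * ((ℓ : ZMod p) - 1) * a).val)
        else ζ ^ ((-(ℓ : ZMod p) ^ k * a).val) := by
    intro kk hkk
    rw [Finset.mem_range] at hkk
    rw [hUj (2 * kk)]
    have h2d : 2 ∣ 2 * kk := ⟨kk, rfl⟩
    by_cases h0 : kk = 0
    · subst h0
      rw [if_pos (by simp), if_pos (by simp), if_pos h2d, if_pos rfl]
      congr 2
      rw [hN]
      push_cast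
      ring
    · have hld : ¬ ℓ ∣ 2 * kk := by
        intro hdd
        have h1 : ℓ ∣ kk := (Nat.Coprime.dvd_of_dvd_mul_left
          ((Nat.coprime_primes hℓ Nat.prime_two).mpr hlodd) hdd)
        exact h0 (Nat.eq_zero_of_dvd_of_lt h1 hkk)
      have h2ld : ¬ 2 * ℓ ∣ 2 * kk := by
        intro hdd
        exact hld (dvd_trans ⟨2, by ring⟩ hdd)
      rw [if_neg h2ld, if_neg hld, if_pos h2d, if_neg h0]
      congr 2
      push_cast
      ring
  have hodd : ∀ kk ∈ Finset.range ℓ, ζ ^ (a * U (ℓ ^ k * (2 * kk + 1))).val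
      = if kk = h then ζ ^ ((-((ℓ : ZMod p) ^ k * ((ℓ : ZMod p) - 1)) * a).val)
        else ζ ^ (((ℓ : ZMod p) ^ k * a).val) := by
    intro kk hkk
    rw [Finset.mem_range] at hkk
    rw [hUj (2 * kk + 1)]
    have hn2 : ¬ 2 ∣ 2 * kk + 1 := by omega
    have hn2l : ¬ 2 * ℓ ∣ 2 * kk + 1 := fun hdd => hn2 (dvd_trans ⟨ℓ, rfl⟩ hdd)
    by_cases h0 : kk = h
    · subst h0
      have hld : ℓ ∣ 2 * kk + 1 := ⟨1, by omega⟩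
      rw [if_neg hn2l, if_pos hld, if_neg hn2, if_pos rfl]
      congr 2
      push_cast
      ring
    · have hnl : ¬ ℓ ∣ 2 * kk + 1 := by
        intro hdd
        obtain ⟨t, ht⟩ := hdd
        have ht0 : t ≠ 0 := by rintro rfl; omega
        have ht2 : t < 2 := by
          by_contra hge
          push_neg at hge
          have h5 : ℓ * 2 ≤ ℓ * t := Nat.mul_le_mul_left ℓ hge
          omega
        have ht1 : t = 1 := by omega
        subst ht1
        omega
      rw [if_neg hn2l, if_neg hnl, if_neg hn2, if_neg h0]
      congr 2
      push_cast
      ring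
  rw [Finset.sum_congr rfl heven, Finset.sum_congr rfl hodd,
    sum_ite_single (Finset.range ℓ) 0 (Finset.mem_range.mpr hl0) _ _,
    sum_ite_single (Finset.range ℓ) h (Finset.mem_range.mpr hhl) _ _, Finset.card_range]
  have h2lN : 2 * ℓ ≤ N := by
    have h5 : ℓ ≤ ℓ ^ (k + 1) := Nat.le_self_pow (by omega) ℓ
    omega
  rw [nsmul_eq_mul, nsmul_eq_mul, Nat.cast_sub (by omega : 1 ≤ ℓ), Nat.cast_one,
    Nat.cast_sub h2lN]
  rw [hN]
  push_cast
  ring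
end

section
/- For every a ∈ F_q, every b ∈ F_q^*, and every x ∈ F_p^* (embedded in F_q^*), one has S(a,b) = S(a, x·b). -/
theorem stmt_6
    (p ℓ m : ℕ) [Fact (Nat.Prime p)] (hp2 : p ≠ 2)
    (hℓ : Nat.Prime ℓ) (hℓp : ℓ ≠ p) (hm : 0 < m)
    (N : ℕ) (hN : N = 2 * ℓ ^ m)
    (hprim : orderOf (p : ZMod N) = Nat.totient N)
    (e : ℕ) (he : e = Nat.totient N) (he' : e = (ℓ - 1) * ℓ ^ (m - 1))
    (q : ℕ) (hq : q = p ^ e)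
    (F : Type) [Field F] [Fintype F] [DecidableEq F] [Algebra (ZMod p) F]
    (hF : Fintype.card F = q)
    (ζ : ℂ) (hζ : ζ = Complex.exp (2 * (Real.pi : ℂ) * Complex.I / (p : ℂ)))
    (χ : F → ℂ) (hχ : ∀ c : F, χ c = ζ ^ (Algebra.trace (ZMod p) F c).val)
    (S : F → F → ℂ)
    (hS : ∀ a b : F, S a b = ∑ x : Fˣ, χ (a * (x : F) ^ ((q - 1) / N) + b * (x : F)))
    :
    ∀ (a b : F), b ≠ 0 → ∀ x : ZMod p, x ≠ 0 →
      S a b = S a (algebraMap (ZMod p) F x * b) := by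
  intro a b hb x hx
  have hpp : Nat.Prime p := Fact.out
  have hp1 : 1 < p := hpp.one_lt
  -- ℓ ≠ 2
  have hℓ2 : ℓ ≠ 2 := by
    rintro rfl
    rw [hN, show 2 * 2 ^ m = 2 ^ (m + 1) by ring,
      Nat.totient_prime_pow Nat.prime_two (Nat.succ_pos m)] at he
    simp at he
    rw [he'] at he
    simp only [show (2:ℕ)-1 = 1 from rfl, one_mul] at he
    have h1 : (2:ℕ) ^ (m - 1) < 2 ^ m := Nat.pow_lt_pow_right one_lt_two (by omega)
    omega
  have hℓ1 : 1 < ℓ := hℓ.one_lt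
  have hNpos : 0 < N := by
    rw [hN]; positivity
  have hN1 : 1 < N := by
    rw [hN]; nlinarith [Nat.one_le_two_pow (n := m), Nat.one_lt_pow hm.ne' hℓ1]
  -- ℓ does not divide p - 1
  have hℓpd : ¬ ℓ ∣ p - 1 := by
    intro hdvd
    have hz : (ℓ : ℤ) ∣ (p : ℤ) - 1 := by
      zify [hp1.le] at hdvd
      exact hdvd
    have h1 : ((ℓ : ℤ) ^ ((m - 1) + 1)) ∣ (p : ℤ) ^ ℓ ^ (m - 1) - 1 ^ ℓ ^ (m - 1) :=
      dvd_sub_pow_of_dvd_sub hz (m - 1)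
    have hm1 : m - 1 + 1 = m := by omega
    rw [hm1, one_pow] at h1
    set K := ℓ ^ (m - 1) with hK
    have hK1 : 1 ≤ p ^ K := Nat.one_le_pow _ _ hpp.pos
    have hℓm : (ℓ : ℕ) ^ m ∣ p ^ K - 1 := by
      have : ((ℓ ^ m : ℕ) : ℤ) ∣ ((p ^ K - 1 : ℕ) : ℤ) := by
        push_cast [hK1]
        exact_mod_cast h1
      exact_mod_cast Int.ofNat_dvd.mp this
    have h2 : 2 ∣ p ^ K - 1 := by
      obtain ⟨t, ht⟩ := (hpp.odd_of_ne_two hp2).pow (n := K)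
      omega
    have hcop : Nat.Coprime 2 (ℓ ^ m) :=
      (Nat.coprime_primes Nat.prime_two hℓ).mpr (fun h => hℓ2 h.symm) |>.pow_right m
    have hNdvd : N ∣ p ^ K - 1 := by
      rw [hN]; exact hcop.mul_dvd_of_dvd_of_dvd h2 hℓm
    have hmod : (p : ZMod N) ^ K = 1 := by
      have : ((p ^ K : ℕ) : ZMod N) = ((1 : ℕ) : ZMod N) := by
        rw [ZMod.natCast_eq_natCast_iff]
        exact (Nat.modEq_iff_dvd' hK1).mpr hNdvd |>.symm
      push_cast at this
      exact this
    have hord : orderOf (p : ZMod N) ∣ K := orderOf_dvd_of_pow_eq_one hmod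
    rw [hprim, ← he, he'] at hord
    have hKpos : 0 < K := Nat.pow_pos hℓ.pos
    have := Nat.le_of_dvd hKpos hord
    have h3 : 2 * K ≤ (ℓ - 1) * K := Nat.mul_le_mul_right K (by omega)
    omega
  -- N ∣ q - 1
  have hq1 : 1 ≤ q := by rw [hq]; exact Nat.one_le_pow _ _ hpp.pos
  have hNq : N ∣ q - 1 := by
    have hmod : (p : ZMod N) ^ e = 1 := by
      have := pow_orderOf_eq_one (p : ZMod N)
      rwa [hprim, ← he] at this
    have : ((q : ℕ) : ZMod N) = ((1 : ℕ) : ZMod N) := by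
      rw [hq]; push_cast; simpa using hmod
    rw [ZMod.natCast_eq_natCast_iff] at this
    exact (Nat.modEq_iff_dvd' hq1).mp this.symm
  -- e is even and positive
  have hℓodd : Odd ℓ := hℓ.odd_of_ne_two hℓ2
  have hetwo : ∃ f, 0 < f ∧ e = 2 * f := by
    obtain ⟨t, ht⟩ := hℓodd
    have h2e : 2 ∣ ℓ - 1 := by omega
    obtain ⟨f', hf'⟩ := h2e
    refine ⟨f' * ℓ ^ (m - 1), ?_, by rw [he', hf']; ring⟩
    have : 0 < f' := by omega
    positivity
  obtain ⟨f, hfpos, hef⟩ := hetwo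
  -- 2 * (p - 1) ∣ q - 1
  have h2p1 : 2 * (p - 1) ∣ q - 1 := by
    set A := p ^ f with hA
    have hA1 : 1 ≤ A := Nat.one_le_pow _ _ hpp.pos
    have hfac : q - 1 = (A - 1) * (A + 1) := by
      have : q = A ^ 2 := by rw [hq, hA, ← pow_mul, hef]; ring_nf
      zify [hA1, hq1]
      rw [this]; push_cast [hA1]; ring
    rw [hfac]
    have hd1 : p - 1 ∣ A - 1 := by
      simpa using Nat.sub_dvd_pow_sub_pow p 1 f
    have hd2 : 2 ∣ A + 1 := by
      obtain ⟨t, ht⟩ := (hpp.odd_of_ne_two hp2).pow (n := f)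
      omega
    rw [mul_comm 2 (p - 1)]
    exact mul_dvd_mul hd1 hd2
  -- (p - 1) * N ∣ q - 1
  have hbig : (p - 1) * N ∣ q - 1 := by
    have hcop : Nat.Coprime (ℓ ^ m) (2 * (p - 1)) := by
      apply Nat.Coprime.pow_left
      rw [hℓ.coprime_iff_not_dvd]
      intro h
      rcases (Nat.Prime.dvd_mul hℓ).mp h with h2 | hp1d
      · exact hℓ2 ((Nat.prime_dvd_prime_iff_eq hℓ Nat.prime_two).mp h2)
      · exact hℓpd hp1d
    have hℓmq : ℓ ^ m ∣ q - 1 := dvd_trans ⟨2, by rw [hN]; ring⟩ hNq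
    have : ℓ ^ m * (2 * (p - 1)) ∣ q - 1 :=
      hcop.mul_dvd_of_dvd_of_dvd hℓmq h2p1
    have heq : (p - 1) * N = ℓ ^ m * (2 * (p - 1)) := by rw [hN]; ring
    rw [heq]; exact this
  -- p - 1 divides d := (q-1)/N
  set d := (q - 1) / N with hd
  have hp1d : (p - 1) ∣ d := by
    obtain ⟨c, hc⟩ := hbig
    refine ⟨c, ?_⟩
    rw [hd, hc, show (p - 1) * N * c = N * ((p - 1) * c) by ring,
      Nat.mul_div_cancel_left _ hNpos]
  -- the unit u
  set u : F := algebraMap (ZMod p) F x with hu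
  have hune : u ≠ 0 := by
    intro h
    apply hx
    apply (algebraMap (ZMod p) F).injective
    rw [map_zero, ← hu]
    exact h
  have hup : u ^ (p - 1) = 1 := by
    rw [hu, ← map_pow, ZMod.pow_card_sub_one_eq_one hx, map_one]
  have hud : u ^ d = 1 := by
    obtain ⟨c, hc⟩ := hp1d
    rw [hc, pow_mul, hup, one_pow]
  set w : Fˣ := Units.mk0 u hune with hw
  -- reindex the sum
  rw [hS, hS]
  have key : ∀ z : Fˣ,
      χ (a * ((w * z : Fˣ) : F) ^ d + b * ((w * z : Fˣ) : F))
        = χ (a * (z : F) ^ d + u * b * (z : F)) := by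
    intro z
    congr 1
    have hwz : ((w * z : Fˣ) : F) = u * (z : F) := rfl
    rw [hwz, mul_pow, hud, one_mul]
    ring
  calc ∑ y : Fˣ, χ (a * (y : F) ^ d + b * (y : F))
      = ∑ z : Fˣ, χ (a * (((Equiv.mulLeft w) z : Fˣ) : F) ^ d
          + b * (((Equiv.mulLeft w) z : Fˣ) : F)) :=
        (Equiv.sum_comp (Equiv.mulLeft w)
          (fun y : Fˣ => χ (a * (y : F) ^ d + b * (y : F)))).symm
    _ = ∑ z : Fˣ, χ (a * (z : F) ^ d + u * b * (z : F)) := by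
        refine Finset.sum_congr rfl fun z _ => ?_
        simpa using key z
end

section
/- With √q = p^{e/2}: ℓ^m divides √q + 1, the quotient (√q+1)/(2ℓ^m) is a (positive) integer, and p−1 divides (q−1)/(2ℓ^m); consequently x^{(q−1)/N} = 1 for every x ∈ F_p^* (embedded in F_q^*). -/
theorem stmt_7
    (p ℓ m : ℕ) [Fact (Nat.Prime p)] (hp2 : p ≠ 2)
    (hℓ : Nat.Prime ℓ) (hℓp : ℓ ≠ p) (hm : 0 < m)
    (N : ℕ) (hN : N = 2 * ℓ ^ m)
    (hprim : orderOf (p : ZMod N) = Nat.totient N)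
    (e : ℕ) (he : e = Nat.totient N) (he' : e = (ℓ - 1) * ℓ ^ (m - 1))
    (q : ℕ) (hq : q = p ^ e)
    (F : Type) [Field F] [Fintype F] [DecidableEq F] [Algebra (ZMod p) F]
    (hF : Fintype.card F = q)
    :
    ℓ ^ m ∣ p ^ (e / 2) + 1 ∧
    2 * ℓ ^ m ∣ p ^ (e / 2) + 1 ∧
    0 < (p ^ (e / 2) + 1) / (2 * ℓ ^ m) ∧
    (p - 1) ∣ (q - 1) / (2 * ℓ ^ m) ∧
    ∀ x : ZMod p, x ≠ 0 → algebraMap (ZMod p) F x ^ ((q - 1) / N) = 1 := by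
  have hp : Nat.Prime p := Fact.out
  subst hN hq
  -- ℓ ≠ 2
  have hℓ2 : ℓ ≠ 2 := by
    rintro rfl
    rw [show 2 * 2 ^ m = 2 ^ (m + 1) by ring,
        Nat.totient_prime_pow Nat.prime_two (Nat.succ_pos m)] at he
    simp at he he'
    have h1 : 2 ^ (m - 1) < 2 ^ m := Nat.pow_lt_pow_right one_lt_two (by omega)
    omega
  have hℓodd : Odd ℓ := hℓ.odd_of_ne_two hℓ2
  have hℓ3 : 3 ≤ ℓ := by have := hℓ.two_le; omega
  have hℓmpos : 0 < ℓ ^ m := Nat.pow_pos (by omega)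
  have hepos : 0 < e := by
    rw [he']; exact Nat.mul_pos (by omega) (Nat.pow_pos (by omega))
  have h2e : 2 ∣ e := by
    obtain ⟨k, hk⟩ := hℓodd
    have hk' : ℓ - 1 = 2 * k := by omega
    rw [he', hk', mul_assoc]
    exact Dvd.intro _ rfl
  have hhalf : e / 2 * 2 = e := Nat.div_mul_cancel h2e
  set a := p ^ (e / 2) with ha_def
  have ha1 : 1 ≤ a := Nat.one_le_pow _ _ hp.pos
  have ha2 : a * a = p ^ e := by
    rw [ha_def, ← pow_add]; congr 1; omega
  have hpodd : Odd p := hp.odd_of_ne_two hp2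
  have haodd : Odd a := hpodd.pow
  -- N divides p^e - 1
  have hordpow : (p : ZMod (2 * ℓ ^ m)) ^ e = 1 := by
    rw [he, ← hprim]; exact pow_orderOf_eq_one _
  have hNdvd : 2 * ℓ ^ m ∣ p ^ e - 1 := by
    have h1 : ((p ^ e : ℕ) : ZMod (2 * ℓ ^ m)) = ((1 : ℕ) : ZMod (2 * ℓ ^ m)) := by
      push_cast
      exact hordpow
    exact (Nat.modEq_iff_dvd' (Nat.one_le_pow _ _ hp.pos)).mp
      ((ZMod.natCast_eq_natCast_iff _ _ _).mp h1).symm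
  -- N does not divide a - 1
  have hnot : ¬ (2 * ℓ ^ m ∣ a - 1) := by
    intro hdvd
    have h1 : ((1 : ℕ) : ZMod (2 * ℓ ^ m)) = ((a : ℕ) : ZMod (2 * ℓ ^ m)) :=
      (ZMod.natCast_eq_natCast_iff _ _ _).mpr ((Nat.modEq_iff_dvd' ha1).mpr hdvd)
    have h2 : (p : ZMod (2 * ℓ ^ m)) ^ (e / 2) = 1 := by
      rw [ha_def] at h1; push_cast at h1; exact h1.symm
    have h3 : orderOf (p : ZMod (2 * ℓ ^ m)) ∣ e / 2 := orderOf_dvd_of_pow_eq_one h2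
    rw [hprim, ← he] at h3
    have := Nat.le_of_dvd (by omega) h3
    omega
  have hfac : p ^ e - 1 = (a + 1) * (a - 1) := by
    have := Nat.sq_sub_sq a 1
    rw [sq, sq] at this
    rw [← ha2]
    simpa using this
  have hprod : ℓ ^ m ∣ (a - 1) * (a + 1) := by
    rw [mul_comm, ← hfac]
    exact dvd_trans (dvd_mul_left _ _) hNdvd
  have cop2 : Nat.Coprime 2 (ℓ ^ m) :=
    Nat.Coprime.pow_right m ((Nat.coprime_primes Nat.prime_two hℓ).mpr (Ne.symm hℓ2))
  have hfull : 2 * ℓ ^ m ∣ a + 1 := by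
    by_cases hdv : ℓ ∣ a - 1
    · exfalso
      have hnd : ¬ ℓ ∣ a + 1 := by
        intro h
        have : ℓ ∣ 2 := by
          have := Nat.dvd_sub h hdv
          have h2 : a + 1 - (a - 1) = 2 := by omega
          rwa [h2] at this
        have := Nat.le_of_dvd (by norm_num) this
        omega
      have cop : Nat.Coprime (ℓ ^ m) (a + 1) :=
        Nat.Coprime.pow_left m ((Nat.Prime.coprime_iff_not_dvd hℓ).mpr hnd)
      have hℓm : ℓ ^ m ∣ a - 1 := cop.dvd_of_dvd_mul_right hprod
      have h2a : 2 ∣ a - 1 := by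
        obtain ⟨c, hc⟩ := haodd; exact ⟨c, by omega⟩
      exact hnot (Nat.Coprime.mul_dvd_of_dvd_of_dvd cop2 h2a hℓm)
    · have cop : Nat.Coprime (ℓ ^ m) (a - 1) :=
        Nat.Coprime.pow_left m ((Nat.Prime.coprime_iff_not_dvd hℓ).mpr hdv)
      have hℓm : ℓ ^ m ∣ a + 1 := cop.dvd_of_dvd_mul_left hprod
      have h2a : 2 ∣ a + 1 := by
        obtain ⟨c, hc⟩ := haodd; exact ⟨c + 1, by omega⟩
      exact Nat.Coprime.mul_dvd_of_dvd_of_dvd cop2 h2a hℓm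
  have hdivq : (p - 1) ∣ (p ^ e - 1) / (2 * ℓ ^ m) := by
    have heq : (p ^ e - 1) / (2 * ℓ ^ m) = (a + 1) / (2 * ℓ ^ m) * (a - 1) := by
      obtain ⟨t, ht⟩ := hfull
      rw [hfac, ht, mul_assoc, Nat.mul_div_cancel_left _ (show 0 < 2 * ℓ ^ m by omega),
        Nat.mul_div_cancel_left _ (show 0 < 2 * ℓ ^ m by omega)]
    rw [heq]
    have : p - 1 ∣ a - 1 := by
      have := Nat.sub_dvd_pow_sub_pow p 1 (e / 2)
      simpa using this
    exact Dvd.dvd.mul_left this _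
  refine ⟨dvd_trans (dvd_mul_left _ _) hfull, hfull,
    Nat.div_pos (Nat.le_of_dvd (by omega) hfull) (by omega), hdivq, ?_⟩
  intro x hx
  obtain ⟨k, hk⟩ := hdivq
  rw [hk, pow_mul, ← map_pow, ZMod.pow_card_sub_one_eq_one hx, map_one, one_pow]
end

section
/- One has w(0,0) = ((q−1)/ℓ^m)·((p−1)ℓ^m − pℓ + p) if ℓ ≡ 1 (mod p), and w(0,0) = ((q−1)/ℓ^{m−1})·((p−1)ℓ^{m−1} − p) if ℓ ≢ 1 (mod p). -/
open Finset

lemma aux_geom {K : Type*} [Field K] [DecidableEq K] (w : K) (n : ℕ) (h : w ^ n = 1) :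
    ∑ i ∈ Finset.range n, w ^ i = if w = 1 then (n : K) else 0 := by
  split_ifs with hw
  · simp [hw]
  · rw [geom_sum_eq hw, h, sub_self, zero_div]

lemma aux_gen {G M : Type*} [Group G] [Fintype G] [AddCommMonoid M] (g : G)
    (hg : orderOf g = Fintype.card G) (f : G → M) :
    ∑ x : G, f x = ∑ i ∈ Finset.range (Fintype.card G), f (g ^ i) := by
  rw [Finset.sum_range]
  refine (Fintype.sum_bijective (fun i : Fin (Fintype.card G) => g ^ (i : ℕ)) ?_ _ _
    (fun i => rfl)).symm
  have hinj : Function.Injective (fun i : Fin (Fintype.card G) => g ^ (i : ℕ)) := by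
    intro i j hij
    exact Fin.ext (pow_injOn_Iio_orderOf (by simpa [hg] using i.isLt) (by simpa [hg] using j.isLt) hij)
  exact (Fintype.bijective_iff_injective_and_card _).mpr ⟨hinj, by simp⟩

lemma aux_per {M : Type*} [AddCommMonoid M] (f : ℕ → M) (N : ℕ) (hf : ∀ i, f (i + N) = f i)
    (d : ℕ) : ∑ i ∈ Finset.range (d * N), f i = d • ∑ j ∈ Finset.range N, f j := by
  induction d with
  | zero => simp
  | succ k ih =>
      have hsh : ∀ j, f (k * N + j) = f j := by
        intro j
        clear ih
        induction k with
        | zero => simp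
        | succ t iht =>
            have : (t + 1) * N + j = t * N + j + N := by ring
            rw [this, hf, iht]
      rw [add_mul, one_mul, Finset.sum_range_add, ih, succ_nsmul]
      congr 1
      exact Finset.sum_congr rfl fun j _ => hsh j

lemma aux_powmod {M : Type*} [Monoid M] (u : M) (N k : ℕ) (h : u ^ N = 1) :
    u ^ (k % N) = u ^ k := by
  conv_rhs => rw [← Nat.div_add_mod k N]
  rw [pow_add, pow_mul, h, one_pow, one_mul]

lemma aux_trace (p e q : ℕ) [Fact p.Prime] (F : Type) [Field F] [Fintype F] [DecidableEq F] [Algebra (ZMod p) F]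
    (hq : q = p ^ e) (hF : Fintype.card F = q) (hepos : 0 < e) (x : F) :
    algebraMap (ZMod p) F (Algebra.trace (ZMod p) F x) = ∑ i ∈ Finset.range e, x ^ p ^ i := by
  have hp1 : 1 < p := (Fact.out : p.Prime).one_lt
  haveI : CharP F p := charP_of_injective_algebraMap (algebraMap (ZMod p) F).injective p
  haveI : ExpChar F p := ExpChar.prime Fact.out
  -- Frobenius as an algebra equiv
  have hcomm : ∀ a : ZMod p, (frobenius F p) (algebraMap (ZMod p) F a) = algebraMap (ZMod p) F a := by
    intro a
    rw [frobenius_def, ← map_pow, ZMod.pow_card]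
  let ψ : F →ₐ[ZMod p] F := ⟨frobenius F p, hcomm⟩
  have hψbij : Function.Bijective ψ := Finite.injective_iff_bijective.mp (frobenius F p).injective
  let φ : F ≃ₐ[ZMod p] F := AlgEquiv.ofBijective ψ hψbij
  have hφ : ∀ y : F, φ y = y ^ p := fun y => by simp [φ, ψ, frobenius_def]
  have hφpow : ∀ (i : ℕ) (y : F), (φ ^ i) y = y ^ p ^ i := by
    intro i
    induction i with
    | zero => intro y; simp
    | succ n ih =>
        intro y
        rw [pow_succ' φ n, AlgEquiv.mul_apply, ih, hφ, ← pow_mul, ← pow_succ]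
  -- finrank
  have hfr : Module.finrank (ZMod p) F = e := by
    have h1 : Fintype.card F = Fintype.card (ZMod p) ^ Module.finrank (ZMod p) F :=
      Module.card_eq_pow_finrank
    rw [hF, hq, ZMod.card] at h1
    exact (Nat.pow_right_injective hp1 h1.symm)
  have hcard : Fintype.card (F ≃ₐ[ZMod p] F) = e := by
    rw [← Nat.card_eq_fintype_card, IsGalois.card_aut_eq_finrank, hfr]
  -- order of Frobenius
  have hφe : φ ^ e = 1 := by
    apply AlgEquiv.ext
    intro y
    rw [hφpow, ← hq, ← hF, AlgEquiv.one_apply, FiniteField.pow_card]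
  have hφord : orderOf φ = e := by
    rw [orderOf_eq_iff hepos]
    refine ⟨hφe, ?_⟩
    intro i hie hipos h1
    -- pick a generator of Fˣ
    obtain ⟨g, hg⟩ := IsCyclic.exists_generator (α := Fˣ)
    have hgo : orderOf g = q - 1 := by
      rw [orderOf_eq_card_of_forall_mem_zpowers hg, Nat.card_eq_fintype_card, Fintype.card_units, hF]
    have hgp : (g : F) ^ p ^ i = (g : F) := by
      have := AlgEquiv.congr_fun h1 (g : F)
      rw [hφpow, AlgEquiv.one_apply] at this
      exact this
    have hgu : g ^ (p ^ i) = g := by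
      apply Units.ext
      push_cast
      exact hgp
    have hpi1 : 1 ≤ p ^ i := Nat.one_le_pow _ _ (by omega)
    have hgu1 : g ^ (p ^ i - 1) = 1 := by
      have h2 : g ^ (p ^ i - 1) * g = g := by
        rw [← pow_succ]
        have : p ^ i - 1 + 1 = p ^ i := by omega
        rw [this, hgu]
      have := mul_right_cancel (b := g) (a := g ^ (p ^ i - 1)) (c := 1) (by rw [h2, one_mul])
      exact this
    have hdvd : q - 1 ∣ p ^ i - 1 := by
      rw [← hgo]
      exact orderOf_dvd_of_pow_eq_one hgu1
    have hq1 : 1 < q := by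
      rw [hq]; exact Nat.one_lt_pow (by omega) hp1
    have hpilt : p ^ i < q := by
      rw [hq]; exact Nat.pow_lt_pow_right hp1 hie
    have hple : p ≤ p ^ i := Nat.le_self_pow hipos.ne' p
    have h5 : q - 1 ≤ p ^ i - 1 := Nat.le_of_dvd (by omega) hdvd
    have h6 : q ≤ p ^ i := by
      calc q = (q - 1) + 1 := (Nat.succ_pred_eq_of_pos (by omega)).symm
        _ ≤ (p ^ i - 1) + 1 := Nat.add_le_add_right h5 1
        _ = p ^ i := Nat.succ_pred_eq_of_pos hpi1
    exact absurd hpilt (not_lt.mpr h6)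
  -- conclude
  rw [trace_eq_sum_automorphisms, aux_gen φ (by rw [hφord, hcard]), hcard]
  exact Finset.sum_congr rfl fun i _ => hφpow i x

lemma aux_div_sum {F : Type} [Field F] [DecidableEq F] (N c : ℕ) (hc : 0 < c) (hcN : c ∣ N)
    (u : F) (hu : u ^ N = 1) :
    ∑ k ∈ (Finset.range N).filter (fun k => c ∣ k), u ^ k
      = if u ^ c = 1 then ((N / c : ℕ) : F) else 0 := by
  have himg : (Finset.range N).filter (fun k => c ∣ k)
      = (Finset.range (N / c)).image (fun t => c * t) := by
    ext j
    simp only [Finset.mem_filter, Finset.mem_range, Finset.mem_image]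
    constructor
    · rintro ⟨hj, t, rfl⟩
      refine ⟨t, ?_, rfl⟩
      rcases hcN with ⟨s, rfl⟩
      rw [Nat.mul_div_cancel_left _ hc]
      exact lt_of_mul_lt_mul_left hj (Nat.zero_le c)
    · rintro ⟨t, ht, rfl⟩
      refine ⟨?_, dvd_mul_right c t⟩
      calc c * t < c * (N / c) := (Nat.mul_lt_mul_left hc).mpr ht
        _ = N := Nat.mul_div_cancel' hcN
  rw [himg, Finset.sum_image (by intro a _ b _ h; exact Nat.eq_of_mul_eq_mul_left hc h)]
  have : ∀ t, u ^ (c * t) = (u ^ c) ^ t := fun t => by rw [pow_mul]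
  rw [Finset.sum_congr rfl fun t _ => this t]
  exact aux_geom (u ^ c) (N / c) (by rw [← pow_mul, Nat.mul_div_cancel' hcN, hu])

lemma aux_units_sum {F : Type} [Field F] [DecidableEq F] (N ℓ : ℕ) [NeZero N]
    (h2 : 2 ∣ N) (hl : ℓ ∣ N) (h2l : 2 * ℓ ∣ N) (hlpos : 0 < ℓ)
    (hcop : ∀ k : ℕ, Nat.Coprime k N ↔ ¬ 2 ∣ k ∧ ¬ ℓ ∣ k)
    (h2ldvd : ∀ k : ℕ, 2 * ℓ ∣ k ↔ 2 ∣ k ∧ ℓ ∣ k)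
    (u : F) (hu : u ^ N = 1) :
    ∑ a : (ZMod N)ˣ, u ^ (a : ZMod N).val =
      (if u = 1 then ((N : ℕ) : F) else 0) - (if u ^ 2 = 1 then ((N / 2 : ℕ) : F) else 0)
      - (if u ^ ℓ = 1 then ((N / ℓ : ℕ) : F) else 0)
      + (if u ^ (2 * ℓ) = 1 then ((N / (2 * ℓ) : ℕ) : F) else 0) := by
  have h1 : ∑ a : (ZMod N)ˣ, u ^ (a : ZMod N).val
      = ∑ k ∈ (Finset.range N).filter (fun k => Nat.Coprime k N), u ^ k := by
    apply Finset.sum_bij (fun (a : (ZMod N)ˣ) _ => (a : ZMod N).val)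
    · intro a _
      simp only [Finset.mem_filter, Finset.mem_range]
      exact ⟨ZMod.val_lt _, ZMod.val_coe_unit_coprime a⟩
    · intro a _ b _ h
      exact Units.ext (ZMod.val_injective N h)
    · intro k hk
      simp only [Finset.mem_filter, Finset.mem_range] at hk
      refine ⟨ZMod.unitOfCoprime k hk.2, Finset.mem_univ _, ?_⟩
      simp [ZMod.unitOfCoprime, ZMod.val_natCast, Nat.mod_eq_of_lt hk.1]
    · intros; rfl
  rw [h1, Finset.sum_filter]
  have hpt : ∀ k, (if Nat.Coprime k N then u ^ k else 0)
      = u ^ k - (if 2 ∣ k then u ^ k else 0) - (if ℓ ∣ k then u ^ k else 0)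
        + (if 2 * ℓ ∣ k then u ^ k else 0) := by
    intro k
    by_cases ha : 2 ∣ k <;> by_cases hb : ℓ ∣ k <;>
      simp [hcop, h2ldvd, ha, hb]
  rw [Finset.sum_congr rfl fun k _ => hpt k]
  rw [Finset.sum_add_distrib, Finset.sum_sub_distrib, Finset.sum_sub_distrib]
  rw [← Finset.sum_filter, ← Finset.sum_filter, ← Finset.sum_filter]
  rw [aux_div_sum N 2 (by omega) h2 u hu, aux_div_sum N ℓ hlpos hl u hu,
    aux_div_sum N (2 * ℓ) (by omega) h2l u hu,
    aux_geom u N hu]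

lemma aux_char (p : ℕ) [Fact p.Prime] (ζ : ℂ) (hζp : ζ ^ p = 1) (hζ1 : ζ ≠ 1) (t : ZMod p) :
    ∑ y : (ZMod p)ˣ, ζ ^ ((y : ZMod p) * t).val = if t = 0 then ((p : ℂ) - 1) else -1 := by
  have hp1 : 1 < p := (Fact.out : p.Prime).one_lt
  have hall : ∑ s : ZMod p, ζ ^ s.val = 0 := by
    have : ∑ s : ZMod p, ζ ^ s.val = ∑ k ∈ Finset.range p, ζ ^ k := by
      apply Finset.sum_bij (fun (s : ZMod p) _ => s.val)
      · intro a _; exact Finset.mem_range.mpr (ZMod.val_lt a)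
      · intro a _ b _ h; exact ZMod.val_injective p h
      · intro k hk
        refine ⟨(k : ZMod p), Finset.mem_univ _, ?_⟩
        rw [ZMod.val_natCast, Nat.mod_eq_of_lt (Finset.mem_range.mp hk)]
      · intros; rfl
    rw [this, aux_geom ζ p hζp, if_neg hζ1]
  have hunits : ∑ y : (ZMod p)ˣ, ζ ^ ((y : ZMod p)).val = -1 := by
    have hsplit := Finset.add_sum_erase Finset.univ (fun s : ZMod p => ζ ^ s.val)
      (Finset.mem_univ (0 : ZMod p))
    rw [hall] at hsplit
    have herase : ∑ y : (ZMod p)ˣ, ζ ^ ((y : ZMod p)).val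
        = ∑ s ∈ Finset.univ.erase (0 : ZMod p), ζ ^ s.val := by
      apply Finset.sum_bij (fun (y : (ZMod p)ˣ) _ => (y : ZMod p))
      · intro a _; exact Finset.mem_erase.mpr ⟨a.ne_zero, Finset.mem_univ _⟩
      · intro a _ b _ h; exact Units.ext h
      · intro s hs
        exact ⟨Units.mk0 s (Finset.mem_erase.mp hs).1, Finset.mem_univ _, rfl⟩
      · intros; rfl
    rw [herase]
    simp only [ZMod.val_zero, pow_zero] at hsplit
    linear_combination hsplit
  split_ifs with ht
  · subst ht
    simp only [mul_zero, ZMod.val_zero, pow_zero]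
    rw [Finset.sum_const, Finset.card_univ, ZMod.card_units_eq_totient, Nat.totient_prime Fact.out]
    simp [Nat.cast_sub hp1.le]
  · have tu : (ZMod p)ˣ := Units.mk0 t ht
    calc ∑ y : (ZMod p)ˣ, ζ ^ ((y : ZMod p) * t).val
        = ∑ y : (ZMod p)ˣ, ζ ^ (((y * Units.mk0 t ht : (ZMod p)ˣ) : ZMod p)).val := rfl
      _ = ∑ y : (ZMod p)ˣ, ζ ^ ((y : ZMod p)).val :=
          Fintype.sum_equiv (Equiv.mulRight (Units.mk0 t ht)) _ _ (fun y => rfl)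
      _ = -1 := hunits
theorem stmt_8
    (p ℓ m : ℕ) [Fact (Nat.Prime p)] (hp2 : p ≠ 2)
    (hℓ : Nat.Prime ℓ) (hℓp : ℓ ≠ p) (hm : 0 < m)
    (N : ℕ) (hN : N = 2 * ℓ ^ m)
    (hprim : orderOf (p : ZMod N) = Nat.totient N)
    (e : ℕ) (he : e = Nat.totient N) (he' : e = (ℓ - 1) * ℓ ^ (m - 1))
    (q : ℕ) (hq : q = p ^ e)
    (F : Type) [Field F] [Fintype F] [DecidableEq F] [Algebra (ZMod p) F]
    (hF : Fintype.card F = q)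
    (ζ : ℂ) (hζ : ζ = Complex.exp (2 * (Real.pi : ℂ) * Complex.I / (p : ℂ)))
    (χ : F → ℂ) (hχ : ∀ c : F, χ c = ζ ^ (Algebra.trace (ZMod p) F c).val)
    (S : F → F → ℂ)
    (hS : ∀ a b : F, S a b = ∑ x : Fˣ, χ (a * (x : F) ^ ((q - 1) / N) + b * (x : F)))
    (w : ZMod p → F → ℂ)
    (hw : ∀ (α : ZMod p) (x : F), w α x =
      ∑ y : (ZMod p)ˣ, ζ ^ (((-(y : ZMod p)) * α).val) *
        S (algebraMap (ZMod p) F (y : ZMod p)) (algebraMap (ZMod p) F (y : ZMod p) * x))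
    :
    ((ℓ : ZMod p) = 1 →
      w 0 0 = (((q - 1) / ℓ ^ m : ℕ) : ℂ) *
        (((p : ℂ) - 1) * (ℓ : ℂ) ^ m - (p : ℂ) * (ℓ : ℂ) + (p : ℂ))) ∧
    ((ℓ : ZMod p) ≠ 1 →
      w 0 0 = (((q - 1) / ℓ ^ (m - 1) : ℕ) : ℂ) *
        (((p : ℂ) - 1) * (ℓ : ℂ) ^ (m - 1) - (p : ℂ))) := by
  -- ## basic facts
  have hp : p.Prime := Fact.out
  have hp1 : 1 < p := hp.one_lt
  have hℓ1 : 1 < ℓ := hℓ.one_lt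
  -- ℓ ≠ 2
  have hℓ2 : ℓ ≠ 2 := by
    rintro rfl
    rw [he'] at he
    have hN2 : N = 2 ^ (m + 1) := by rw [hN, ← pow_succ']
    rw [hN2, Nat.totient_prime_pow Nat.prime_two (by omega)] at he
    simp at he
    have h1 : (2:ℕ) ^ (m - 1) < 2 ^ (m + 1 - 1) := Nat.pow_lt_pow_right (by omega) (by omega)
    omega
  have hℓodd : ¬ (2 ∣ ℓ) := by
    intro h
    rcases (Nat.Prime.eq_one_or_self_of_dvd hℓ 2 h) with h' | h' <;> omega
  set r : ℕ := ℓ ^ (m - 1) with hr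
  have hrpos : 0 < r := Nat.pow_pos (by omega)
  have hℓm : ℓ ^ m = ℓ * r := by
    rw [hr, ← pow_succ']
    congr 1
    omega
  have hNpos : 0 < N := by rw [hN]; positivity
  haveI : NeZero N := ⟨hNpos.ne'⟩
  have hNr : N = r * (2 * ℓ) := by rw [hN, hℓm]; ring
  have hinj : Function.Injective (algebraMap (ZMod p) F) := (algebraMap (ZMod p) F).injective
  have hepos : 0 < e := by
    rw [he']
    have : 0 < ℓ - 1 := by omega
    positivity
  have hq1 : 1 < q := by rw [hq]; exact Nat.one_lt_pow hepos.ne' hp1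
  -- N divides q - 1
  have hNdvd : N ∣ q - 1 := by
    have h1 : (p : ZMod N) ^ e = 1 := by
      rw [he, ← hprim]; exact pow_orderOf_eq_one _
    have h2 : ((q : ℕ) : ZMod N) = 1 := by rw [hq]; push_cast; exact h1
    have h3 : (((q - 1 : ℕ)) : ZMod N) = 0 := by
      push_cast [Nat.cast_sub hq1.le]
      rw [h2, sub_self]
    exact (ZMod.natCast_eq_zero_iff _ _).mp h3
  set d : ℕ := (q - 1) / N with hd
  have hdN : d * N = q - 1 := Nat.div_mul_cancel hNdvd
  have hdpos : 0 < d := by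
    rcases Nat.eq_zero_or_pos d with h | h
    · rw [h, zero_mul] at hdN; omega
    · exact h
  -- primitive root facts
  have hζpr : IsPrimitiveRoot ζ p := by
    rw [hζ]; exact Complex.isPrimitiveRoot_exp p (by omega)
  have hζp : ζ ^ p = 1 := hζpr.pow_eq_one
  have hζ1 : ζ ≠ 1 := hζpr.ne_one hp1
  -- trace linearity
  have hlin : ∀ (y : ZMod p) (u : F),
      Algebra.trace (ZMod p) F (algebraMap (ZMod p) F y * u) = y * Algebra.trace (ZMod p) F u := by
    intro y u
    rw [← Algebra.smul_def, map_smul, smul_eq_mul]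
  -- ## Step 1 : reduce to a sum over Fˣ
  have step1 : w 0 0 = ∑ x : Fˣ,
      (if Algebra.trace (ZMod p) F ((x : F) ^ ((q - 1) / N)) = 0 then ((p : ℂ) - 1) else -1) := by
    rw [hw]
    have h1 : ∀ y : (ZMod p)ˣ, ζ ^ ((-(y : ZMod p) * (0 : ZMod p)).val) = 1 := by
      intro y; rw [mul_zero, ZMod.val_zero, pow_zero]
    calc ∑ y : (ZMod p)ˣ, ζ ^ ((-(y : ZMod p) * (0 : ZMod p)).val) *
          S (algebraMap (ZMod p) F (y : ZMod p)) (algebraMap (ZMod p) F (y : ZMod p) * 0)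
        = ∑ y : (ZMod p)ˣ, ∑ x : Fˣ,
            ζ ^ (((y : ZMod p)) * Algebra.trace (ZMod p) F ((x : F) ^ ((q - 1) / N))).val := by
          apply Finset.sum_congr rfl; intro y _
          rw [h1, one_mul, mul_zero, hS]
          apply Finset.sum_congr rfl; intro x _
          rw [zero_mul, add_zero, hχ, hlin]
      _ = ∑ x : Fˣ, ∑ y : (ZMod p)ˣ,
            ζ ^ (((y : ZMod p)) * Algebra.trace (ZMod p) F ((x : F) ^ ((q - 1) / N))).val :=
          Finset.sum_comm
      _ = _ := by
          apply Finset.sum_congr rfl; intro x _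
          exact aux_char p ζ hζp hζ1 _
  -- ## Step 2 : generator and roots of unity
  obtain ⟨g, hg⟩ := IsCyclic.exists_generator (α := Fˣ)
  have hcardu : Fintype.card Fˣ = q - 1 := by rw [Fintype.card_units, hF]
  have hgo : orderOf g = Fintype.card Fˣ := by
    rw [orderOf_eq_card_of_forall_mem_zpowers hg, Nat.card_eq_fintype_card]
  set v : Fˣ := g ^ d with hv
  have hvord : orderOf v = N := by
    rw [hv, orderOf_pow, hgo, hcardu, Nat.gcd_eq_right ⟨N, hdN.symm⟩, ← hdN,
      Nat.mul_div_cancel_left _ hdpos]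
  set vF : F := ((v : Fˣ) : F) with hvF
  have hvFord : orderOf vF = N := by rw [hvF, orderOf_units, hvord]
  have hvFN : vF ^ N = 1 := by rw [← hvFord]; exact pow_orderOf_eq_one vF
  have step2 : w 0 0 = (d : ℂ) * ∑ j ∈ Finset.range N,
      (if Algebra.trace (ZMod p) F (vF ^ j) = 0 then ((p : ℂ) - 1) else -1) := by
    rw [step1, aux_gen g hgo, hcardu]
    have hptw : ∀ i : ℕ, ((((g ^ i : Fˣ)) : F) ^ ((q - 1) / N)) = vF ^ i := by
      intro i
      rw [hvF, hv]
      push_cast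
      rw [← pow_mul, ← pow_mul, mul_comm]
    have : ∀ i : ℕ, (if Algebra.trace (ZMod p) F (((g ^ i : Fˣ) : F) ^ ((q - 1) / N)) = 0
        then ((p : ℂ) - 1) else -1)
        = (if Algebra.trace (ZMod p) F (vF ^ i) = 0 then ((p : ℂ) - 1) else -1) := by
      intro i; rw [hptw]
    rw [Finset.sum_congr rfl fun i _ => this i]
    rw [← hdN, aux_per _ N (by
      intro i
      rw [pow_add, hvFN, mul_one]) d, nsmul_eq_mul]
  -- ## Step 3 : trace of roots of unity
  have h2N : 2 ∣ N := by rw [hN]; exact dvd_mul_right 2 _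
  have hlN : ℓ ∣ N := by rw [hN]; exact Dvd.dvd.mul_left (dvd_pow_self ℓ (by omega)) 2
  have h2lN : 2 * ℓ ∣ N := by rw [hN]; exact mul_dvd_mul_left 2 (dvd_pow_self ℓ (by omega))
  have hcop : ∀ k : ℕ, Nat.Coprime k N ↔ ¬ 2 ∣ k ∧ ¬ ℓ ∣ k := by
    intro k
    have e2 : Nat.Coprime k 2 ↔ ¬ 2 ∣ k :=
      Nat.coprime_comm.trans (Nat.Prime.coprime_iff_not_dvd Nat.prime_two)
    have el : Nat.Coprime k ℓ ↔ ¬ ℓ ∣ k :=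
      Nat.coprime_comm.trans (Nat.Prime.coprime_iff_not_dvd hℓ)
    rw [hN, Nat.coprime_mul_iff_right, Nat.coprime_pow_right_iff (by omega), e2, el]
  have h2ldvd : ∀ k : ℕ, 2 * ℓ ∣ k ↔ 2 ∣ k ∧ ℓ ∣ k := by
    intro k
    constructor
    · intro h
      exact ⟨(dvd_mul_right 2 ℓ).trans h, (dvd_mul_left ℓ 2).trans h⟩
    · rintro ⟨h1, h2⟩
      exact Nat.Coprime.mul_dvd_of_dvd_of_dvd
        ((Nat.coprime_primes Nat.prime_two hℓ).mpr (Ne.symm hℓ2)) h1 h2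
  -- the unit p in ZMod N
  have hPunit : IsUnit (p : ZMod N) := by
    apply IsUnit.of_pow_eq_one (n := e)
    · rw [he, ← hprim]; exact pow_orderOf_eq_one _
    · omega
  have hTr : ∀ j : ℕ, algebraMap (ZMod p) F (Algebra.trace (ZMod p) F (vF ^ j)) =
      (if vF ^ j = 1 then ((N : ℕ) : F) else 0)
      - (if (vF ^ j) ^ 2 = 1 then ((N / 2 : ℕ) : F) else 0)
      - (if (vF ^ j) ^ ℓ = 1 then ((N / ℓ : ℕ) : F) else 0)
      + (if (vF ^ j) ^ (2 * ℓ) = 1 then ((N / (2 * ℓ) : ℕ) : F) else 0) := by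
    intro j
    set u : F := vF ^ j with hu
    have huN : u ^ N = 1 := by rw [hu, ← pow_mul, mul_comm, pow_mul, hvFN, one_pow]
    rw [aux_trace p e q F hq hF hepos u]
    set P : (ZMod N)ˣ := hPunit.unit with hP
    have hPord : orderOf P = Fintype.card (ZMod N)ˣ := by
      rw [← orderOf_units, hPunit.unit_spec, hprim, ZMod.card_units_eq_totient]
    have hsum1 : ∑ a : (ZMod N)ˣ, u ^ (a : ZMod N).val
        = ∑ i ∈ Finset.range e, u ^ p ^ i := by
      rw [aux_gen P hPord, ZMod.card_units_eq_totient, ← he]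
      apply Finset.sum_congr rfl
      intro i _
      have hval : ((P ^ i : (ZMod N)ˣ) : ZMod N).val = p ^ i % N := by
        rw [Units.val_pow_eq_pow_val, hPunit.unit_spec, ← Nat.cast_pow, ZMod.val_natCast]
      rw [hval, aux_powmod u N _ huN]
    rw [← hsum1]
    exact aux_units_sum N ℓ h2N hlN h2lN (by omega) hcop h2ldvd u huN
  -- divisibility reformulations
  have hc1 : ∀ j : ℕ, vF ^ j = 1 ↔ N ∣ j := by
    intro j; rw [← orderOf_dvd_iff_pow_eq_one, hvFord]
  have hc2 : ∀ j : ℕ, (vF ^ j) ^ 2 = 1 ↔ ℓ ^ m ∣ j := by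
    intro j
    rw [← pow_mul, ← orderOf_dvd_iff_pow_eq_one, hvFord, hN, mul_comm j 2]
    exact Nat.mul_dvd_mul_iff_left (by omega)
  have hc3 : ∀ j : ℕ, (vF ^ j) ^ ℓ = 1 ↔ 2 * r ∣ j := by
    intro j
    rw [← pow_mul, ← orderOf_dvd_iff_pow_eq_one, hvFord]
    have hNl : N = ℓ * (2 * r) := by rw [hN, hℓm]; ring
    rw [hNl, mul_comm j ℓ]
    exact Nat.mul_dvd_mul_iff_left (by omega : 0 < ℓ)
  have hc4 : ∀ j : ℕ, (vF ^ j) ^ (2 * ℓ) = 1 ↔ r ∣ j := by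
    intro j
    rw [← pow_mul, ← orderOf_dvd_iff_pow_eq_one, hvFord]
    have hN2l : N = (2 * ℓ) * r := by rw [hNr]; ring
    rw [hN2l, mul_comm j (2 * ℓ)]
    exact Nat.mul_dvd_mul_iff_left (by omega : 0 < 2 * ℓ)
  -- quotient values
  have hNd2 : N / 2 = ℓ ^ m := by rw [hN]; exact Nat.mul_div_cancel_left _ (by omega)
  have hNdl : N / ℓ = 2 * r := by
    have : N = ℓ * (2 * r) := by rw [hN, hℓm]; ring
    rw [this]; exact Nat.mul_div_cancel_left _ (by omega : 0 < ℓ)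
  have hNd2l : N / (2 * ℓ) = r := by
    have : N = (2 * ℓ) * r := by rw [hNr]; ring
    rw [this]; exact Nat.mul_div_cancel_left _ (by omega : 0 < 2 * ℓ)
  -- cast facts
  have hrne : ((r : ℕ) : ZMod p) ≠ 0 := by
    rw [hr]
    push_cast
    apply pow_ne_zero
    intro h
    have := (ZMod.natCast_eq_zero_iff ℓ p).mp h
    rcases (Nat.prime_dvd_prime_iff_eq hp hℓ).mp this with h'
    exact hℓp h'.symm
  have he_cast : ((e : ℕ) : ZMod p) = ((ℓ : ZMod p) - 1) * (ℓ : ZMod p) ^ (m - 1) := by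
    rw [he', Nat.cast_mul, Nat.cast_pow, Nat.cast_sub hℓ1.le, Nat.cast_one]
  have he_zero_iff : (((e : ℕ) : ZMod p) = 0) ↔ (ℓ : ZMod p) = 1 := by
    rw [he_cast, mul_eq_zero]
    constructor
    · rintro (h | h)
      · rwa [sub_eq_zero] at h
      · exact absurd h (by rw [hr] at hrne; push_cast at hrne; exact hrne)
    · intro h; left; rw [h, sub_self]
  -- map-zero transfers
  have hmap0 : ∀ t : ZMod p, algebraMap (ZMod p) F t = 0 ↔ t = 0 := by
    intro t
    constructor
    · intro h; apply hinj; rw [h, map_zero]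
    · intro h; rw [h, map_zero]
  have hcastF : ∀ n : ℕ, ((n : ℕ) : F) = algebraMap (ZMod p) F ((n : ℕ) : ZMod p) := by
    intro n; rw [map_natCast]
  -- nat identities
  have hnat1 : e + ℓ ^ m + 2 * r = N + r := by
    have h1 : e = ℓ * r - r := by rw [he', Nat.sub_mul, one_mul]
    have h2 : r ≤ ℓ * r := Nat.le_mul_of_pos_left r (by omega)
    rw [hN, hℓm]
    omega
  have hnat2 : e + r = ℓ ^ m := by
    have h1 : e = ℓ * r - r := by rw [he', Nat.sub_mul, one_mul]
    have h2 : r ≤ ℓ * r := Nat.le_mul_of_pos_left r (by omega)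
    rw [hℓm]
    omega
  -- ## per-j characterization of nonzero trace
  have hnotchar : ∀ j : ℕ, j < N →
      (¬ (Algebra.trace (ZMod p) F (vF ^ j) = 0) ↔
        (r ∣ j ∧ ((ℓ : ZMod p) = 1 → (j ≠ 0 ∧ j ≠ ℓ ^ m)))) := by
    intro j hj
    have hrF : ((r : ℕ) : F) ≠ 0 := by
      rw [hcastF r]
      intro hh
      exact hrne ((hmap0 _).mp hh)
    have hval := hTr j
    simp only [hc1 j, hc2 j, hc3 j, hc4 j, hNd2, hNdl, hNd2l] at hval
    have h0 := (hmap0 (Algebra.trace (ZMod p) F (vF ^ j))).symm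
    rw [hval] at h0
    rw [h0]
    by_cases hrj : r ∣ j
    · obtain ⟨k, rfl⟩ := hrj
      have hk2l : k < 2 * ℓ := by
        rw [hNr] at hj
        exact lt_of_mul_lt_mul_left hj (Nat.zero_le r)
      have d1 : N ∣ r * k ↔ k = 0 := by
        constructor
        · intro h
          have h2 := Nat.eq_zero_of_dvd_of_lt h hj
          rcases Nat.mul_eq_zero.mp h2 with h3 | h3
          · omega
          · exact h3
        · rintro rfl; simp
      have d2 : ℓ ^ m ∣ r * k ↔ ℓ ∣ k := by
        rw [hℓm, mul_comm ℓ r]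
        exact Nat.mul_dvd_mul_iff_left hrpos
      have d3 : 2 * r ∣ r * k ↔ 2 ∣ k := by
        rw [mul_comm 2 r]
        exact Nat.mul_dvd_mul_iff_left hrpos
      have eq0 : r * k = 0 ↔ k = 0 := by
        rw [Nat.mul_eq_zero]; omega
      have eqlm : r * k = ℓ ^ m ↔ k = ℓ := by
        rw [hℓm, mul_comm ℓ r]
        exact ⟨fun h => Nat.eq_of_mul_eq_mul_left hrpos h, fun h => by rw [h]⟩
      simp only [d1, d2, d3, eq0, eqlm, dvd_mul_right, true_and, if_true]
      by_cases hk0 : k = 0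
      · subst hk0
        simp only [if_pos rfl, dvd_zero, if_true]
        have hE : ((N : ℕ) : F) - ((ℓ ^ m : ℕ) : F) - ((2 * r : ℕ) : F) + ((r : ℕ) : F)
            = ((e : ℕ) : F) := by
          have hc := congrArg (Nat.cast : ℕ → F) hnat1
          push_cast at hc ⊢
          linear_combination -hc
        rw [hE, hcastF e, hmap0, he_zero_iff]
        constructor
        · intro h hl1; exact absurd hl1 h
        · intro h hl1; exact (h hl1).1 (mul_zero r)
      · by_cases hkl : k = ℓ
        · rw [hkl]
          have hld : ℓ ∣ ℓ := dvd_refl ℓ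
          simp only [if_neg (show ¬ ℓ = 0 by omega), if_pos hld, if_neg hℓodd]
          have hE : (0 : F) - ((ℓ ^ m : ℕ) : F) - 0 + ((r : ℕ) : F) = -((e : ℕ) : F) := by
            have hc := congrArg (Nat.cast : ℕ → F) hnat2
            push_cast at hc ⊢
            linear_combination hc
          rw [hE, neg_eq_zero, hcastF e, hmap0, he_zero_iff]
          constructor
          · intro h hl1; exact absurd hl1 h
          · intro h hl1; exact (h hl1).2 (by rw [hℓm]; ring)
        · have hkl' : ¬ ℓ ∣ k := by
            rintro ⟨t, rfl⟩
            have ht2 : t < 2 := by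
              by_contra hcon
              push_neg at hcon
              have : 2 * ℓ ≤ ℓ * t := by
                calc 2 * ℓ = ℓ * 2 := by ring
                  _ ≤ ℓ * t := Nat.mul_le_mul_left ℓ hcon
              omega
            interval_cases t
            · omega
            · omega
          simp only [if_neg hk0, if_neg hkl']
          have hiff : ((ℓ : ZMod p) = 1 → (r * k ≠ 0 ∧ r * k ≠ ℓ ^ m)) :=
            fun _ => ⟨fun h => hk0 (eq0.mp h), fun h => hkl (eqlm.mp h)⟩
          by_cases h2k : 2 ∣ k
          · simp only [if_pos h2k]
            have hE : (0 : F) - 0 - ((2 * r : ℕ) : F) + ((r : ℕ) : F) = -((r : ℕ) : F) := by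
              push_cast; ring
            rw [hE, neg_eq_zero]
            exact ⟨fun _ => hiff, fun _ => hrF⟩
          · simp only [if_neg h2k]
            have hE : (0 : F) - 0 - 0 + ((r : ℕ) : F) = ((r : ℕ) : F) := by ring
            rw [hE]
            exact ⟨fun _ => hiff, fun _ => hrF⟩
    · have hNj : ¬ N ∣ j := fun h => hrj (dvd_trans ⟨2 * ℓ, hNr⟩ h)
      have hlmj : ¬ ℓ ^ m ∣ j := fun h => hrj (dvd_trans ⟨ℓ, by rw [hℓm]; ring⟩ h)
      have h2rj : ¬ 2 * r ∣ j := fun h => hrj ((dvd_mul_left r 2).trans h)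
      simp only [if_neg hNj, if_neg hlmj, if_neg h2rj, if_neg hrj]
      simp [hrj]
  -- ## Step 4 : counting
  set count : ℕ := ((Finset.range N).filter
    (fun j => Algebra.trace (ZMod p) F (vF ^ j) = 0)).card with hcount
  have hsum3 : w 0 0 = (d : ℂ) * ((p : ℂ) * (count : ℂ) - (N : ℂ)) := by
    rw [step2]
    congr 1
    have hptw : ∀ j : ℕ,
        (if Algebra.trace (ZMod p) F (vF ^ j) = 0 then ((p : ℂ) - 1) else -1)
        = (if Algebra.trace (ZMod p) F (vF ^ j) = 0 then (p : ℂ) else 0) - 1 := by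
      intro j; split_ifs <;> ring
    rw [Finset.sum_congr rfl fun j _ => hptw j, Finset.sum_sub_distrib, ← Finset.sum_filter,
      Finset.sum_const, Finset.sum_const, nsmul_eq_mul, nsmul_eq_mul, ← hcount,
      Finset.card_range, mul_one]
    ring
  -- multiples of r in range N
  have himage_card : ((Finset.range (2 * ℓ)).image (fun k => r * k)).card = 2 * ℓ := by
    rw [Finset.card_image_of_injective _ (fun a b h => Nat.eq_of_mul_eq_mul_left hrpos h),
      Finset.card_range]
  have himage_mem : ∀ j : ℕ, j ∈ (Finset.range (2 * ℓ)).image (fun k => r * k)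
      ↔ (j < N ∧ r ∣ j) := by
    intro j
    simp only [Finset.mem_image, Finset.mem_range]
    constructor
    · rintro ⟨k, hk, rfl⟩
      constructor
      · rw [hNr]; exact (Nat.mul_lt_mul_left hrpos).mpr hk
      · exact dvd_mul_right r k
    · rintro ⟨hjN, k, rfl⟩
      refine ⟨k, ?_, rfl⟩
      rw [hNr] at hjN
      exact lt_of_mul_lt_mul_left hjN (Nat.zero_le r)
  constructor
  -- ## case ℓ ≡ 1 mod p
  · intro hl1
    have hcnt : count + 2 * ℓ = N + 2 := by
      have hfneg : (Finset.range N).filter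
          (fun j => ¬ (Algebra.trace (ZMod p) F (vF ^ j) = 0))
          = ((Finset.range (2 * ℓ)).image (fun k => r * k)) \ {0, ℓ ^ m} := by
        ext j
        simp only [Finset.mem_filter, Finset.mem_range, Finset.mem_sdiff, himage_mem,
          Finset.mem_insert, Finset.mem_singleton]
        constructor
        · rintro ⟨hjN, hnz⟩
          obtain ⟨hdvd, himp⟩ := (hnotchar j hjN).mp hnz
          obtain ⟨h1, h2⟩ := himp hl1
          refine ⟨⟨hjN, hdvd⟩, ?_⟩
          rintro (h | h)
          · exact h1 h
          · exact h2 h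
        · rintro ⟨⟨hjN, hdvd⟩, hne⟩
          exact ⟨hjN, (hnotchar j hjN).mpr
            ⟨hdvd, fun _ => ⟨fun h => hne (Or.inl h), fun h => hne (Or.inr h)⟩⟩⟩
      have hsub : ({0, ℓ ^ m} : Finset ℕ) ⊆ (Finset.range (2 * ℓ)).image (fun k => r * k) := by
        intro x hx
        rcases Finset.mem_insert.mp hx with rfl | hx
        · exact (himage_mem 0).mpr ⟨hNpos, dvd_zero r⟩
        · rw [Finset.mem_singleton] at hx
          subst hx
          refine (himage_mem _).mpr ⟨?_, ⟨ℓ, by rw [hℓm]; ring⟩⟩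
          rw [hN]
          have : 0 < ℓ ^ m := by positivity
          omega
      have hcard2 : ({0, ℓ ^ m} : Finset ℕ).card = 2 := by
        rw [Finset.card_insert_of_notMem (by
          simp only [Finset.mem_singleton]
          intro h
          have : 0 < ℓ ^ m := by positivity
          omega), Finset.card_singleton]
      have hcards := Finset.card_filter_add_card_filter_not
        (s := Finset.range N) (p := fun j => Algebra.trace (ZMod p) F (vF ^ j) = 0)
      rw [Finset.card_range, ← hcount, hfneg, Finset.card_sdiff_of_subset hsub, hcard2, himage_card]
        at hcards
      have h2l2 : 2 ≤ 2 * ℓ := by omega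
      omega
    have hdiv : (q - 1) / ℓ ^ m = 2 * d := by
      have h1 : q - 1 = 2 * d * ℓ ^ m := by rw [← hdN, hN]; ring
      rw [h1, Nat.mul_div_cancel _ (by positivity)]
    rw [hsum3, hdiv]
    have hcast : (count : ℂ) + 2 * ℓ = (N : ℂ) + 2 := by exact_mod_cast congrArg (Nat.cast : ℕ → ℂ) hcnt
    have hNcast : (N : ℂ) = 2 * (ℓ : ℂ) ^ m := by rw [hN]; push_cast; ring
    push_cast
    linear_combination (d : ℂ) * (p : ℂ) * hcast + (d : ℂ) * ((p : ℂ) - 1) * hNcast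
  -- ## case ℓ ≢ 1 mod p
  · intro hl1
    have hcnt : count + 2 * ℓ = N := by
      have hfneg : (Finset.range N).filter
          (fun j => ¬ (Algebra.trace (ZMod p) F (vF ^ j) = 0))
          = (Finset.range (2 * ℓ)).image (fun k => r * k) := by
        ext j
        simp only [Finset.mem_filter, Finset.mem_range, himage_mem]
        constructor
        · rintro ⟨hjN, hnz⟩
          exact ⟨hjN, ((hnotchar j hjN).mp hnz).1⟩
        · rintro ⟨hjN, hdvd⟩
          exact ⟨hjN, (hnotchar j hjN).mpr ⟨hdvd, fun h => absurd h hl1⟩⟩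
      have hcards := Finset.card_filter_add_card_filter_not
        (s := Finset.range N) (p := fun j => Algebra.trace (ZMod p) F (vF ^ j) = 0)
      rw [Finset.card_range, ← hcount, hfneg, himage_card] at hcards
      omega
    have hdiv : (q - 1) / ℓ ^ (m - 1) = 2 * ℓ * d := by
      have h1 : q - 1 = 2 * ℓ * d * ℓ ^ (m - 1) := by rw [← hdN, hNr, hr]; ring
      rw [h1, Nat.mul_div_cancel _ (by rw [← hr]; omega)]
    rw [hsum3, hdiv]
    have hcast : (count : ℂ) + 2 * ℓ = (N : ℂ) := by exact_mod_cast congrArg (Nat.cast : ℕ → ℂ) hcnt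
    have hNcast : (N : ℂ) = 2 * (ℓ : ℂ) * (ℓ : ℂ) ^ (m - 1) := by
      rw [hNr, hr]; push_cast; ring
    push_cast
    linear_combination (d : ℂ) * (p : ℂ) * hcast + (d : ℂ) * ((p : ℂ) - 1) * hNcast
end

section
/- Let α ∈ F_p, β ∈ F_q, D = {d_1,…,d_n}, and for γ ∈ F_q^* let c_γ = (Tr(d_1·γ),…,Tr(d_n·γ)) ∈ F_p^n. Then the Hamming weight of c_γ satisfies wt(c_γ) = (1/p²)·( (p−1)q + (p−1)·w(α,β) − Σ_{z ∈ F_p^*} w(α, β + z·γ) ). -/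
open Finset

section Aux

variable {p : ℕ} [hp : Fact p.Prime] {ζ : ℂ}

lemma my_pow_val_mod (h1 : ζ ^ p = 1) (k : ℕ) : ζ ^ (k % p) = ζ ^ k := by
  conv_rhs => rw [← Nat.mod_add_div k p, pow_add, pow_mul, h1, one_pow, mul_one]

lemma my_pow_val_add (h1 : ζ ^ p = 1) (a b : ZMod p) :
    ζ ^ (a + b).val = ζ ^ a.val * ζ ^ b.val := by
  rw [ZMod.val_add, my_pow_val_mod h1, pow_add]

lemma my_pow_val_eq_one_iff (hζ : IsPrimitiveRoot ζ p) (a : ZMod p) :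
    ζ ^ a.val = 1 ↔ a = 0 := by
  rw [hζ.pow_eq_one_iff_dvd]
  constructor
  · intro h
    have := Nat.eq_zero_of_dvd_of_lt h
    have hlt := ZMod.val_lt a
    have : a.val = 0 := by
      rcases Nat.eq_zero_or_pos a.val with h0 | h0
      · exact h0
      · exact absurd (Nat.le_of_dvd h0 h) (by omega)
    exact (ZMod.val_eq_zero a).mp this
  · rintro rfl; simp

lemma my_sum_zmod (hζ : IsPrimitiveRoot ζ p) : ∑ t : ZMod p, ζ ^ t.val = 0 := by
  have h2 : 1 < p := hp.out.one_lt
  rw [← hζ.geom_sum_eq_zero h2]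
  refine Finset.sum_nbij' (fun t => t.val) (fun i => (i : ZMod p)) ?_ ?_ ?_ ?_ ?_
  · intro a _; simpa [Finset.mem_range] using ZMod.val_lt a
  · intro a _; exact Finset.mem_univ _
  · intro a _; simp [ZMod.natCast_val, ZMod.cast_id]
  · intro i hi; exact ZMod.val_cast_of_lt (Finset.mem_range.mp hi)
  · intro a _; rfl

lemma my_sum_zmod_mul (hζ : IsPrimitiveRoot ζ p) {c : ZMod p} (hc : c ≠ 0) :
    ∑ t : ZMod p, ζ ^ (t * c).val = 0 := by
  rw [← my_sum_zmod hζ]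
  exact Fintype.sum_equiv (Equiv.mulRight₀ c hc) _ _ (fun t => rfl)

lemma my_sum_units_field {K : Type*} [Field K] [Fintype K] [DecidableEq K] (g : K → ℂ) :
    ∑ u : Kˣ, g (u : K) = ∑ x ∈ Finset.univ.filter (fun x : K => x ≠ 0), g x := by
  rw [Finset.sum_subtype (p := fun x : K => x ≠ 0) (Finset.univ.filter (fun x : K => x ≠ 0))
    (by intro x; simp) g]
  exact Fintype.sum_equiv unitsEquivNeZero _ _ (fun u => rfl)


lemma my_card_ne_zero {K : Type*} [Field K] [Fintype K] [DecidableEq K] :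
    (Finset.univ.filter (fun x : K => x ≠ 0)).card = Fintype.card K - 1 := by
  rw [Finset.filter_ne', Finset.card_erase_of_mem (Finset.mem_univ _), Finset.card_univ]

lemma my_units_sum (hζ : IsPrimitiveRoot ζ p) (c : ZMod p) :
    ∑ y : (ZMod p)ˣ, ζ ^ ((y : ZMod p) * c).val = if c = 0 then (p : ℂ) - 1 else -1 := by
  rw [my_sum_units_field (fun x : ZMod p => ζ ^ (x * c).val)]
  by_cases hc : c = 0
  · subst hc
    simp only [mul_zero, ZMod.val_zero, pow_zero, if_true, Finset.sum_const]
    rw [my_card_ne_zero, ZMod.card, nsmul_eq_mul, mul_one,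
      Nat.cast_sub hp.out.one_le, Nat.cast_one]
  · rw [if_neg hc, Finset.filter_ne', Finset.sum_erase_eq_sub (Finset.mem_univ _),
      my_sum_zmod_mul hζ hc]
    simp

lemma my_sum_trace (hζ : IsPrimitiveRoot ζ p) (F : Type*) [Field F] [Fintype F]
    [Algebra (ZMod p) F] :
    ∑ x : F, ζ ^ ((Algebra.trace (ZMod p) F) x).val = 0 := by
  have h1 : ζ ^ p = 1 := hζ.pow_eq_one
  obtain ⟨b, hb⟩ : ∃ b : F, Algebra.trace (ZMod p) F b ≠ 0 := by
    have htr := (traceForm_nondegenerate (ZMod p) F).1 1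
    simp_rw [Algebra.traceForm_apply, one_mul] at htr
    by_contra! hf
    exact one_ne_zero (htr hf)
  set T := Algebra.trace (ZMod p) F with hT
  set Ssum := ∑ x : F, ζ ^ (T x).val with hS
  have e1 : Ssum = ∑ x : F, ζ ^ (T (x + b)).val :=
    (Fintype.sum_equiv (Equiv.addRight b) (fun x => ζ ^ (T (x + b)).val)
      (fun x => ζ ^ (T x).val) (fun x => rfl)).symm
  have e2 : Ssum = ζ ^ (T b).val * Ssum := by
    conv_lhs => rw [e1]
    simp_rw [map_add, my_pow_val_add h1]
    rw [← Finset.sum_mul, mul_comm]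
  have hψ : ζ ^ (T b).val ≠ 1 := fun h => hb ((my_pow_val_eq_one_iff hζ _).mp h)
  have e3 : (1 - ζ ^ (T b).val) * Ssum = 0 := by linear_combination e2
  rcases mul_eq_zero.mp e3 with h | h
  · exact absurd (by linear_combination -h) hψ
  · exact h

lemma my_sum_trace_mul (hζ : IsPrimitiveRoot ζ p) (F : Type*) [Field F] [Fintype F]
    [Algebra (ZMod p) F] {v : F} (hv : v ≠ 0) :
    ∑ x : F, ζ ^ ((Algebra.trace (ZMod p) F) (v * x)).val = 0 := by
  rw [← my_sum_trace hζ F]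
  exact Fintype.sum_equiv (Equiv.mulLeft₀ v hv) _ _ (fun x => rfl)

lemma my_sum_trace_mul_ne (hζ : IsPrimitiveRoot ζ p) (F : Type*) [Field F] [Fintype F]
    [DecidableEq F] [Algebra (ZMod p) F] {v : F} (hv : v ≠ 0) :
    ∑ x ∈ Finset.univ.filter (fun x : F => x ≠ 0),
      ζ ^ ((Algebra.trace (ZMod p) F) (v * x)).val = -1 := by
  rw [Finset.filter_ne', Finset.sum_erase_eq_sub (Finset.mem_univ _),
    my_sum_trace_mul hζ F hv]
  simp

end Aux

theorem stmt_14
    (p ℓ m : ℕ) [Fact (Nat.Prime p)] (hp2 : p ≠ 2)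
    (hℓ : Nat.Prime ℓ) (hℓp : ℓ ≠ p) (hm : 0 < m)
    (N : ℕ) (hN : N = 2 * ℓ ^ m)
    (hprim : orderOf (p : ZMod N) = Nat.totient N)
    (e : ℕ) (he : e = Nat.totient N) (he' : e = (ℓ - 1) * ℓ ^ (m - 1))
    (q : ℕ) (hq : q = p ^ e)
    (F : Type) [Field F] [Fintype F] [DecidableEq F] [Algebra (ZMod p) F]
    (hF : Fintype.card F = q)
    (ζ : ℂ) (hζ : ζ = Complex.exp (2 * (Real.pi : ℂ) * Complex.I / (p : ℂ)))
    (χ : F → ℂ) (hχ : ∀ c : F, χ c = ζ ^ (Algebra.trace (ZMod p) F c).val)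
    (S : F → F → ℂ)
    (hS : ∀ a b : F, S a b = ∑ x : Fˣ, χ (a * (x : F) ^ ((q - 1) / N) + b * (x : F)))
    (w : ZMod p → F → ℂ)
    (hw : ∀ (α : ZMod p) (x : F), w α x =
      ∑ y : (ZMod p)ˣ, ζ ^ (((-(y : ZMod p)) * α).val) *
        S (algebraMap (ZMod p) F (y : ZMod p)) (algebraMap (ZMod p) F (y : ZMod p) * x))
    (α : ZMod p) (β : F)
    (D : Finset F)
    (hD : D = Finset.univ.filter (fun x : F =>
      x ≠ 0 ∧ Algebra.trace (ZMod p) F (x ^ ((q - 1) / N) + β * x) = α))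
    (γ : F) (hγ : γ ≠ 0) :
    (((D.filter (fun d => Algebra.trace (ZMod p) F (d * γ) ≠ 0)).card : ℂ)) =
      1 / (p : ℂ) ^ 2 * (((p : ℂ) - 1) * (q : ℂ) + ((p : ℂ) - 1) * w α β -
        ∑ z : (ZMod p)ˣ, w α (β + algebraMap (ZMod p) F (z : ZMod p) * γ)) := by
  have hppos : 0 < p := (Fact.out : p.Prime).pos
  have hprimζ : IsPrimitiveRoot ζ p := by
    rw [hζ]; exact Complex.isPrimitiveRoot_exp p hppos.ne'
  have hp1 : ζ ^ p = 1 := hprimζ.pow_eq_one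
  have hpc : (p : ℂ) ≠ 0 := Nat.cast_ne_zero.mpr hppos.ne'
  have hq1 : 1 ≤ q := by rw [hq]; exact Nat.one_le_pow _ _ hppos
  set T := Algebra.trace (ZMod p) F with hT
  set M := (q - 1) / N with hM
  set U := Finset.univ.filter (fun x : F => x ≠ 0) with hU
  set SA := ∑ u ∈ U, (if T (u ^ M + β * u) = α ∧ T (γ * u) ≠ 0 then (1:ℂ) else 0) with hSA
  set SB := ∑ u ∈ U, (if T (u ^ M + β * u) = α ∧ T (γ * u) = 0 then (1:ℂ) else 0) with hSB
  set SC := ∑ u ∈ U, (if T (u ^ M + β * u) ≠ α ∧ T (γ * u) ≠ 0 then (1:ℂ) else 0) with hSC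
  have hcardU : ((U.card : ℕ) : ℂ) = (q:ℂ) - 1 := by
    rw [hU, my_card_ne_zero, hF, Nat.cast_sub hq1, Nat.cast_one]
  -- key formula for w
  have key : ∀ x : F, w α x =
      ∑ u ∈ U, (if T (u ^ M + x * u) = α then (p:ℂ) - 1 else -1) := by
    intro x
    rw [hw]
    have step1 : ∀ y : (ZMod p)ˣ,
        ζ ^ ((-(y:ZMod p) * α).val) * S (algebraMap (ZMod p) F (y:ZMod p))
          (algebraMap (ZMod p) F (y:ZMod p) * x)
        = ∑ u : Fˣ, ζ ^ (((y:ZMod p) * (T ((u:F) ^ M + x * (u:F)) - α)).val) := by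
      intro y
      rw [hS, Finset.mul_sum]
      refine Finset.sum_congr rfl fun u _ => ?_
      rw [hχ]
      have harg : algebraMap (ZMod p) F (y:ZMod p) * (u:F) ^ M
          + algebraMap (ZMod p) F (y:ZMod p) * x * (u:F)
          = (y:ZMod p) • ((u:F) ^ M + x * (u:F)) := by
        rw [Algebra.smul_def]; ring
      rw [harg, map_smul, smul_eq_mul, ← my_pow_val_add hp1]
      congr 2
      ring
    rw [Finset.sum_congr rfl fun y _ => step1 y, Finset.sum_comm]
    have step2 : ∀ u : Fˣ,
        ∑ y : (ZMod p)ˣ, ζ ^ (((y:ZMod p) * (T ((u:F) ^ M + x * (u:F)) - α)).val)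
        = if T ((u:F) ^ M + x * (u:F)) = α then (p:ℂ) - 1 else -1 := by
      intro u
      rw [my_units_sum hprimζ]
      simp [sub_eq_zero]
    rw [Finset.sum_congr rfl fun u _ => step2 u]
    rw [hU]
    exact my_sum_units_field (fun v : F => if T (v ^ M + x * v) = α then (p:ℂ) - 1 else -1)
  -- h1 : the card equals SA
  have h1 : ((D.filter (fun d => T (d * γ) ≠ 0)).card : ℂ) = SA := by
    rw [hD, Finset.filter_filter, Finset.card_filter, Nat.cast_sum, hSA, hU,
      Finset.sum_filter]
    refine Finset.sum_congr rfl fun x _ => ?_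
    rw [mul_comm x γ]
    by_cases hx0 : x = 0
    · rw [if_neg (fun h => h.1.1 hx0), if_neg (by simpa using hx0), Nat.cast_zero]
    · rw [if_pos hx0]
      by_cases hg : T (x ^ M + β * x) = α <;> by_cases hd : T (γ * x) = 0
      · rw [if_neg (fun h => h.2 hd), if_neg (fun h => h.2 hd), Nat.cast_zero]
      · rw [if_pos ⟨⟨hx0, hg⟩, hd⟩, if_pos ⟨hg, hd⟩, Nat.cast_one]
      · rw [if_neg (fun h => hg h.1.2), if_neg (fun h => hg h.1), Nat.cast_zero]
      · rw [if_neg (fun h => hg h.1.2), if_neg (fun h => hg h.1), Nat.cast_zero]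
  -- h2
  have h2 : w α β = (p:ℂ) * (SA + SB) - ((q:ℂ) - 1) := by
    rw [key β]
    have step : ∀ u ∈ U, (if T (u ^ M + β * u) = α then (p:ℂ) - 1 else -1)
        = (p:ℂ) * ((if T (u ^ M + β * u) = α ∧ T (γ * u) ≠ 0 then (1:ℂ) else 0)
          + (if T (u ^ M + β * u) = α ∧ T (γ * u) = 0 then (1:ℂ) else 0)) - 1 := by
      intro u _
      by_cases hg : T (u ^ M + β * u) = α <;> by_cases hd : T (γ * u) = 0
      · rw [if_pos hg, if_neg (fun h => h.2 hd), if_pos ⟨hg, hd⟩]; ring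
      · rw [if_pos hg, if_pos ⟨hg, hd⟩, if_neg (fun h => hd h.2)]; ring
      · rw [if_neg hg, if_neg (fun h => hg h.1), if_neg (fun h => hg h.1)]; ring
      · rw [if_neg hg, if_neg (fun h => hg h.1), if_neg (fun h => hg h.1)]; ring
    rw [Finset.sum_congr rfl step, Finset.sum_sub_distrib, Finset.sum_const,
      ← Finset.mul_sum, Finset.sum_add_distrib, ← hSA, ← hSB, nsmul_eq_mul, mul_one, hcardU]
  -- inner sum over z for h3
  have hcardZU : ((Fintype.card (ZMod p)ˣ : ℕ) : ℂ) = (p:ℂ) - 1 := by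
    rw [ZMod.card_units_eq_totient, Nat.totient_prime (Fact.out : p.Prime),
      Nat.cast_sub (Fact.out : p.Prime).one_le, Nat.cast_one]
  have inner : ∀ c d0 : ZMod p,
      (∑ z : (ZMod p)ˣ, if c + (z:ZMod p) * d0 = α then (p:ℂ) - 1 else -1)
      = (p:ℂ) * (((p:ℂ) - 1) * (if c = α ∧ d0 = 0 then (1:ℂ) else 0)
          + (if c ≠ α ∧ d0 ≠ 0 then (1:ℂ) else 0)) - ((p:ℂ) - 1) := by
    intro c d0
    by_cases hd0 : d0 = 0
    · subst hd0
      simp only [mul_zero, add_zero]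
      rw [Finset.sum_const, Finset.card_univ, nsmul_eq_mul, hcardZU]
      by_cases hc : c = α
      · rw [if_pos hc, if_pos (show c = α ∧ True from ⟨hc, trivial⟩),
          if_neg (fun h : c ≠ α ∧ (0:ZMod p) ≠ 0 => h.1 hc)]
        ring
      · rw [if_neg hc, if_neg (fun h : c = α ∧ True => hc h.1),
          if_neg (fun h : c ≠ α ∧ (0:ZMod p) ≠ 0 => h.2 rfl)]
        ring
    · by_cases hc : c = α
      · have hfalse : ∀ z : (ZMod p)ˣ, ¬(c + (z : ZMod p) * d0 = α) := by
          intro z h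
          have h0 : (z : ZMod p) * d0 = 0 := by rw [hc] at h; linear_combination h
          rcases mul_eq_zero.mp h0 with h' | h'
          · exact z.ne_zero h'
          · exact hd0 h'
        rw [Finset.sum_congr rfl (fun z _ => if_neg (hfalse z)), Finset.sum_const,
          Finset.card_univ, nsmul_eq_mul, hcardZU,
          if_neg (fun h : c = α ∧ d0 = 0 => hd0 h.2),
          if_neg (fun h : c ≠ α ∧ d0 ≠ 0 => h.1 hc)]
        ring
      · set z0 : ZMod p := (α - c) * d0⁻¹ with hz0
        have hz0ne : z0 ≠ 0 :=
          mul_ne_zero (sub_ne_zero.mpr (fun h => hc h.symm)) (inv_ne_zero hd0)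
        have hcond : ∀ z : (ZMod p)ˣ, (c + (z : ZMod p) * d0 = α) ↔ z = Units.mk0 z0 hz0ne := by
          intro z
          rw [Units.ext_iff, Units.val_mk0, hz0]
          constructor
          · intro h
            field_simp
            linear_combination h
          · intro h
            rw [h]
            field_simp
            ring
        have step : ∀ z : (ZMod p)ˣ, (if c + (z : ZMod p) * d0 = α then (p:ℂ) - 1 else -1)
            = (if z = Units.mk0 z0 hz0ne then (p:ℂ) else 0) - 1 := by
          intro z
          by_cases h : z = Units.mk0 z0 hz0ne
          · rw [if_pos ((hcond z).mpr h), if_pos h] <;> ring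
          · rw [if_neg (fun hh => h ((hcond z).mp hh)), if_neg h] <;> ring
        rw [Finset.sum_congr rfl (fun z _ => step z), Finset.sum_sub_distrib,
          Finset.sum_ite_eq' Finset.univ (Units.mk0 z0 hz0ne) (fun _ => (p:ℂ)),
          if_pos (Finset.mem_univ _), Finset.sum_const, Finset.card_univ, nsmul_eq_mul,
          mul_one, hcardZU, if_neg (fun h : c = α ∧ d0 = 0 => hd0 h.2),
          if_pos (show c ≠ α ∧ d0 ≠ 0 from ⟨hc, hd0⟩)]
        ring
  -- h3
  have h3 : (∑ z : (ZMod p)ˣ, w α (β + algebraMap (ZMod p) F (z : ZMod p) * γ))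
      = (p:ℂ) * (SC + ((p:ℂ) - 1) * SB) - ((p:ℂ) - 1) * ((q:ℂ) - 1) := by
    have e1 : ∀ z : (ZMod p)ˣ, w α (β + algebraMap (ZMod p) F (z : ZMod p) * γ)
        = ∑ u ∈ U, (if T (u ^ M + β * u) + (z : ZMod p) * T (γ * u) = α
            then (p:ℂ) - 1 else -1) := by
      intro z
      rw [key (β + algebraMap (ZMod p) F (z : ZMod p) * γ)]
      refine Finset.sum_congr rfl fun u _ => ?_
      have harg : T (u ^ M + (β + algebraMap (ZMod p) F (z : ZMod p) * γ) * u)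
          = T (u ^ M + β * u) + (z : ZMod p) * T (γ * u) := by
        have hsp : u ^ M + (β + algebraMap (ZMod p) F (z : ZMod p) * γ) * u
            = (u ^ M + β * u) + (z : ZMod p) • (γ * u) := by
          rw [Algebra.smul_def]; ring
        rw [hsp, map_add, map_smul, smul_eq_mul]
      rw [harg]
    rw [Finset.sum_congr rfl (fun z _ => e1 z), Finset.sum_comm,
      Finset.sum_congr rfl (fun u _ => inner (T (u ^ M + β * u)) (T (γ * u))),
      Finset.sum_sub_distrib, Finset.sum_const, ← Finset.mul_sum, Finset.sum_add_distrib,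
      ← Finset.mul_sum, ← hSB, ← hSC, nsmul_eq_mul, hcardU]
    ring
  -- h4
  have h4 : (p:ℂ) * (SA + SC) = ((p:ℂ) - 1) * (q:ℂ) := by
    have hAC : SA + SC = ((q:ℂ) - 1) - ∑ u ∈ U, (if T (γ * u) = 0 then (1:ℂ) else 0) := by
      rw [hSA, hSC, ← Finset.sum_add_distrib, ← hcardU, Finset.card_eq_sum_ones U,
        Nat.cast_sum, ← Finset.sum_sub_distrib]
      refine Finset.sum_congr rfl fun u _ => ?_
      rw [Nat.cast_one]
      by_cases hg : T (u ^ M + β * u) = α <;> by_cases hd : T (γ * u) = 0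
      · rw [if_neg (fun h : T (u ^ M + β * u) = α ∧ T (γ * u) ≠ 0 => h.2 hd),
          if_neg (fun h : T (u ^ M + β * u) ≠ α ∧ T (γ * u) ≠ 0 => h.2 hd), if_pos hd]
        ring
      · rw [if_pos (show T (u ^ M + β * u) = α ∧ T (γ * u) ≠ 0 from ⟨hg, hd⟩),
          if_neg (fun h : T (u ^ M + β * u) ≠ α ∧ T (γ * u) ≠ 0 => h.1 hg), if_neg hd]
        ring
      · rw [if_neg (fun h : T (u ^ M + β * u) = α ∧ T (γ * u) ≠ 0 => hg h.1),
          if_neg (fun h : T (u ^ M + β * u) ≠ α ∧ T (γ * u) ≠ 0 => h.2 hd), if_pos hd]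
        ring
      · rw [if_neg (fun h : T (u ^ M + β * u) = α ∧ T (γ * u) ≠ 0 => hg h.1),
          if_pos (show T (u ^ M + β * u) ≠ α ∧ T (γ * u) ≠ 0 from ⟨hg, hd⟩), if_neg hd]
        ring
    have hK : (p:ℂ) * ∑ u ∈ U, (if T (γ * u) = 0 then (1:ℂ) else 0) = (q:ℂ) - (p:ℂ) := by
      have orth : ∀ u : F, (p:ℂ) * (if T (γ * u) = 0 then (1:ℂ) else 0)
          = ∑ t : ZMod p, ζ ^ ((t * T (γ * u)).val) := by
        intro u
        by_cases h : T (γ * u) = 0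
        · rw [if_pos h, mul_one, h]
          simp only [mul_zero, ZMod.val_zero, pow_zero, Finset.sum_const, Finset.card_univ,
            ZMod.card, nsmul_eq_mul, mul_one]
        · rw [if_neg h, mul_zero, my_sum_zmod_mul hprimζ h]
      rw [Finset.mul_sum, Finset.sum_congr rfl (fun u _ => orth u), Finset.sum_comm]
      have per_t : ∀ t : ZMod p, (∑ u ∈ U, ζ ^ ((t * T (γ * u)).val))
          = if t = 0 then (q:ℂ) - 1 else -1 := by
        intro t
        by_cases ht : t = 0
        · rw [if_pos ht]
          have hone : ∀ u ∈ U, ζ ^ ((t * T (γ * u)).val) = 1 := by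
            intro u _; rw [ht, zero_mul, ZMod.val_zero, pow_zero]
          rw [Finset.sum_congr rfl hone, Finset.sum_const, nsmul_eq_mul, mul_one, hcardU]
        · rw [if_neg ht]
          have harg : ∀ u ∈ U, ζ ^ ((t * T (γ * u)).val)
              = ζ ^ ((T ((algebraMap (ZMod p) F t * γ) * u)).val) := by
            intro u _
            congr 2
            have hsp : (algebraMap (ZMod p) F t * γ) * u = t • (γ * u) := by
              rw [Algebra.smul_def]; ring
            rw [hsp, map_smul, smul_eq_mul]
          have hv : algebraMap (ZMod p) F t * γ ≠ 0 :=
            mul_ne_zero (fun h => ht ((map_eq_zero (algebraMap (ZMod p) F)).mp h)) hγ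
          rw [Finset.sum_congr rfl harg, hU]
          exact my_sum_trace_mul_ne hprimζ F hv
      rw [Finset.sum_congr rfl (fun t _ => per_t t)]
      have hsplit : ∀ t : ZMod p, (if t = 0 then (q:ℂ) - 1 else -1)
          = (if t = 0 then (q:ℂ) else 0) - 1 := by
        intro t; by_cases h : t = 0 <;> simp [h]
      rw [Finset.sum_congr rfl (fun t _ => hsplit t), Finset.sum_sub_distrib,
        Finset.sum_ite_eq' Finset.univ (0 : ZMod p) (fun _ => (q:ℂ)),
        if_pos (Finset.mem_univ _), Finset.sum_const, Finset.card_univ, ZMod.card,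
        nsmul_eq_mul, mul_one]
    rw [hAC]
    linear_combination -hK
  -- conclusion
  rw [h1, div_mul_eq_mul_div, one_mul, eq_div_iff (pow_ne_zero 2 hpc)]
  linear_combination (-(p:ℂ) + 1) * h2 + h3 + h4
end

section
/- Suppose α ∈ F_p with α ≠ 0, β ∈ F_q with β ≠ 0, and the four elements a_1, a_2, a_3, a_4 of F_p are all nonzero. Then: (1) n = q/p; (2) the map γ ↦ c_γ from F_q to F_p^n is injective (so C_{α,β} has dimension (ℓ−1)ℓ^{m−1}); (3) every γ ∈ F_q^* satisfies wt(c_γ) = q/p or wt(c_γ) = (p−1)q/p²; and (4) #{γ ∈ F_q^* : wt(c_γ) = q/p} = p−1 and #{γ ∈ F_q^* : wt(c_γ) = (p−1)q/p²} = q−p. -/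
open Finset

lemma aux_fiber_card {G H : Type*} [AddCommGroup G] [AddCommGroup H] [Fintype G] [Fintype H]
    [DecidableEq H] (f : G →+ H) (hf : Function.Surjective f) (w : H) :
    (Finset.univ.filter (fun x => f x = w)).card * Fintype.card H = Fintype.card G := by
  classical
  have hfib : ∀ w' : H, (Finset.univ.filter (fun x => f x = w')).card
      = (Finset.univ.filter (fun x => f x = w)).card := by
    intro w'
    obtain ⟨z, hz⟩ := hf (w - w')
    apply Finset.card_bij' (fun a _ => a + z) (fun a _ => a - z)
    · intro a ha
      simp only [Finset.mem_filter, Finset.mem_univ, true_and] at ha ⊢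
      rw [map_add, ha, hz]; abel
    · intro a ha
      simp only [Finset.mem_filter, Finset.mem_univ, true_and] at ha ⊢
      rw [map_sub, ha, hz]; abel
    · intro a _; abel
    · intro a _; abel
  have h1 : Fintype.card G = ∑ b : H, (Finset.univ.filter (fun x => f x = b)).card := by
    rw [← Finset.card_univ]
    exact Finset.card_eq_sum_card_fiberwise (fun x _ => Finset.mem_univ (f x))
  rw [h1, Finset.sum_congr rfl (fun b _ => hfib b), Finset.sum_const, Finset.card_univ,
    smul_eq_mul, mul_comm]

lemma aux_units_enum (N : ℕ) [NeZero N] {p e : ℕ}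
    (hprim : orderOf (p : ZMod N) = Nat.totient N) (he : e = Nat.totient N) :
    ∃ P : (ZMod N)ˣ, ((P : ZMod N) = (p : ZMod N)) ∧
      (∀ i ∈ Finset.range e, ∀ j ∈ Finset.range e, P ^ i = P ^ j → i = j) ∧
      (Finset.range e).image (fun i => P ^ i) = Finset.univ := by
  have hfin : IsOfFinOrder (p : ZMod N) := by
    rw [← orderOf_pos_iff, hprim]
    exact Nat.totient_pos.2 (NeZero.pos N)
  have hP : orderOf hfin.unit = e := by
    rw [← orderOf_units]
    show orderOf ((hfin.unit : ZMod N)) = e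
    rw [show ((hfin.unit : ZMod N)) = (p : ZMod N) from rfl, hprim, he]
  have hinj : ∀ i ∈ Finset.range e, ∀ j ∈ Finset.range e,
      hfin.unit ^ i = hfin.unit ^ j → i = j := by
    intro i hi j hj hij
    refine pow_injOn_Iio_orderOf ?_ ?_ hij
    · simpa [Set.mem_Iio, hP] using Finset.mem_range.mp hi
    · simpa [Set.mem_Iio, hP] using Finset.mem_range.mp hj
  refine ⟨hfin.unit, rfl, hinj, ?_⟩
  apply Finset.eq_univ_of_card
  rw [Finset.card_image_of_injOn fun i hi j hj hij => hinj i hi j hj hij,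
    Finset.card_range, he, ZMod.card_units_eq_totient]

lemma aux_sum_units_eq_zero (N : ℕ) [NeZero N] (hN2 : ¬ (N ∣ 2)) :
    ∑ u : (ZMod N)ˣ, (u : ZMod N) = 0 := by
  apply Finset.sum_ninvolution (fun u => -u)
  · intro u; simp
  · intro u _ heq
    apply hN2
    have h2 : (2 : ZMod N) * (u : ZMod N) = 0 := by
      have := congrArg (fun v : (ZMod N)ˣ => (v : ZMod N)) heq
      simp only [Units.val_neg] at this
      linear_combination -this
    have h0 : (2 : ZMod N) = 0 := by
      calc (2 : ZMod N) = (2 : ZMod N) * ((u : ZMod N) * ((u⁻¹ : (ZMod N)ˣ) : ZMod N)) := by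
            rw [← Units.val_mul, mul_inv_cancel, Units.val_one, mul_one]
        _ = ((2 : ZMod N) * (u : ZMod N)) * ((u⁻¹ : (ZMod N)ˣ) : ZMod N) := by ring
        _ = 0 := by rw [h2, zero_mul]
    have : ((2 : ℕ) : ZMod N) = 0 := by exact_mod_cast h0
    exact (ZMod.natCast_eq_zero_iff 2 N).mp this
  · intro _; exact Finset.mem_univ _
  · intro u; simp

lemma aux_dvd_geom (N : ℕ) [NeZero N] (hN2 : ¬ (N ∣ 2)) {p e : ℕ}
    (hprim : orderOf (p : ZMod N) = Nat.totient N) (he : e = Nat.totient N) :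
    N ∣ ∑ i ∈ Finset.range e, p ^ i := by
  rw [← ZMod.natCast_eq_zero_iff]
  push_cast
  obtain ⟨P, hPcoe, hPinj, hPim⟩ := aux_units_enum N hprim he
  have hterm : ∀ i, ((p : ZMod N)) ^ i = ((P ^ i : (ZMod N)ˣ) : ZMod N) := by
    intro i; rw [Units.val_pow_eq_pow_val, hPcoe]
  rw [Finset.sum_congr rfl (fun i _ => hterm i),
    ← Finset.sum_image (f := fun u : (ZMod N)ˣ => (u : ZMod N)) (g := fun i => P ^ i) hPinj,
    hPim]
  exact aux_sum_units_eq_zero N hN2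

lemma aux_trace_pow {p : ℕ} [Fact p.Prime] {F : Type} [Field F] [Fintype F] [Algebra (ZMod p) F]
    {e : ℕ} (hF : Fintype.card F = p ^ e) (x : F) :
    algebraMap (ZMod p) F (Algebra.trace (ZMod p) F x) = ∑ i ∈ Finset.range e, x ^ p ^ i := by
  classical
  haveI : CharP F p := charP_of_injective_algebraMap (algebraMap (ZMod p) F).injective p
  have hp : p.Prime := Fact.out
  have hfr : Module.finrank (ZMod p) F = e := by
    have hc := Module.card_eq_pow_finrank (K := ZMod p) (V := F)
    rw [ZMod.card, hF] at hc
    exact (Nat.pow_right_injective hp.two_le hc).symm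
  let fr : F →ₐ[ZMod p] F :=
    { toRingHom := frobenius F p
      commutes' := fun c => by
        show frobenius F p (algebraMap (ZMod p) F c) = algebraMap (ZMod p) F c
        rw [frobenius_def, ← map_pow, ZMod.pow_card] }
  have hbij : Function.Bijective fr := Finite.injective_iff_bijective.mp fr.toRingHom.injective
  let φ : F ≃ₐ[ZMod p] F := AlgEquiv.ofBijective fr hbij
  have hφ : ∀ z : F, φ z = z ^ p := fun z => rfl
  have hpow : ∀ (i : ℕ) (z : F), (φ ^ i) z = z ^ p ^ i := by
    intro i
    induction i with
    | zero => intro z; simp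
    | succ n ih =>
      intro z
      rw [pow_succ, AlgEquiv.mul_apply, hφ, ih, ← pow_mul, pow_succ, mul_comm p (p ^ n)]
  have key : ∀ i j, i < j → j < e → φ ^ i ≠ φ ^ j := by
    intro i j hij hje heq
    have hd : φ ^ (j - i) = 1 := by
      have h1 : φ ^ i * φ ^ (j - i) = φ ^ i * 1 := by
        rw [← pow_add, Nat.add_sub_cancel' hij.le, mul_one, ← heq]
      exact mul_left_cancel h1
    have hz : ∀ z : F, z ^ p ^ (j - i) = z := fun z => by
      rw [← hpow, hd]; rfl
    have hu : ∀ u : Fˣ, u ^ (p ^ (j - i) - 1) = 1 := by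
      intro u
      have h2 : u ^ p ^ (j - i) = u := Units.ext (by
        rw [Units.val_pow_eq_pow_val]; exact hz u)
      have hpos : 1 ≤ p ^ (j - i) := Nat.one_le_pow _ _ hp.pos
      have h3 : u ^ (p ^ (j - i) - 1) * u = 1 * u := by
        rw [one_mul, ← pow_succ, Nat.sub_add_cancel hpos, h2]
      exact mul_right_cancel h3
    have hdvd := (FiniteField.forall_pow_eq_one_iff (K := F) _).mp hu
    rw [hF] at hdvd
    have hdlt : j - i < e := lt_of_le_of_lt (Nat.sub_le j i) hje
    have hdpos : 0 < j - i := Nat.sub_pos_of_lt hij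
    have hlt : p ^ (j - i) - 1 < p ^ e - 1 := by
      have h5 : p ^ (j - i) < p ^ e := pow_lt_pow_right₀ hp.one_lt hdlt
      exact Nat.sub_lt_sub_right (Nat.one_le_pow _ _ hp.pos) h5
    have hppos : 0 < p ^ (j - i) - 1 :=
      Nat.sub_pos_of_lt (Nat.one_lt_pow hdpos.ne' hp.one_lt)
    exact absurd (Nat.le_of_dvd hppos hdvd) (not_le_of_gt hlt)
  have hinj : ∀ i ∈ Finset.range e, ∀ j ∈ Finset.range e, φ ^ i = φ ^ j → i = j := by
    intro i hi j hj heq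
    rcases lt_trichotomy i j with h | h | h
    · exact absurd heq (key i j h (Finset.mem_range.mp hj))
    · exact h
    · exact absurd heq.symm (key j i h (Finset.mem_range.mp hi))
  have hcard : Fintype.card (F ≃ₐ[ZMod p] F) = e := by
    rw [← Nat.card_eq_fintype_card, IsGalois.card_aut_eq_finrank, hfr]
  have him : (Finset.range e).image (fun i => φ ^ i) = Finset.univ := by
    apply Finset.eq_univ_of_card
    rw [Finset.card_image_of_injOn fun i hi j hj hij => hinj i hi j hj hij,
      Finset.card_range, hcard]
  rw [trace_eq_sum_automorphisms, ← him,
    Finset.sum_image (f := fun σ : F ≃ₐ[ZMod p] F => σ x) (g := fun i => φ ^ i) hinj]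
  exact Finset.sum_congr rfl fun i _ => hpow i x

lemma aux_trace_mu {p ℓ m N e : ℕ} [Fact p.Prime] (hℓ : ℓ.Prime) (hℓ2 : ℓ ≠ 2) (hm : 0 < m)
    (hN : N = 2 * ℓ ^ m) (he : e = Nat.totient N)
    (hprim : orderOf (p : ZMod N) = Nat.totient N)
    {F : Type} [Field F] [Fintype F] [Algebra (ZMod p) F] (hF : Fintype.card F = p ^ e)
    {y : F} (hy : y ^ N = 1) :
    Algebra.trace (ZMod p) F y = (ℓ : ZMod p) ^ (m - 1) * ((ℓ : ZMod p) - 1) ∨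
    Algebra.trace (ZMod p) F y = -((ℓ : ZMod p) ^ (m - 1) * ((ℓ : ZMod p) - 1)) ∨
    Algebra.trace (ZMod p) F y = -(ℓ : ZMod p) ^ (m - 1) ∨
    Algebra.trace (ZMod p) F y = (ℓ : ZMod p) ^ (m - 1) ∨
    Algebra.trace (ZMod p) F y = 0 := by
  classical
  obtain ⟨m', rfl⟩ : ∃ m', m = m' + 1 := ⟨m - 1, by omega⟩
  subst hN
  set N := 2 * ℓ ^ (m' + 1) with hNdef
  have hℓpos' : 0 < ℓ := hℓ.pos
  have hNpos : 0 < N := by positivity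
  haveI : NeZero N := ⟨hNpos.ne'⟩
  have hodd : Odd ℓ := hℓ.odd_of_ne_two hℓ2
  have hℓpos : 0 < ℓ := hℓ.pos
  have hinj := (algebraMap (ZMod p) F).injective
  -- step 1 : trace as a sum over units of ZMod N
  have h1 := aux_trace_pow hF y
  obtain ⟨P, hPcoe, hPinj, hPim⟩ := aux_units_enum N hprim he
  have hmod : ∀ a : ℕ, y ^ a = y ^ (a % N) := by
    intro a
    conv_lhs => rw [← Nat.mod_add_div a N]
    rw [pow_add, pow_mul, hy, one_pow, mul_one]
  have h2 : ∀ i, y ^ p ^ i = y ^ ((P ^ i : (ZMod N)ˣ) : ZMod N).val := by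
    intro i
    rw [hmod]
    congr 1
    rw [Units.val_pow_eq_pow_val, hPcoe]
    rw [show ((p : ZMod N)) ^ i = ((p ^ i : ℕ) : ZMod N) by push_cast; rfl, ZMod.val_natCast]
  have h3 : algebraMap (ZMod p) F (Algebra.trace (ZMod p) F y)
      = ∑ u : (ZMod N)ˣ, y ^ ((u : ZMod N)).val := by
    rw [h1, Finset.sum_congr rfl (fun i _ => h2 i),
      ← Finset.sum_image (f := fun u : (ZMod N)ˣ => y ^ ((u : ZMod N)).val)
        (g := fun i => P ^ i) hPinj, hPim]
  -- step 2 : to a sum over coprime residues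
  have h4 : ∑ u : (ZMod N)ˣ, y ^ ((u : ZMod N)).val
      = ∑ i ∈ (Finset.range N).filter (fun i => Nat.Coprime i N), y ^ i := by
    refine Finset.sum_bij' (fun (u : (ZMod N)ˣ) (_ : u ∈ Finset.univ) => ((u : ZMod N)).val)
      (fun i hi => ZMod.unitOfCoprime i (Finset.mem_filter.mp hi).2) ?_ ?_ ?_ ?_ ?_
    · intro u _
      simp only [Finset.mem_filter, Finset.mem_range]
      exact ⟨ZMod.val_lt _, ZMod.val_coe_unit_coprime u⟩
    · intro i _; exact Finset.mem_univ _
    · intro u _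
      apply Units.ext
      rw [ZMod.coe_unitOfCoprime, ZMod.natCast_val, ZMod.cast_id]
    · intro i hi
      rw [ZMod.coe_unitOfCoprime, ZMod.val_natCast,
        Nat.mod_eq_of_lt (Finset.mem_range.mp (Finset.mem_filter.mp hi).1)]
    · intro u _; rfl
  -- step 3 : coprime = not divisible by 2 nor ℓ
  have h5 : (Finset.range N).filter (fun i => Nat.Coprime i N)
      = (Finset.range N).filter (fun i => ¬ 2 ∣ i ∧ ¬ ℓ ∣ i) := by
    apply Finset.filter_congr
    intro i _
    rw [hNdef, Nat.coprime_mul_iff_right, Nat.coprime_pow_right_iff (Nat.succ_pos m')]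
    constructor
    · rintro ⟨h2, hl⟩
      exact ⟨fun hd => (Nat.Prime.coprime_iff_not_dvd Nat.prime_two).mp (Nat.coprime_comm.mp h2) hd,
             fun hd => (Nat.Prime.coprime_iff_not_dvd hℓ).mp (Nat.coprime_comm.mp hl) hd⟩
    · rintro ⟨h2, hl⟩
      exact ⟨Nat.coprime_comm.mp ((Nat.Prime.coprime_iff_not_dvd Nat.prime_two).mpr h2),
             Nat.coprime_comm.mp ((Nat.Prime.coprime_iff_not_dvd hℓ).mpr hl)⟩
  -- step 4 : reindexing sums over multiples
  have hre : ∀ d k : ℕ, 0 < d → d * k = N →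
      ∑ i ∈ (Finset.range N).filter (fun i => d ∣ i), y ^ i
        = ∑ j ∈ Finset.range k, (y ^ d) ^ j := by
    intro d k hd hdk
    refine Finset.sum_bij' (fun i _ => i / d) (fun j _ => d * j) ?_ ?_ ?_ ?_ ?_
    · intro i hi
      obtain ⟨hilt, hidvd⟩ := Finset.mem_filter.mp hi
      rw [Finset.mem_range] at hilt ⊢
      rw [Nat.div_lt_iff_lt_mul hd]
      calc i < N := hilt
        _ = k * d := by rw [← hdk, mul_comm]
    · intro j hj
      rw [Finset.mem_range] at hj
      refine Finset.mem_filter.mpr ⟨Finset.mem_range.mpr ?_, ⟨j, rfl⟩⟩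
      calc d * j < d * k := by exact (Nat.mul_lt_mul_left hd).mpr hj
        _ = N := hdk
    · intro i hi
      exact Nat.mul_div_cancel' (Finset.mem_filter.mp hi).2
    · intro j _
      exact Nat.mul_div_cancel_left j hd
    · intro i hi
      rw [← pow_mul, Nat.mul_div_cancel' (Finset.mem_filter.mp hi).2]
  -- step 5 : geometric sums
  have hgeo : ∀ (w : F) (n : ℕ), w ^ n = 1 →
      ∑ j ∈ Finset.range n, w ^ j = if w = 1 then ((n : ℕ) : F) else 0 := by
    intro w n hw
    split_ifs with h1
    · subst h1; simp
    · rw [geom_sum_eq h1, hw, sub_self, zero_div]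
  have hA : ∑ i ∈ Finset.range N, y ^ i = if y = 1 then ((N : ℕ) : F) else 0 := hgeo y N hy
  have hB2 : ∑ i ∈ (Finset.range N).filter (fun i => 2 ∣ i), y ^ i
      = if y ^ 2 = 1 then ((ℓ ^ (m' + 1) : ℕ) : F) else 0 := by
    rw [hre 2 (ℓ ^ (m' + 1)) two_pos rfl]
    exact hgeo _ _ (by rw [← pow_mul]; exact hy)
  have hBl : ∑ i ∈ (Finset.range N).filter (fun i => ℓ ∣ i), y ^ i
      = if y ^ ℓ = 1 then ((2 * ℓ ^ m' : ℕ) : F) else 0 := by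
    rw [hre ℓ (2 * ℓ ^ m') hℓpos (by rw [hNdef]; ring)]
    refine hgeo _ _ ?_
    rw [← pow_mul, show ℓ * (2 * ℓ ^ m') = N by rw [hNdef]; ring]
    exact hy
  have hB2l : ∑ i ∈ (Finset.range N).filter (fun i => 2 * ℓ ∣ i), y ^ i
      = if y ^ (2 * ℓ) = 1 then ((ℓ ^ m' : ℕ) : F) else 0 := by
    rw [hre (2 * ℓ) (ℓ ^ m') (by positivity) (by rw [hNdef]; ring)]
    refine hgeo _ _ ?_
    rw [← pow_mul, show 2 * ℓ * ℓ ^ m' = N by rw [hNdef]; ring]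
    exact hy
  -- inclusion exclusion
  have r1 := Finset.sum_filter_add_sum_filter_not (Finset.range N) (fun i => 2 ∣ i)
    (fun i => y ^ i)
  have r2 := Finset.sum_filter_add_sum_filter_not
    ((Finset.range N).filter (fun i => ¬ 2 ∣ i)) (fun i => ℓ ∣ i) (fun i => y ^ i)
  have r3 := Finset.sum_filter_add_sum_filter_not
    ((Finset.range N).filter (fun i => ℓ ∣ i)) (fun i => 2 ∣ i) (fun i => y ^ i)
  rw [Finset.filter_filter, Finset.filter_filter] at r2 r3
  have f1 : (Finset.range N).filter (fun i => ℓ ∣ i ∧ 2 ∣ i)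
      = (Finset.range N).filter (fun i => 2 * ℓ ∣ i) := by
    apply Finset.filter_congr
    intro i _
    constructor
    · rintro ⟨hl, h2⟩
      exact Nat.Coprime.mul_dvd_of_dvd_of_dvd
        ((Nat.coprime_primes Nat.prime_two hℓ).mpr (Ne.symm hℓ2)) h2 hl
    · intro h
      exact ⟨dvd_trans ⟨2, mul_comm 2 ℓ⟩ h, dvd_trans ⟨ℓ, rfl⟩ h⟩
  have f2 : (Finset.range N).filter (fun i => ℓ ∣ i ∧ ¬ 2 ∣ i)
      = (Finset.range N).filter (fun i => ¬ 2 ∣ i ∧ ℓ ∣ i) := by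
    apply Finset.filter_congr
    intro i _
    exact and_comm
  rw [f1, f2] at r3
  have hS : algebraMap (ZMod p) F (Algebra.trace (ZMod p) F y)
      = (∑ i ∈ Finset.range N, y ^ i)
        - (∑ i ∈ (Finset.range N).filter (fun i => 2 ∣ i), y ^ i)
        - (∑ i ∈ (Finset.range N).filter (fun i => ℓ ∣ i), y ^ i)
        + (∑ i ∈ (Finset.range N).filter (fun i => 2 * ℓ ∣ i), y ^ i) := by
    rw [h3, h4, h5]
    linear_combination r1 + r2 - r3
  rw [hA, hB2, hBl, hB2l] at hS
  simp only [Nat.add_sub_cancel]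
  -- case analysis
  by_cases hy1 : y = 1
  · left
    apply hinj
    have e2 : y ^ 2 = 1 := by rw [hy1, one_pow]
    have el : y ^ ℓ = 1 := by rw [hy1, one_pow]
    have e2l : y ^ (2 * ℓ) = 1 := by rw [hy1, one_pow]
    rw [hS, if_pos hy1, if_pos e2, if_pos el, if_pos e2l]
    push_cast [hNdef]
    ring
  by_cases hy2 : y ^ 2 = 1
  · right; left
    apply hinj
    have hyl : y ^ ℓ = y := by
      obtain ⟨k, hk⟩ := hodd
      rw [hk, pow_add, pow_mul, hy2, one_pow, pow_one, one_mul]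
    have el : ¬ y ^ ℓ = 1 := by rw [hyl]; exact hy1
    have e2l : y ^ (2 * ℓ) = 1 := by rw [pow_mul, hy2, one_pow]
    rw [hS, if_neg hy1, if_pos hy2, if_neg el, if_pos e2l]
    push_cast
    ring
  have hy1' : ¬ y = 1 := fun h => hy2 (by rw [h, one_pow])
  by_cases hyl : y ^ ℓ = 1
  · right; right; left
    apply hinj
    have e2l : y ^ (2 * ℓ) = 1 := by rw [mul_comm, pow_mul, hyl, one_pow]
    rw [hS, if_neg hy1', if_neg hy2, if_pos hyl, if_pos e2l]
    push_cast
    ring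
  by_cases hy2l : y ^ (2 * ℓ) = 1
  · right; right; right; left
    apply hinj
    rw [hS, if_neg hy1', if_neg hy2, if_neg hyl, if_pos hy2l]
    push_cast
    ring
  · right; right; right; right
    apply hinj
    rw [hS, if_neg hy1', if_neg hy2, if_neg hyl, if_neg hy2l]
    push_cast
    ring

theorem stmt_17
    (p ℓ m : ℕ) [Fact (Nat.Prime p)] (hp2 : p ≠ 2)
    (hℓ : Nat.Prime ℓ) (hℓp : ℓ ≠ p) (hm : 0 < m)
    (N : ℕ) (hN : N = 2 * ℓ ^ m)
    (hprim : orderOf (p : ZMod N) = Nat.totient N)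
    (e : ℕ) (he : e = Nat.totient N) (he' : e = (ℓ - 1) * ℓ ^ (m - 1))
    (q : ℕ) (hq : q = p ^ e)
    (F : Type) [Field F] [Fintype F] [DecidableEq F] [Algebra (ZMod p) F]
    (hF : Fintype.card F = q)
    (α : ZMod p) (hα : α ≠ 0)
    (a₁ a₂ a₃ a₄ : ZMod p)
    (ha₁ : a₁ = (ℓ : ZMod p) ^ (m - 1) * ((ℓ : ZMod p) - 1) - α)
    (ha₂ : a₂ = -((ℓ : ZMod p) ^ (m - 1) * ((ℓ : ZMod p) - 1)) - α)
    (ha₃ : a₃ = (ℓ : ZMod p) ^ (m - 1) - α)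
    (ha₄ : a₄ = -(ℓ : ZMod p) ^ (m - 1) - α)
    (h₁ : a₁ ≠ 0) (h₂ : a₂ ≠ 0) (h₃ : a₃ ≠ 0) (h₄ : a₄ ≠ 0)
    (β : F) (hβ : β ≠ 0)
    (D : Finset F)
    (hD : D = Finset.univ.filter (fun x : F =>
      x ≠ 0 ∧ Algebra.trace (ZMod p) F (x ^ ((q - 1) / N) + β * x) = α))
    :
    D.card = q / p ∧
    Function.Injective (fun γ : F => fun d : {x // x ∈ D} =>
      Algebra.trace (ZMod p) F ((d : F) * γ)) ∧
    (∀ γ : F, γ ≠ 0 →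
      ((D.filter (fun d => Algebra.trace (ZMod p) F (d * γ) ≠ 0)).card) = q / p ∨ ((D.filter (fun d => Algebra.trace (ZMod p) F (d * γ) ≠ 0)).card) = (p - 1) * q / p ^ 2) ∧
    {γ : F | γ ≠ 0 ∧ ((D.filter (fun d => Algebra.trace (ZMod p) F (d * γ) ≠ 0)).card) = q / p}.ncard = p - 1 ∧
    {γ : F | γ ≠ 0 ∧ ((D.filter (fun d => Algebra.trace (ZMod p) F (d * γ) ≠ 0)).card) = (p - 1) * q / p ^ 2}.ncard = q - p := by
  classical
  have hp : p.Prime := Fact.out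
  have hppos : 0 < p := hp.pos
  have hℓ2 : ℓ ≠ 2 := by
    rintro rfl
    have h1 : e = 2 ^ m := by
      rw [he, hN, show (2:ℕ) * 2 ^ m = 2 ^ (m + 1) by ring,
        Nat.totient_prime_pow Nat.prime_two (Nat.succ_pos m)]
      simp
    have h2 : e = 2 ^ (m - 1) := by simpa using he'
    have h3 : 2 ^ (m - 1) < 2 ^ m := pow_lt_pow_right₀ one_lt_two (by omega)
    omega
  have hℓ3 : 3 ≤ ℓ := by have := hℓ.two_le; omega
  have hℓpos : 0 < ℓ := hℓ.pos
  have hNpos : 0 < N := by rw [hN]; positivity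
  haveI : NeZero N := ⟨hNpos.ne'⟩
  have hN2 : ¬ (N ∣ 2) := by
    intro h
    have h1 := Nat.le_of_dvd two_pos h
    have h2 : ℓ ≤ ℓ ^ m := Nat.le_self_pow hm.ne' ℓ
    rw [hN] at h1
    omega
  have he2 : 2 ≤ e := by
    rw [he']
    have h1 : 2 ≤ ℓ - 1 := by omega
    have h2 : 1 ≤ ℓ ^ (m - 1) := Nat.one_le_pow _ _ hℓpos
    calc 2 = 2 * 1 := rfl
      _ ≤ (ℓ - 1) * ℓ ^ (m - 1) := Nat.mul_le_mul h1 h2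
  have hq1 : 1 ≤ q := by rw [hq]; exact Nat.one_le_pow _ _ hppos
  -- geometric identity and divisibility
  have hgeomZ : (q : ℤ) - 1 = ((p : ℤ) - 1) * ((∑ i ∈ Finset.range e, p ^ i : ℕ) : ℤ) := by
    rw [hq]
    push_cast
    rw [← geom_sum_mul (p : ℤ) e]
    ring
  have hgeom : q - 1 = (p - 1) * ∑ i ∈ Finset.range e, p ^ i := by
    zify [hq1, hp.one_le]
    push_cast
    push_cast at hgeomZ
    exact hgeomZ
  obtain ⟨k, hk⟩ : N ∣ ∑ i ∈ Finset.range e, p ^ i := aux_dvd_geom N hN2 hprim he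
  have hdiv : (q - 1) / N = (p - 1) * k := by
    rw [hgeom, hk, mul_comm N k, ← mul_assoc, Nat.mul_div_cancel _ hNpos]
  have hNq : N ∣ q - 1 := by
    rw [hgeom, hk]
    exact ⟨(p - 1) * k, by ring⟩
  -- scaling invariance
  have hscale : ∀ s : ZMod p, s ≠ 0 → (algebraMap (ZMod p) F s) ^ ((q - 1) / N) = 1 := by
    intro s hs
    rw [hdiv, pow_mul, ← map_pow, ZMod.pow_card_sub_one_eq_one hs, map_one, one_pow]
  have hui : ∀ (s : ZMod p), s ≠ 0 → ∀ x : F,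
      (algebraMap (ZMod p) F s * x) ^ ((q - 1) / N) = x ^ ((q - 1) / N) := by
    intro s hs x
    rw [mul_pow, hscale s hs, one_mul]
  -- trace linearity
  have hsmul : ∀ (c : ZMod p) (x : F),
      Algebra.trace (ZMod p) F (algebraMap (ZMod p) F c * x)
        = c * Algebra.trace (ZMod p) F x := by
    intro c x
    rw [← Algebra.smul_def, LinearMap.map_smul, smul_eq_mul]
  have hmem : ∀ x : F, x ∈ D ↔ x ≠ 0 ∧
      Algebra.trace (ZMod p) F (x ^ ((q - 1) / N) + β * x) = α := by
    intro x; rw [hD]; simp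
  -- the trace of x^((q-1)/N) is never α
  have hFF : Fintype.card F = p ^ e := by rw [hF, hq]
  have hμ : ∀ x : F, x ≠ 0 → Algebra.trace (ZMod p) F (x ^ ((q - 1) / N)) ≠ α := by
    intro x hx
    have hyN : (x ^ ((q - 1) / N)) ^ N = 1 := by
      rw [← pow_mul, Nat.div_mul_cancel hNq, ← hF]
      exact FiniteField.pow_card_sub_one_eq_one x hx
    rcases aux_trace_mu hℓ hℓ2 hm hN he hprim hFF hyN with h | h | h | h | h
    · intro hc; exact h₁ (by rw [ha₁, ← hc, h, sub_self])
    · intro hc; exact h₂ (by rw [ha₂, ← hc, h, sub_self])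
    · intro hc; exact h₄ (by rw [ha₄, ← hc, h, sub_self])
    · intro hc; exact h₃ (by rw [ha₃, ← hc, h, sub_self])
    · intro hc; exact hα (by rw [← hc, h])
  -- nondegeneracy of the trace form
  have hndg : ∀ z : F, z ≠ 0 → ∃ x : F, Algebra.trace (ZMod p) F (z * x) ≠ 0 := by
    intro z hz
    by_contra hcon
    push_neg at hcon
    refine hz ((traceForm_nondegenerate (ZMod p) F).1 z (fun x => ?_))
    rw [Algebra.traceForm_apply]
    exact hcon x
  obtain ⟨z₁, hz₁⟩ : ∃ z₁ : F, Algebra.trace (ZMod p) F (β * z₁) = 1 := by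
    obtain ⟨x, hx⟩ := hndg β hβ
    refine ⟨algebraMap (ZMod p) F (Algebra.trace (ZMod p) F (β * x))⁻¹ * x, ?_⟩
    rw [show β * (algebraMap (ZMod p) F (Algebra.trace (ZMod p) F (β * x))⁻¹ * x)
        = algebraMap (ZMod p) F (Algebra.trace (ZMod p) F (β * x))⁻¹ * (β * x) by ring,
      hsmul, inv_mul_cancel₀ hx]
  -- the key bijection
  have count_bij : ∀ (P : F → Prop) (_ : DecidablePred P),
      (∀ (s : ZMod p), s ≠ 0 → ∀ x, P x → P (algebraMap (ZMod p) F s * x)) →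
      (D.filter P).card
        = (Finset.univ.filter
            (fun x : F => Algebra.trace (ZMod p) F (β * x) = 1 ∧ P x)).card := by
    intro P _ hPcl
    have hDmem : ∀ x ∈ D.filter P, x ≠ 0 ∧
        Algebra.trace (ZMod p) F (β * x)
          = α - Algebra.trace (ZMod p) F (x ^ ((q - 1) / N)) := by
      intro x hx
      obtain ⟨hxD, _⟩ := Finset.mem_filter.mp hx
      obtain ⟨hx0, hxtr⟩ := (hmem x).mp hxD
      refine ⟨hx0, ?_⟩
      rw [eq_sub_iff_add_eq, add_comm, ← map_add]
      exact hxtr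
    have hsne : ∀ x ∈ D.filter P, Algebra.trace (ZMod p) F (β * x) ≠ 0 := by
      intro x hx
      rw [(hDmem x hx).2]
      exact sub_ne_zero.mpr (Ne.symm (hμ x (hDmem x hx).1))
    have hwne0 : ∀ w : F, Algebra.trace (ZMod p) F (β * w) = 1 → w ≠ 0 := by
      rintro w hw rfl
      rw [mul_zero, map_zero] at hw
      exact zero_ne_one hw
    have hs'ne : ∀ w : F, w ≠ 0 →
        α - Algebra.trace (ZMod p) F (w ^ ((q - 1) / N)) ≠ 0 := by
      intro w hw
      exact sub_ne_zero.mpr (Ne.symm (hμ w hw))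
    refine Finset.card_bij'
      (fun x _ => algebraMap (ZMod p) F (Algebra.trace (ZMod p) F (β * x))⁻¹ * x)
      (fun w _ => algebraMap (ZMod p) F
        (α - Algebra.trace (ZMod p) F (w ^ ((q - 1) / N))) * w) ?_ ?_ ?_ ?_
    · -- image of forward map
      intro x hx
      obtain ⟨hxD, hxP⟩ := Finset.mem_filter.mp hx
      refine Finset.mem_filter.mpr ⟨Finset.mem_univ _, ?_, ?_⟩
      · rw [show β * (algebraMap (ZMod p) F (Algebra.trace (ZMod p) F (β * x))⁻¹ * x)
            = algebraMap (ZMod p) F (Algebra.trace (ZMod p) F (β * x))⁻¹ * (β * x) by ring,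
          hsmul, inv_mul_cancel₀ (hsne x hx)]
      · exact hPcl _ (inv_ne_zero (hsne x hx)) x hxP
    · -- image of backward map
      intro w hw
      obtain ⟨-, hw1, hwP⟩ := Finset.mem_filter.mp hw
      have hw0 : w ≠ 0 := hwne0 w hw1
      have hs' := hs'ne w hw0
      refine Finset.mem_filter.mpr ⟨(hmem _).mpr ⟨?_, ?_⟩, ?_⟩
      · exact mul_ne_zero (fun h => hs' ((map_eq_zero_iff _
          (algebraMap (ZMod p) F).injective).mp h)) hw0
      · rw [map_add, hui _ hs' w,
          show β * (algebraMap (ZMod p) F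
              (α - Algebra.trace (ZMod p) F (w ^ ((q - 1) / N))) * w)
            = algebraMap (ZMod p) F
              (α - Algebra.trace (ZMod p) F (w ^ ((q - 1) / N))) * (β * w) by ring,
          hsmul, hw1, mul_one]
        ring
      · exact hPcl _ hs' w hwP
    · -- left inverse
      intro x hx
      have h1 := (hDmem x hx).2
      have h2 : Algebra.trace (ZMod p) F
          ((algebraMap (ZMod p) F (Algebra.trace (ZMod p) F (β * x))⁻¹ * x) ^ ((q - 1) / N))
          = Algebra.trace (ZMod p) F (x ^ ((q - 1) / N)) := by
        rw [hui _ (inv_ne_zero (hsne x hx)) x]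
      rw [h2, ← h1, ← mul_assoc, ← map_mul, mul_inv_cancel₀ (hsne x hx), map_one, one_mul]
    · -- right inverse
      intro w hw
      obtain ⟨-, hw1, -⟩ := Finset.mem_filter.mp hw
      have hw0 : w ≠ 0 := hwne0 w hw1
      have hs' := hs'ne w hw0
      have h2 : Algebra.trace (ZMod p) F (β * (algebraMap (ZMod p) F
          (α - Algebra.trace (ZMod p) F (w ^ ((q - 1) / N))) * w))
          = α - Algebra.trace (ZMod p) F (w ^ ((q - 1) / N)) := by
        rw [show β * (algebraMap (ZMod p) F
              (α - Algebra.trace (ZMod p) F (w ^ ((q - 1) / N))) * w)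
            = algebraMap (ZMod p) F
              (α - Algebra.trace (ZMod p) F (w ^ ((q - 1) / N))) * (β * w) by ring,
          hsmul, hw1, mul_one]
      rw [h2, ← mul_assoc, ← map_mul, inv_mul_cancel₀ hs', map_one, one_mul]
  -- the cardinality of D
  let f₁ : F →+ ZMod p := AddMonoidHom.mk' (fun x => Algebra.trace (ZMod p) F (β * x))
    (fun a b => by rw [mul_add, map_add])
  have hf₁ : ∀ x, f₁ x = Algebra.trace (ZMod p) F (β * x) := fun x => rfl
  have hf₁surj : Function.Surjective f₁ := by
    intro a
    refine ⟨algebraMap (ZMod p) F a * z₁, ?_⟩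
    rw [hf₁, show β * (algebraMap (ZMod p) F a * z₁)
      = algebraMap (ZMod p) F a * (β * z₁) by ring, hsmul, hz₁, mul_one]
  have hcount1 : (Finset.univ.filter
      (fun x : F => Algebra.trace (ZMod p) F (β * x) = 1)).card * p = q := by
    have h := aux_fiber_card f₁ hf₁surj 1
    rw [ZMod.card, hF] at h
    rw [← h]
    have heq : (Finset.univ.filter (fun x : F => Algebra.trace (ZMod p) F (β * x) = 1))
        = (Finset.univ.filter (fun x : F => f₁ x = 1)) := by
      apply Finset.filter_congr
      intro x _
      rw [hf₁]
    rw [heq]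
  have hqE1 : q = p ^ (e - 1) * p := by
    rw [hq, ← pow_succ]
    congr 1
    omega
  have hqp : q / p = p ^ (e - 1) := by rw [hqE1, Nat.mul_div_cancel _ hppos]
  have hqE2 : q = p ^ (e - 2) * p ^ 2 := by
    rw [hq, ← pow_add]
    congr 1
    omega
  have hqp2' : (p - 1) * q / p ^ 2 = (p - 1) * p ^ (e - 2) := by
    rw [hqE2, ← mul_assoc, Nat.mul_div_cancel _ (pow_pos hppos 2)]
  have hE1E2 : p ^ (e - 1) = p * p ^ (e - 2) := by
    rw [← pow_succ']
    congr 1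
    omega
  have hE2pos : 0 < p ^ (e - 2) := pow_pos hppos _
  have hDcard : D.card = p ^ (e - 1) := by
    have h1 := count_bij (fun _ => True) inferInstance (fun s hs x _ => trivial)
    rw [Finset.filter_true] at h1
    have h2 : (Finset.univ.filter
        (fun x : F => Algebra.trace (ZMod p) F (β * x) = 1 ∧ True))
        = (Finset.univ.filter (fun x : F => Algebra.trace (ZMod p) F (β * x) = 1)) := by
      apply Finset.filter_congr
      intro x _
      simp
    rw [h2] at h1
    have h3 : D.card * p = p ^ (e - 1) * p := by rw [h1, hcount1, hqE1]
    exact Nat.eq_of_mul_eq_mul_right hppos h3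
  -- on the line F_p β the words have full weight
  have hline : ∀ c : ZMod p, c ≠ 0 → ∀ d ∈ D,
      Algebra.trace (ZMod p) F (d * (algebraMap (ZMod p) F c * β)) ≠ 0 := by
    intro c hc d hd
    obtain ⟨hd0, hdtr⟩ := (hmem d).mp hd
    have hs : Algebra.trace (ZMod p) F (β * d)
        = α - Algebra.trace (ZMod p) F (d ^ ((q - 1) / N)) := by
      rw [eq_sub_iff_add_eq, add_comm, ← map_add]
      exact hdtr
    rw [show d * (algebraMap (ZMod p) F c * β)
      = algebraMap (ZMod p) F c * (β * d) by ring, hsmul]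
    exact mul_ne_zero hc (by rw [hs]; exact sub_ne_zero.mpr (Ne.symm (hμ d hd0)))
  -- words off the line : the zero-count
  have hzero : ∀ γ : F, (∀ c : ZMod p, γ ≠ algebraMap (ZMod p) F c * β) →
      (D.filter (fun d => Algebra.trace (ZMod p) F (d * γ) = 0)).card = p ^ (e - 2) := by
    intro γ hγ
    -- there is x₀ in ker (Tr (β ·)) not in ker (Tr (· γ))
    obtain ⟨x₀, hx₀1, hx₀2⟩ : ∃ x₀ : F, Algebra.trace (ZMod p) F (β * x₀) = 0 ∧
        Algebra.trace (ZMod p) F (x₀ * γ) ≠ 0 := by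
      by_contra hcon
      push_neg at hcon
      set c := Algebra.trace (ZMod p) F (z₁ * γ) with hcdef
      apply hγ c
      have hall0 : ∀ x : F, Algebra.trace (ZMod p) F (x * γ)
          = Algebra.trace (ZMod p) F (β * x) * c := by
        intro x
        have hker : Algebra.trace (ZMod p) F
            (β * (x - algebraMap (ZMod p) F (Algebra.trace (ZMod p) F (β * x)) * z₁)) = 0 := by
          rw [mul_sub, map_sub, show β * (algebraMap (ZMod p) F
              (Algebra.trace (ZMod p) F (β * x)) * z₁)
            = algebraMap (ZMod p) F (Algebra.trace (ZMod p) F (β * x)) * (β * z₁) by ring,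
            hsmul, hz₁, mul_one, sub_self]
        have h0 := hcon _ hker
        rw [sub_mul, map_sub, sub_eq_zero, show (algebraMap (ZMod p) F
            (Algebra.trace (ZMod p) F (β * x)) * z₁) * γ
          = algebraMap (ZMod p) F (Algebra.trace (ZMod p) F (β * x)) * (z₁ * γ) by ring,
          hsmul] at h0
        exact h0
      have hzero2 : ∀ x : F, Algebra.trace (ZMod p) F
          ((γ - algebraMap (ZMod p) F c * β) * x) = 0 := by
        intro x
        rw [sub_mul, map_sub, show (algebraMap (ZMod p) F c * β) * x
          = algebraMap (ZMod p) F c * (β * x) by ring, hsmul,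
          show γ * x = x * γ by ring, hall0, mul_comm c _, sub_self]
      by_contra hne
      have hdiff : γ - algebraMap (ZMod p) F c * β ≠ 0 := sub_ne_zero.mpr hne
      obtain ⟨x, hx⟩ := hndg _ hdiff
      exact hx (hzero2 x)
    -- pair map is surjective
    set c₁ := Algebra.trace (ZMod p) F (z₁ * γ) with hc₁def
    let f₂ : F →+ (ZMod p × ZMod p) := AddMonoidHom.mk'
      (fun x => (Algebra.trace (ZMod p) F (β * x), Algebra.trace (ZMod p) F (x * γ)))
      (fun a b => by rw [mul_add, add_mul, map_add, map_add, Prod.mk_add_mk])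
    have hf₂ : ∀ x, f₂ x = (Algebra.trace (ZMod p) F (β * x),
        Algebra.trace (ZMod p) F (x * γ)) := fun x => rfl
    have hf₂surj : Function.Surjective f₂ := by
      rintro ⟨a, b⟩
      set d := Algebra.trace (ZMod p) F (x₀ * γ) with hddef
      refine ⟨algebraMap (ZMod p) F a * z₁ + algebraMap (ZMod p) F ((b - a * c₁) * d⁻¹) * x₀, ?_⟩
      rw [hf₂]
      have e1 : Algebra.trace (ZMod p) F (β * (algebraMap (ZMod p) F a * z₁
          + algebraMap (ZMod p) F ((b - a * c₁) * d⁻¹) * x₀)) = a := by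
        rw [mul_add, map_add,
          show β * (algebraMap (ZMod p) F a * z₁) = algebraMap (ZMod p) F a * (β * z₁) by ring,
          show β * (algebraMap (ZMod p) F ((b - a * c₁) * d⁻¹) * x₀)
            = algebraMap (ZMod p) F ((b - a * c₁) * d⁻¹) * (β * x₀) by ring,
          hsmul, hsmul, hz₁, hx₀1, mul_one, mul_zero, add_zero]
      have e2 : Algebra.trace (ZMod p) F ((algebraMap (ZMod p) F a * z₁
          + algebraMap (ZMod p) F ((b - a * c₁) * d⁻¹) * x₀) * γ) = b := by
        rw [add_mul, map_add,
          show (algebraMap (ZMod p) F a * z₁) * γ = algebraMap (ZMod p) F a * (z₁ * γ) by ring,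
          show (algebraMap (ZMod p) F ((b - a * c₁) * d⁻¹) * x₀) * γ
            = algebraMap (ZMod p) F ((b - a * c₁) * d⁻¹) * (x₀ * γ) by ring,
          hsmul, hsmul, ← hc₁def, ← hddef]
        rw [mul_assoc, inv_mul_cancel₀ hx₀2, mul_one]
        ring
      rw [e1, e2]
    -- count the fiber over (1, 0)
    have h1 := count_bij (fun x => Algebra.trace (ZMod p) F (x * γ) = 0) inferInstance
      (fun s hs x hx => by
        rw [show (algebraMap (ZMod p) F s * x) * γ = algebraMap (ZMod p) F s * (x * γ) by ring,
          hsmul, hx, mul_zero])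
    have h2 : (Finset.univ.filter (fun x : F => Algebra.trace (ZMod p) F (β * x) = 1 ∧
        Algebra.trace (ZMod p) F (x * γ) = 0))
        = (Finset.univ.filter (fun x : F => f₂ x = (1, 0))) := by
      apply Finset.filter_congr
      intro x _
      rw [hf₂, Prod.mk.injEq]
    have h3 := aux_fiber_card f₂ hf₂surj (1, 0)
    rw [Fintype.card_prod, ZMod.card, hF] at h3
    have h4 : (Finset.univ.filter (fun x : F => f₂ x = (1, 0))).card * (p * p)
        = p ^ (e - 2) * (p * p) := by
      rw [h3, hqE2, pow_two]
    have h5 := Nat.eq_of_mul_eq_mul_right (Nat.mul_pos hppos hppos) h4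
    rw [h1, h2, h5]
  -- weights
  have hwz : ∀ γ : F,
      (D.filter (fun d => Algebra.trace (ZMod p) F (d * γ) = 0)).card
      + (D.filter (fun d => Algebra.trace (ZMod p) F (d * γ) ≠ 0)).card = D.card := by
    intro γ
    exact Finset.card_filter_add_card_filter_not
      (p := fun d => Algebra.trace (ZMod p) F (d * γ) = 0)
  have hwind : ∀ γ : F, (∀ c : ZMod p, γ ≠ algebraMap (ZMod p) F c * β) →
      (D.filter (fun d => Algebra.trace (ZMod p) F (d * γ) ≠ 0)).card
        = (p - 1) * p ^ (e - 2) := by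
    intro γ hγ
    have h1 := hwz γ
    rw [hzero γ hγ, hDcard, hE1E2] at h1
    rw [Nat.sub_one_mul]
    exact Nat.eq_sub_of_add_eq (by rw [add_comm]; exact h1)
  have hwline : ∀ (γ : F) (c : ZMod p), c ≠ 0 → γ = algebraMap (ZMod p) F c * β →
      (D.filter (fun d => Algebra.trace (ZMod p) F (d * γ) ≠ 0)).card = p ^ (e - 1) := by
    intro γ c hc hγ
    rw [Finset.filter_true_of_mem (fun d hd => by rw [hγ]; exact hline c hc d hd), hDcard]
  have hwne : (p - 1) * p ^ (e - 2) ≠ p ^ (e - 1) := by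
    rw [hE1E2]
    intro h
    have := Nat.eq_of_mul_eq_mul_right hE2pos h
    omega
  -- injectivity
  have hinj2 : Function.Injective (fun γ : F => fun d : {x // x ∈ D} =>
      Algebra.trace (ZMod p) F ((d : F) * γ)) := by
    intro γ₁ γ₂ hEq
    by_contra hne
    have hδ : γ₁ - γ₂ ≠ 0 := sub_ne_zero.mpr hne
    have hall : ∀ d ∈ D, Algebra.trace (ZMod p) F (d * (γ₁ - γ₂)) = 0 := by
      intro d hd
      have h0 := congrFun hEq ⟨d, hd⟩
      simp only at h0
      rw [mul_sub, map_sub, h0, sub_self]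
    by_cases hcase : ∃ c : ZMod p, γ₁ - γ₂ = algebraMap (ZMod p) F c * β
    · obtain ⟨c, hc⟩ := hcase
      have hcne : c ≠ 0 := by
        rintro rfl
        rw [map_zero, zero_mul] at hc
        exact hδ hc
      have hDne : D.Nonempty := Finset.card_pos.mp (by rw [hDcard]; positivity)
      obtain ⟨d, hd⟩ := hDne
      exact hline c hcne d hd (by rw [← hc]; exact hall d hd)
    · push_neg at hcase
      have h1 := hzero (γ₁ - γ₂) hcase
      rw [Finset.filter_true_of_mem (fun d hd => hall d hd), hDcard, hE1E2] at h1
      have h2 : p * p ^ (e - 2) = 1 * p ^ (e - 2) := by rw [one_mul]; exact h1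
      have h3 := Nat.eq_of_mul_eq_mul_right hE2pos h2
      have h4 := hp.two_le
      omega
  -- the line map
  have hgind : Function.Injective (fun c : ZMod p => algebraMap (ZMod p) F c * β) := by
    intro c₁ c₂ h
    simp only at h
    exact (algebraMap (ZMod p) F).injective (mul_right_cancel₀ hβ h)
  have h0mem : (0 : F) ∈ Set.range (fun c : ZMod p => algebraMap (ZMod p) F c * β) :=
    ⟨0, by simp⟩
  -- description of the two weight classes
  have hS1 : {γ : F | γ ≠ 0 ∧
      (D.filter (fun d => Algebra.trace (ZMod p) F (d * γ) ≠ 0)).card = q / p}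
      = Set.range (fun c : ZMod p => algebraMap (ZMod p) F c * β) \ {0} := by
    ext γ
    simp only [Set.mem_setOf_eq, Set.mem_diff, Set.mem_range, Set.mem_singleton_iff]
    constructor
    · rintro ⟨hγ0, hw⟩
      refine ⟨?_, hγ0⟩
      by_contra hnr
      push_neg at hnr
      have hww := hwind γ (fun c hcc => hnr c hcc.symm)
      rw [hqp] at hw
      exact hwne (by rw [← hww, hw])
    · rintro ⟨⟨c, hc⟩, hγ0⟩
      have hcne : c ≠ 0 := by
        rintro rfl
        rw [map_zero, zero_mul] at hc
        exact hγ0 hc.symm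
      exact ⟨hγ0, by rw [hqp]; exact hwline γ c hcne hc.symm⟩
  have hS2 : {γ : F | γ ≠ 0 ∧
      (D.filter (fun d => Algebra.trace (ZMod p) F (d * γ) ≠ 0)).card = (p - 1) * q / p ^ 2}
      = (Set.range (fun c : ZMod p => algebraMap (ZMod p) F c * β))ᶜ := by
    ext γ
    simp only [Set.mem_setOf_eq, Set.mem_compl_iff, Set.mem_range]
    constructor
    · rintro ⟨hγ0, hw⟩ ⟨c, hc⟩
      have hcne : c ≠ 0 := by
        rintro rfl
        rw [map_zero, zero_mul] at hc
        exact hγ0 hc.symm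
      rw [hqp2'] at hw
      exact hwne (by rw [← hw, hwline γ c hcne hc.symm])
    · intro hγr
      push_neg at hγr
      have hγ0 : γ ≠ 0 := by
        rintro rfl
        exact hγr 0 (by rw [map_zero, zero_mul])
      refine ⟨hγ0, ?_⟩
      rw [hqp2']
      exact hwind γ (fun c hcc => hγr c hcc.symm)
  -- cardinalities
  have hrange : (Set.range (fun c : ZMod p => algebraMap (ZMod p) F c * β)).ncard = p := by
    rw [← Nat.card_coe_set_eq, Nat.card_range_of_injective hgind,
      Nat.card_eq_fintype_card, ZMod.card]
  have hncard1 : {γ : F | γ ≠ 0 ∧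
      (D.filter (fun d => Algebra.trace (ZMod p) F (d * γ) ≠ 0)).card = q / p}.ncard
      = p - 1 := by
    rw [hS1, Set.ncard_diff_singleton_of_mem h0mem, hrange]
  have hncard2 : {γ : F | γ ≠ 0 ∧
      (D.filter (fun d => Algebra.trace (ZMod p) F (d * γ) ≠ 0)).card
        = (p - 1) * q / p ^ 2}.ncard = q - p := by
    rw [hS2]
    have hcompl := Set.ncard_add_ncard_compl
      (Set.range (fun c : ZMod p => algebraMap (ZMod p) F c * β))
    rw [hrange, Nat.card_eq_fintype_card, hF] at hcompl
    omega
  refine ⟨by rw [hqp]; exact hDcard, hinj2, ?_, hncard1, hncard2⟩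
  intro γ hγ0
  by_cases hcase : ∃ c : ZMod p, γ = algebraMap (ZMod p) F c * β
  · obtain ⟨c, hc⟩ := hcase
    have hcne : c ≠ 0 := by
      rintro rfl
      rw [map_zero, zero_mul] at hc
      exact hγ0 hc
    left
    rw [hqp]
    exact hwline γ c hcne hc
  · right
    push_neg at hcase
    rw [hqp2']
    exact hwind γ hcase
end
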